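/- arXiv:2302.09796 — 5 statements merged into one kernel-verified Lean document; each statement's English description precedes it below -/
import Mathlib

section
/- Let Π ⊆ Π' be augmenting sets in G(S) (componentwise inclusion with equal number of layers). Then Π' \ Π (the componentwise set differences) is an augmenting set in the exchange graph G(S ⊕ Π). -/
open Finset

/-- A matroid on a finite ground set `E`, given by its independence predicate. -/
structure FinMatroid (α : Type*) [DecidableEq α] where
  E : Finset α
  Indep : Finset α → Prop
  indep_subset_ground : ∀ ⦃S : Finset α⦄, Indep S → S ⊆ E
  indep_empty : Indep ∅
  indep_mono : ∀ ⦃S T : Finset α⦄, Indep S → T ⊆ S → Indep T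
  indep_exchange : ∀ ⦃S T : Finset α⦄, Indep S → Indep T → S.card < T.card →
    ∃ x ∈ T, x ∉ S ∧ Indep (insert x S)

variable {α : Type*} [DecidableEq α]

/-- The rank of a set `X`: the maximum cardinality of an independent subset of `X`. -/
noncomputable def FinMatroid.rank (M : FinMatroid α) (X : Finset α) : ℕ :=
  sSup {n : ℕ | ∃ S : Finset α, M.Indep S ∧ S ⊆ X ∧ S.card = n}

/-- Exchange-graph edges between ground-set elements, for a common independent set `S`. -/
def ExchangeEdge (M1 M2 : FinMatroid α) (S : Finset α) (u v : α) : Prop :=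
  (u ∈ S ∧ v ∉ S ∧ M1.Indep (insert v (S.erase u))) ∨
  (u ∉ S ∧ v ∈ S ∧ M2.Indep (insert u (S.erase v)))

/-- An augmenting path in the exchange graph `G(S)`, recorded by its list of
interior vertices (the endpoints `s`, `t` are implicit). -/
def IsAugPath (M1 M2 : FinMatroid α) (S : Finset α) (p : List α) : Prop :=
  ∃ h : p ≠ [],
    p.Nodup ∧ (∀ a ∈ p, a ∈ M1.E) ∧
    p.head h ∉ S ∧ M1.Indep (insert (p.head h) S) ∧
    p.getLast h ∉ S ∧ M2.Indep (insert (p.getLast h) S) ∧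
    p.Chain' (ExchangeEdge M1 M2 S)

/-- A walk in `G(S)` starting at (a neighbor of) the source `s`, recorded by its
list of ground-set vertices. -/
def PathTo (M1 M2 : FinMatroid α) (S : Finset α) (p : List α) : Prop :=
  ∃ h : p ≠ [], p.head h ∉ S ∧ M1.Indep (insert (p.head h) S) ∧
    p.Chain' (ExchangeEdge M1 M2 S)

/-- `u` lies in the distance layer `L_l` of `G(S)`, i.e. `d(s,u) = l`. -/
def InLayer (M1 M2 : FinMatroid α) (S : Finset α) (u : α) (l : ℕ) : Prop :=
  (∃ p : List α, PathTo M1 M2 S p ∧ p.getLast? = some u ∧ p.length = l) ∧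
  (∀ p : List α, PathTo M1 M2 S p → p.getLast? = some u → l ≤ p.length)

/-- The interior of an `(s,t)`-walk in `G(S)` (not necessarily simple). -/
def IsAugSeq (M1 M2 : FinMatroid α) (S : Finset α) (p : List α) : Prop :=
  PathTo M1 M2 S p ∧
  ∃ h : p ≠ [], p.getLast h ∉ S ∧ M2.Indep (insert (p.getLast h) S)

/-- `dt` is the `(s,t)`-distance in `G(S)`: the shortest `(s,t)`-walk has
`dt - 1` interior vertices. -/
def IsDistST (M1 M2 : FinMatroid α) (S : Finset α) (dt : ℕ) : Prop :=
  (∃ p : List α, IsAugSeq M1 M2 S p ∧ p.length + 1 = dt) ∧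
  (∀ p : List α, IsAugSeq M1 M2 S p → dt ≤ p.length + 1)

/-- An augmenting set `(D 1, …, D (dt-1))` in `G(S)` (CLSSW, Definition 24). -/
def IsAugmentingSet (M1 M2 : FinMatroid α) (S : Finset α) (dt : ℕ)
    (D : ℕ → Finset α) : Prop :=
  (∀ l, 1 ≤ l → l < dt → ∀ u ∈ D l, InLayer M1 M2 S u l) ∧
  (∀ l l', 1 ≤ l → l < dt → 1 ≤ l' → l' < dt → (D l).card = (D l').card) ∧
  M1.Indep (S ∪ D 1) ∧
  M2.Indep (S ∪ D (dt - 1)) ∧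
  (∀ l, 1 ≤ l → l < dt - 1 → Even l → M1.Indep ((S \ D l) ∪ D (l + 1))) ∧
  (∀ l, 1 ≤ l → l < dt - 1 → Odd l → M2.Indep ((S \ D (l + 1)) ∪ D l))

/-- The union `D 1 ∪ ⋯ ∪ D (dt - 1)` of the layers of an augmenting set. -/
def AugUnion (dt : ℕ) (D : ℕ → Finset α) : Finset α :=
  (Finset.Icc 1 (dt - 1)).biUnion D

namespace FinMatroid

variable {α : Type*} [DecidableEq α] (M : FinMatroid α)

lemma rank_bddAbove (X : Finset α) :
    BddAbove {n : ℕ | ∃ S : Finset α, M.Indep S ∧ S ⊆ X ∧ S.card = n} := by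
  refine ⟨X.card, ?_⟩
  rintro n ⟨S, hS, hsub, rfl⟩
  exact Finset.card_le_card hsub

lemma exists_rank_witness (X : Finset α) :
    ∃ B, M.Indep B ∧ B ⊆ X ∧ B.card = M.rank X := by
  have hne : {n : ℕ | ∃ S : Finset α, M.Indep S ∧ S ⊆ X ∧ S.card = n}.Nonempty :=
    ⟨0, ∅, M.indep_empty, Finset.empty_subset _, Finset.card_empty⟩
  have := Nat.sSup_mem hne (M.rank_bddAbove X)
  exact this

lemma le_rank {I X : Finset α} (hI : M.Indep I) (h : I ⊆ X) : I.card ≤ M.rank X :=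
  le_csSup (M.rank_bddAbove X) ⟨I, hI, h, rfl⟩

lemma rank_le_card (X : Finset α) : M.rank X ≤ X.card := by
  obtain ⟨B, hB, hsub, hcard⟩ := M.exists_rank_witness X
  rw [← hcard]; exact Finset.card_le_card hsub

lemma rank_mono {X Y : Finset α} (h : X ⊆ Y) : M.rank X ≤ M.rank Y := by
  obtain ⟨B, hB, hsub, hcard⟩ := M.exists_rank_witness X
  rw [← hcard]; exact M.le_rank hB (hsub.trans h)

lemma rank_of_indep {X : Finset α} (h : M.Indep X) : M.rank X = X.card :=
  le_antisymm (M.rank_le_card X) (M.le_rank h (subset_refl X))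

lemma indep_of_card_le_rank {X : Finset α} (h : X.card ≤ M.rank X) : M.Indep X := by
  obtain ⟨B, hB, hsub, hcard⟩ := M.exists_rank_witness X
  have : B = X := Finset.eq_of_subset_of_card_le hsub (by omega)
  rwa [← this]

lemma grow {I T : Finset α} (hI : M.Indep I) (hT : M.Indep T) (hc : I.card ≤ T.card) :
    ∃ B, M.Indep B ∧ I ⊆ B ∧ B ⊆ I ∪ T ∧ B.card = T.card := by
  obtain ⟨n, hn⟩ : ∃ n, T.card - I.card = n := ⟨_, rfl⟩
  induction n generalizing I with
  | zero =>
    have : I.card = T.card := by omega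
    exact ⟨I, hI, subset_refl I, Finset.subset_union_left, this⟩
  | succ n ih =>
    have hlt : I.card < T.card := by omega
    obtain ⟨x, hxT, hxI, hind⟩ := M.indep_exchange hI hT hlt
    have hcard : (insert x I).card = I.card + 1 := Finset.card_insert_of_notMem hxI
    obtain ⟨B, hB, hsub1, hsub2, hcard2⟩ := ih hind (by omega) (by omega)
    refine ⟨B, hB, (Finset.subset_insert x I).trans hsub1, ?_, hcard2⟩
    intro a ha
    rcases Finset.mem_union.mp (hsub2 ha) with h | h
    · rcases Finset.mem_insert.mp h with rfl | h
      · exact Finset.mem_union_right _ hxT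
      · exact Finset.mem_union_left _ h
    · exact Finset.mem_union_right _ h

lemma exists_basis_between {I X : Finset α} (hI : M.Indep I) (hIX : I ⊆ X) :
    ∃ B, M.Indep B ∧ I ⊆ B ∧ B ⊆ X ∧ B.card = M.rank X := by
  obtain ⟨B0, hB0, hB0X, hB0c⟩ := M.exists_rank_witness X
  obtain ⟨B, hB, h1, h2, h3⟩ := M.grow hI hB0 (by rw [hB0c]; exact M.le_rank hI hIX)
  exact ⟨B, hB, h1, h2.trans (Finset.union_subset hIX hB0X), by rw [h3, hB0c]⟩

/-- `e` is spanned by `X`. -/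
def InSpan (X : Finset α) (e : α) : Prop := M.rank (insert e X) = M.rank X

lemma inSpan_of_mem {X : Finset α} {e : α} (h : e ∈ X) : M.InSpan X e := by
  unfold InSpan; rw [Finset.insert_eq_self.mpr h]

lemma rank_insert_le (X : Finset α) (e : α) : M.rank (insert e X) ≤ M.rank X + 1 := by
  obtain ⟨B, hB, hsub, hcard⟩ := M.exists_rank_witness (insert e X)
  have h1 : B.erase e ⊆ X := by
    intro a ha
    have := hsub (Finset.mem_of_mem_erase ha)
    rcases Finset.mem_insert.mp this with rfl | h
    · exact absurd rfl (Finset.ne_of_mem_erase ha)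
    · exact h
  have h2 : B.card - 1 ≤ (B.erase e).card := Finset.pred_card_le_card_erase
  have := M.le_rank (M.indep_mono hB (Finset.erase_subset e B)) h1
  omega

lemma rank_le_rank_insert (X : Finset α) (e : α) : M.rank X ≤ M.rank (insert e X) :=
  M.rank_mono (Finset.subset_insert e X)

lemma inSpan_of_dep {X : Finset α} {e : α} (hX : M.Indep X) (hd : ¬ M.Indep (insert e X)) :
    M.InSpan X e := by
  by_cases he : e ∈ X
  · exact M.inSpan_of_mem he
  have h1 : M.rank (insert e X) ≤ X.card := by
    obtain ⟨B, hB, hsub, hcard⟩ := M.exists_rank_witness (insert e X)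
    by_contra hcon
    have hcard2 : X.card + 1 ≤ B.card := by omega
    have : B = insert e X := Finset.eq_of_subset_of_card_le hsub
      (by rw [Finset.card_insert_of_notMem he]; omega)
    exact hd (this ▸ hB)
  have h2 := M.rank_le_rank_insert X e
  have h3 := M.rank_of_indep hX
  unfold InSpan; omega

lemma not_indep_insert_of_inSpan {X : Finset α} {e : α} (hX : M.Indep X) (he : e ∉ X)
    (hs : M.InSpan X e) : ¬ M.Indep (insert e X) := by
  intro hind
  have h1 := M.rank_of_indep hind
  have h2 := M.rank_of_indep hX
  rw [Finset.card_insert_of_notMem he] at h1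
  unfold InSpan at hs; omega

lemma indep_insert_or_inSpan {X : Finset α} {e : α} (hX : M.Indep X) :
    M.Indep (insert e X) ∨ M.InSpan X e := by
  by_cases h : M.Indep (insert e X)
  · exact Or.inl h
  · exact Or.inr (M.inSpan_of_dep hX h)

lemma inSpan_mono {X Y : Finset α} {e : α} (hXY : X ⊆ Y) (h : M.InSpan X e) :
    M.InSpan Y e := by
  by_cases heY : e ∈ Y
  · exact M.inSpan_of_mem heY
  obtain ⟨B, hB, hBX, hBc⟩ := M.exists_rank_witness X
  obtain ⟨B', hB', hBB', hB'Y, hB'c⟩ := M.exists_basis_between hB (hBX.trans hXY)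
  have heB' : e ∉ B' := fun hc => heY (hB'Y hc)
  unfold InSpan
  refine le_antisymm ?_ (M.rank_le_rank_insert Y e)
  by_contra hcon
  have h2 := M.rank_insert_le Y e
  have hr : M.rank (insert e Y) = M.rank Y + 1 := by omega
  obtain ⟨B'', hB'', hB''sub, hB''c⟩ := M.exists_rank_witness (insert e Y)
  have hlt : B'.card < B''.card := by omega
  obtain ⟨x, hxB'', hxB', hind⟩ := M.indep_exchange hB' hB'' hlt
  rcases Finset.mem_insert.mp (hB''sub hxB'') with rfl | hxY
  · -- x = e : insert e B' indep, contradiction with InSpan X e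
    have heB : x ∉ B := fun hc => hxB' (hBB' hc)
    have hindeB : M.Indep (insert x B) := M.indep_mono hind (Finset.insert_subset_insert _ hBB')
    have := M.le_rank hindeB (Finset.insert_subset_insert _ hBX)
    rw [Finset.card_insert_of_notMem heB] at this
    unfold InSpan at h; omega
  · have : (insert x B').card ≤ M.rank Y :=
      M.le_rank hind (Finset.insert_subset hxY hB'Y)
    rw [Finset.card_insert_of_notMem hxB'] at this; omega

lemma rank_union_eq_of_inSpan {X Y : Finset α} (h : ∀ y ∈ Y, M.InSpan X y) :
    M.rank (X ∪ Y) = M.rank X := by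
  induction Y using Finset.induction with
  | empty => rw [Finset.union_empty]
  | @insert y Y' hys ih =>
    have h1 : X ∪ insert y Y' = insert y (X ∪ Y') := by
      ext a; simp [Finset.mem_insert, Finset.mem_union, or_left_comm]
    rw [h1]
    have h2 : M.InSpan (X ∪ Y') y :=
      M.inSpan_mono Finset.subset_union_left (h y (Finset.mem_insert_self y Y'))
    unfold InSpan at h2
    rw [h2, ih (fun z hz => h z (Finset.mem_insert_of_mem hz))]

lemma inSpan_trans {W X : Finset α} {e : α} (hW : ∀ x ∈ X, M.InSpan W x)
    (h : M.InSpan X e) : M.InSpan W e := by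
  have h1 : M.rank (W ∪ X) = M.rank W := M.rank_union_eq_of_inSpan hW
  have h2 : M.InSpan (W ∪ X) e := M.inSpan_mono Finset.subset_union_right h
  unfold InSpan at h2 ⊢
  have h3 : M.rank (insert e W) ≤ M.rank (insert e (W ∪ X)) :=
    M.rank_mono (Finset.insert_subset_insert _ Finset.subset_union_left)
  have h4 := M.rank_le_rank_insert W e
  omega

lemma inSpan_of_rank_union {X Y : Finset α} {y : α} (h : M.rank (X ∪ Y) = M.rank X)
    (hy : y ∈ Y) : M.InSpan X y := by
  have h1 : M.rank (insert y X) ≤ M.rank (X ∪ Y) := by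
    apply M.rank_mono
    intro a ha
    rcases Finset.mem_insert.mp ha with rfl | ha
    · exact Finset.mem_union_right _ hy
    · exact Finset.mem_union_left _ ha
  have h2 := M.rank_le_rank_insert X y
  unfold InSpan; omega

lemma insert_indep_cases {M : FinMatroid α} {S X : Finset α} {w : α} (hS : M.Indep S)
    (hw : w ∉ S) (hX : X ⊆ S) (hind : M.Indep (insert w X)) :
    M.Indep (insert w S) ∨ ∃ x', x' ∈ S ∧ x' ∉ X ∧ M.Indep (insert w (S.erase x')) := by
  by_cases hfull : X = S
  · subst hfull; exact Or.inl hind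
  · right
    have hss : X ⊂ S := ⟨hX, fun hc => hfull (le_antisymm hX hc)⟩
    have hlt := Finset.card_lt_card hss
    have hwX : w ∉ X := fun hc => hw (hX hc)
    have hcard : (insert w X).card ≤ S.card := by
      rw [Finset.card_insert_of_notMem hwX]; omega
    obtain ⟨B, hB, h1, h2, h3⟩ := M.grow hind hS hcard
    have hwB : w ∈ B := h1 (Finset.mem_insert_self _ _)
    have hXB : X ⊆ B := fun x hx => h1 (Finset.mem_insert_of_mem hx)
    have hBsub : B ⊆ insert w S := by
      intro x hx
      rcases Finset.mem_union.mp (h2 hx) with h | h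
      · rcases Finset.mem_insert.mp h with rfl | h
        · exact Finset.mem_insert_self _ _
        · exact Finset.mem_insert_of_mem (hX h)
      · exact Finset.mem_insert_of_mem h
    have hBe : B.erase w ⊆ S := by
      intro x hx
      have hxy := Finset.ne_of_mem_erase hx
      rcases Finset.mem_insert.mp (hBsub (Finset.mem_of_mem_erase hx)) with rfl | h
      · exact absurd rfl hxy
      · exact h
    have hBecard : (B.erase w).card = S.card - 1 := by
      rw [Finset.card_erase_of_mem hwB]; omega
    have hSB : S \ B = S \ (B.erase w) := by
      ext x
      simp only [Finset.mem_sdiff, Finset.mem_erase]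
      constructor
      · rintro ⟨hxS, hxB⟩; exact ⟨hxS, fun hc => hxB hc.2⟩
      · rintro ⟨hxS, hxB⟩
        exact ⟨hxS, fun hc => hxB ⟨fun he => hw (he ▸ hxS), hc⟩⟩
    have hSBcard : (S \ B).card = 1 := by
      rw [hSB, Finset.card_sdiff_of_subset hBe, hBecard]
      have hSpos : 1 ≤ S.card := by omega
      omega
    obtain ⟨x', hx'⟩ := Finset.card_eq_one.mp hSBcard
    have hx'S : x' ∈ S ∧ x' ∉ B := by
      have : x' ∈ S \ B := hx' ▸ Finset.mem_singleton_self x'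
      exact ⟨(Finset.mem_sdiff.mp this).1, (Finset.mem_sdiff.mp this).2⟩
    have hx'X : x' ∉ X := fun hc => hx'S.2 (hXB hc)
    have hBeq : B = insert w (S.erase x') := by
      ext a
      simp only [Finset.mem_insert, Finset.mem_erase]
      constructor
      · intro haB
        rcases Finset.mem_insert.mp (hBsub haB) with rfl | haS
        · exact Or.inl rfl
        · refine Or.inr ⟨fun he => hx'S.2 (he ▸ haB), haS⟩
      · rintro (rfl | ⟨hax, haS⟩)
        · exact hwB
        · by_contra hc
          have : a ∈ S \ B := Finset.mem_sdiff.mpr ⟨haS, hc⟩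
          rw [hx'] at this
          exact hax (Finset.mem_singleton.mp this)
    exact ⟨x', hx'S.1, hx'X, by rwa [hBeq] at hB⟩

end FinMatroid
section Paths

variable {α : Type*} [DecidableEq α] {M1 M2 : FinMatroid α} {S : Finset α}

lemma edgeM1 {x y : α} (hx : x ∈ S) (hy : y ∉ S) (h : M1.Indep (insert y (S.erase x))) :
    ExchangeEdge M1 M2 S x y := Or.inl ⟨hx, hy, h⟩

lemma edgeM2 {x y : α} (hx : x ∉ S) (hy : y ∈ S) (h : M2.Indep (insert x (S.erase y))) :
    ExchangeEdge M1 M2 S x y := Or.inr ⟨hx, hy, h⟩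

lemma pathTo_single {u : α} (hu : u ∉ S) (hi : M1.Indep (insert u S)) :
    PathTo M1 M2 S [u] :=
  ⟨by simp, by simpa using hu, by simpa using hi, List.isChain_singleton u⟩

lemma pathTo_snoc {p : List α} {a b : α} (hp : PathTo M1 M2 S p)
    (ha : p.getLast? = some a) (he : ExchangeEdge M1 M2 S a b) :
    PathTo M1 M2 S (p ++ [b]) := by
  obtain ⟨h, h1, h2, h3⟩ := hp
  refine ⟨by simp, ?_, ?_, ?_⟩
  · rwa [List.head_append_of_ne_nil h]
  · rwa [List.head_append_of_ne_nil h]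
  · unfold List.Chain'; rw [List.isChain_append]
    refine ⟨h3, List.isChain_singleton b, ?_⟩
    intro x hx y hy
    simp at hy
    rw [ha] at hx; simp at hx
    rw [← hx, ← hy]; exact he

lemma chain_parity :
    ∀ (p : List α), p.Chain' (ExchangeEdge M1 M2 S) → ∀ (hp : p ≠ []),
      ((p.getLast hp ∈ S) ↔ ((p.head hp ∈ S) ↔ Odd p.length)) := by
  intro p
  induction p with
  | nil => intro _ hp; exact absurd rfl hp
  | cons a q ih =>
    intro hc hp
    cases q with
    | nil =>
      simp only [List.getLast_singleton, List.head_cons, List.length_cons, List.length_nil]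
      have : Odd 1 := odd_one
      tauto
    | cons b r =>
      have hcc := List.isChain_cons_cons.mp hc
      have hqne : (b :: r) ≠ [] := by simp
      have hIH := ih hcc.2 hqne
      have hlast : (a :: b :: r).getLast hp = (b :: r).getLast hqne :=
        List.getLast_cons hqne
      have hedge : (a ∈ S ↔ b ∉ S) := by
        rcases hcc.1 with ⟨h1, h2, _⟩ | ⟨h1, h2, _⟩ <;> tauto
      have hpar : Odd ((b :: r).length + 1) ↔ ¬ Odd ((b :: r).length) := by
        simp [Nat.odd_add_one]
      rw [hlast]
      simp only [List.head_cons, List.length_cons] at hIH ⊢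
      rw [hIH]
      constructor <;> intro h <;> tauto

lemma pathTo_parity {p : List α} {u : α} (hp : PathTo M1 M2 S p)
    (hu : p.getLast? = some u) : u ∈ S ↔ Even p.length := by
  obtain ⟨h, h1, h2, h3⟩ := hp
  have hlast := List.getLast?_eq_getLast h
  rw [hlast] at hu
  have hu' : p.getLast h = u := by injection hu
  have := chain_parity p h3 h
  rw [hu'] at this
  rw [this, ← Nat.not_odd_iff_even]
  tauto

lemma layer_parity {u : α} {l : ℕ} (h : InLayer M1 M2 S u l) : u ∈ S ↔ Even l := by
  obtain ⟨⟨p, hp, hlast, hlen⟩, _⟩ := h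
  rw [← hlen]; exact pathTo_parity hp hlast

lemma layer_unique {u : α} {l l' : ℕ} (h : InLayer M1 M2 S u l)
    (h' : InLayer M1 M2 S u l') : l = l' := by
  obtain ⟨⟨p, hp, hlast, hlen⟩, hmin⟩ := h
  obtain ⟨⟨p', hp', hlast', hlen'⟩, hmin'⟩ := h'
  have := hmin p' hp' hlast'
  have := hmin' p hp hlast
  omega

lemma layer_le_one_of_insertable {u : α} {l : ℕ} (h : InLayer M1 M2 S u l)
    (hu : u ∉ S) (hi : M1.Indep (insert u S)) : l ≤ 1 := by
  have := h.2 [u] (pathTo_single hu hi) (by simp)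
  simpa using this

lemma dist_le_of_M2_insertable {u : α} {l dt : ℕ} (hdt : IsDistST M1 M2 S dt)
    (h : InLayer M1 M2 S u l) (hu : u ∉ S) (hi : M2.Indep (insert u S)) :
    dt ≤ l + 1 := by
  obtain ⟨⟨p, hp, hlast, hlen⟩, _⟩ := h
  have hne : p ≠ [] := hp.1
  have hlast' : p.getLast hne = u := by
    have := List.getLast?_eq_getLast hne
    rw [this] at hlast; injection hlast
  have haug : IsAugSeq M1 M2 S p := ⟨hp, hne, by rw [hlast']; exact hu, by rw [hlast']; exact hi⟩
  have := hdt.2 p haug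
  omega

/-- Key lemma (M1 side): an odd-layer vertex `y` at distance `ly ≥ 2` is spanned (in `M1`)
by `S` minus any set of vertices reachable within distance `ly - 2`. -/
lemma span1 (hS1 : M1.Indep S) {y : α} {ly : ℕ} (hy : InLayer M1 M2 S y ly)
    (hodd : Odd ly) (h2 : 2 ≤ ly) (R : Finset α)
    (hR : ∀ x ∈ R, ∃ q, PathTo M1 M2 S q ∧ q.getLast? = some x ∧ q.length + 2 ≤ ly) :
    M1.InSpan (S \ R) y := by
  classical
  have hyS : y ∉ S := by
    have := layer_parity hy
    rw [← Nat.not_even_iff_odd] at hodd; tauto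
  have hSR : M1.Indep (S \ R) := M1.indep_mono hS1 (Finset.sdiff_subset)
  have hynot : y ∉ S \ R := fun hc => hyS (Finset.mem_sdiff.mp hc).1
  rcases M1.indep_insert_or_inSpan (e := y) hSR with hind | hsp
  · exfalso
    by_cases hfull : S \ R = S
    · rw [hfull] at hind
      have := layer_le_one_of_insertable hy hyS hind
      omega
    · have hss : S \ R ⊂ S := ⟨Finset.sdiff_subset, fun hc => hfull (le_antisymm Finset.sdiff_subset hc)⟩
      have hcardlt : (S \ R).card < S.card := Finset.card_lt_card hss
      have hcard : (insert y (S \ R)).card ≤ S.card := by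
        rw [Finset.card_insert_of_notMem hynot]; omega
      obtain ⟨B, hB, hsub1, hsub2, hBcard⟩ := M1.grow hind hS1 hcard
      have hyB : y ∈ B := hsub1 (Finset.mem_insert_self _ _)
      have hBsub : B ⊆ insert y S := by
        intro x hx
        rcases Finset.mem_union.mp (hsub2 hx) with h | h
        · rcases Finset.mem_insert.mp h with rfl | h
          · exact Finset.mem_insert_self _ _
          · exact Finset.mem_insert_of_mem (Finset.mem_sdiff.mp h).1
        · exact Finset.mem_insert_of_mem h
      have hBe : B.erase y ⊆ S := by
        intro x hx
        have hxy := Finset.ne_of_mem_erase hx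
        rcases Finset.mem_insert.mp (hBsub (Finset.mem_of_mem_erase hx)) with rfl | h
        · exact absurd rfl hxy
        · exact h
      have hBecard : (B.erase y).card = S.card - 1 := by
        rw [Finset.card_erase_of_mem hyB]; omega
      have hSB : S \ B = S \ (B.erase y) := by
        ext x
        simp only [Finset.mem_sdiff, Finset.mem_erase]
        constructor
        · rintro ⟨hxS, hxB⟩; exact ⟨hxS, fun hc => hxB hc.2⟩
        · rintro ⟨hxS, hxB⟩
          exact ⟨hxS, fun hc => hxB ⟨fun he => hyS (he ▸ hxS), hc⟩⟩
      have hSBcard : (S \ B).card = 1 := by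
        rw [hSB, Finset.card_sdiff_of_subset hBe, hBecard]
        have hSpos : 1 ≤ S.card := by omega
        omega
      obtain ⟨x', hx'⟩ := Finset.card_eq_one.mp hSBcard
      have hx'S : x' ∈ S ∧ x' ∉ B := by
        have : x' ∈ S \ B := hx' ▸ Finset.mem_singleton_self x'
        exact ⟨(Finset.mem_sdiff.mp this).1, (Finset.mem_sdiff.mp this).2⟩
      have hx'R : x' ∈ R := by
        by_contra hc
        exact hx'S.2 (hsub1 (Finset.mem_insert_of_mem (Finset.mem_sdiff.mpr ⟨hx'S.1, hc⟩)))
      have hBeq : B = insert y (S.erase x') := by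
        ext a
        simp only [Finset.mem_insert, Finset.mem_erase]
        constructor
        · intro haB
          rcases Finset.mem_insert.mp (hBsub haB) with rfl | haS
          · exact Or.inl rfl
          · refine Or.inr ⟨fun he => hx'S.2 (he ▸ haB), haS⟩
        · rintro (rfl | ⟨hax, haS⟩)
          · exact hyB
          · by_contra hc
            have : a ∈ S \ B := Finset.mem_sdiff.mpr ⟨haS, hc⟩
            rw [hx'] at this
            exact hax (Finset.mem_singleton.mp this)
      obtain ⟨q, hq, hqlast, hqlen⟩ := hR x' hx'R
      have hedge : ExchangeEdge M1 M2 S x' y :=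
        edgeM1 hx'S.1 hyS (by rwa [hBeq] at hB)
      have hpath := pathTo_snoc hq hqlast hedge
      have := hy.2 (q ++ [y]) hpath (by simp)
      simp only [List.length_append, List.length_singleton] at this
      omega
  · exact hsp

/-- Key lemma (M2 side): an odd-layer vertex `y` at distance `ly < dt - 1` is spanned (in `M2`)
by `S` minus any set of vertices NOT reachable within distance `ly + 1`. -/
lemma span2 (hS2 : M2.Indep S) {dt : ℕ} (hdt : IsDistST M1 M2 S dt)
    {y : α} {ly : ℕ} (hy : InLayer M1 M2 S y ly)
    (hodd : Odd ly) (hlt : ly + 1 < dt) (R : Finset α)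
    (hR : ∀ x ∈ R, ∀ q, PathTo M1 M2 S q → q.getLast? = some x → ly + 1 < q.length) :
    M2.InSpan (S \ R) y := by
  classical
  have hyS : y ∉ S := by
    have := layer_parity hy
    rw [← Nat.not_even_iff_odd] at hodd; tauto
  have hSR : M2.Indep (S \ R) := M2.indep_mono hS2 (Finset.sdiff_subset)
  have hynot : y ∉ S \ R := fun hc => hyS (Finset.mem_sdiff.mp hc).1
  rcases M2.indep_insert_or_inSpan (e := y) hSR with hind | hsp
  · exfalso
    by_cases hfull : S \ R = S
    · rw [hfull] at hind
      have := dist_le_of_M2_insertable hdt hy hyS hind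
      omega
    · have hss : S \ R ⊂ S := ⟨Finset.sdiff_subset, fun hc => hfull (le_antisymm Finset.sdiff_subset hc)⟩
      have hcardlt : (S \ R).card < S.card := Finset.card_lt_card hss
      have hcard : (insert y (S \ R)).card ≤ S.card := by
        rw [Finset.card_insert_of_notMem hynot]; omega
      obtain ⟨B, hB, hsub1, hsub2, hBcard⟩ := M2.grow hind hS2 hcard
      have hyB : y ∈ B := hsub1 (Finset.mem_insert_self _ _)
      have hBsub : B ⊆ insert y S := by
        intro x hx
        rcases Finset.mem_union.mp (hsub2 hx) with h | h
        · rcases Finset.mem_insert.mp h with rfl | h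
          · exact Finset.mem_insert_self _ _
          · exact Finset.mem_insert_of_mem (Finset.mem_sdiff.mp h).1
        · exact Finset.mem_insert_of_mem h
      have hBe : B.erase y ⊆ S := by
        intro x hx
        have hxy := Finset.ne_of_mem_erase hx
        rcases Finset.mem_insert.mp (hBsub (Finset.mem_of_mem_erase hx)) with rfl | h
        · exact absurd rfl hxy
        · exact h
      have hBecard : (B.erase y).card = S.card - 1 := by
        rw [Finset.card_erase_of_mem hyB]; omega
      have hSB : S \ B = S \ (B.erase y) := by
        ext x
        simp only [Finset.mem_sdiff, Finset.mem_erase]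
        constructor
        · rintro ⟨hxS, hxB⟩; exact ⟨hxS, fun hc => hxB hc.2⟩
        · rintro ⟨hxS, hxB⟩
          exact ⟨hxS, fun hc => hxB ⟨fun he => hyS (he ▸ hxS), hc⟩⟩
      have hSBcard : (S \ B).card = 1 := by
        rw [hSB, Finset.card_sdiff_of_subset hBe, hBecard]
        have hSpos : 1 ≤ S.card := by omega
        omega
      obtain ⟨x', hx'⟩ := Finset.card_eq_one.mp hSBcard
      have hx'S : x' ∈ S ∧ x' ∉ B := by
        have : x' ∈ S \ B := hx' ▸ Finset.mem_singleton_self x'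
        exact ⟨(Finset.mem_sdiff.mp this).1, (Finset.mem_sdiff.mp this).2⟩
      have hx'R : x' ∈ R := by
        by_contra hc
        exact hx'S.2 (hsub1 (Finset.mem_insert_of_mem (Finset.mem_sdiff.mpr ⟨hx'S.1, hc⟩)))
      have hBeq : B = insert y (S.erase x') := by
        ext a
        simp only [Finset.mem_insert, Finset.mem_erase]
        constructor
        · intro haB
          rcases Finset.mem_insert.mp (hBsub haB) with rfl | haS
          · exact Or.inl rfl
          · refine Or.inr ⟨fun he => hx'S.2 (he ▸ haB), haS⟩
        · rintro (rfl | ⟨hax, haS⟩)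
          · exact hyB
          · by_contra hc
            have : a ∈ S \ B := Finset.mem_sdiff.mpr ⟨haS, hc⟩
            rw [hx'] at this
            exact hax (Finset.mem_singleton.mp this)
      obtain ⟨⟨p, hp, hplast, hplen⟩, _⟩ := hy
      have hedge : ExchangeEdge M1 M2 S y x' :=
        edgeM2 hyS hx'S.1 (by rwa [hBeq] at hB)
      have hpath := pathTo_snoc hp hplast hedge
      have := hR x' hx'R (p ++ [x']) hpath (by simp)
      simp only [List.length_append, List.length_singleton] at this
      omega
  · exact hsp

end Paths
section Master

variable {α : Type*} [DecidableEq α]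

/-- Union of the even-indexed layers `C l`, `1 ≤ l ≤ m`. -/
noncomputable def Ebi (m : ℕ) (C : ℕ → Finset α) : Finset α :=
  ((Finset.Icc 1 m).filter (fun l => Even l)).biUnion C

/-- Union of the odd-indexed layers `C l`, `1 ≤ l ≤ m`. -/
noncomputable def Obi (m : ℕ) (C : ℕ → Finset α) : Finset α :=
  ((Finset.Icc 1 m).filter (fun l => Odd l)).biUnion C

lemma mem_Ebi {u : α} {m : ℕ} {C : ℕ → Finset α} :
    u ∈ Ebi m C ↔ ∃ l, 1 ≤ l ∧ l ≤ m ∧ Even l ∧ u ∈ C l := by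
  simp only [Ebi, Finset.mem_biUnion, Finset.mem_filter, Finset.mem_Icc]
  constructor
  · rintro ⟨l, ⟨⟨h1, h2⟩, h3⟩, h4⟩; exact ⟨l, h1, h2, h3, h4⟩
  · rintro ⟨l, h1, h2, h3, h4⟩; exact ⟨l, ⟨⟨h1, h2⟩, h3⟩, h4⟩

lemma mem_Obi {u : α} {m : ℕ} {C : ℕ → Finset α} :
    u ∈ Obi m C ↔ ∃ l, 1 ≤ l ∧ l ≤ m ∧ Odd l ∧ u ∈ C l := by
  simp only [Obi, Finset.mem_biUnion, Finset.mem_filter, Finset.mem_Icc]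
  constructor
  · rintro ⟨l, ⟨⟨h1, h2⟩, h3⟩, h4⟩; exact ⟨l, h1, h2, h3, h4⟩
  · rintro ⟨l, h1, h2, h3, h4⟩; exact ⟨l, ⟨⟨h1, h2⟩, h3⟩, h4⟩

variable {M1 M2 : FinMatroid α} {S : Finset α} {m : ℕ} {C : ℕ → Finset α}

lemma masterM1_spanA (hS1 : M1.Indep S) (hm : Odd m)
    (hCL : ∀ l, 1 ≤ l → l ≤ m → ∀ u ∈ C l, InLayer M1 M2 S u l)
    (hCc : ∀ l, 2 ≤ l → l + 1 ≤ m → Even l → (C l).card = (C (l + 1)).card)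
    (hCp : ∀ l, 2 ≤ l → l + 1 ≤ m → Even l → M1.Indep ((S \ C l) ∪ C (l + 1)))
    (K : Finset α) (jK : ℕ)
    (hK : ∀ x ∈ K, ∃ q, PathTo M1 M2 S q ∧ q.getLast? = some x ∧ q.length ≤ jK) :
    ∀ e, 2 ≤ e → e + 1 ≤ m → Even e → jK < e → ∀ u ∈ C e,
      M1.InSpan (((S \ Ebi m C) ∪ Obi m C) \ K) u := by
  classical
  suffices H : ∀ g e, m = e + g → 2 ≤ e → e + 1 ≤ m → Even e → jK < e → ∀ u ∈ C e,
      M1.InSpan (((S \ Ebi m C) ∪ Obi m C) \ K) u by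
    intro e h1 h2 h3 h4
    exact H (m - e) e (by omega) h1 h2 h3 h4
  intro g
  induction g using Nat.strong_induction_on with
  | _ g ih =>
  intro e hge h2e hem heven hjK u hu
  have hmpos : 1 ≤ m := by omega
  -- basic layer facts
  have hCeLayer : ∀ x ∈ C e, InLayer M1 M2 S x e := hCL e (by omega) (by omega)
  have hCe1Layer : ∀ x ∈ C (e+1), InLayer M1 M2 S x (e+1) := hCL (e+1) (by omega) (by omega)
  have hCeS : ∀ x ∈ C e, x ∈ S := fun x hx => (layer_parity (hCeLayer x hx)).mpr heven
  have hCe1S : ∀ x ∈ C (e+1), x ∉ S := by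
    intro x hx hxS
    have := (layer_parity (hCe1Layer x hx)).mp hxS
    rw [Nat.even_add_one] at this
    exact this heven
  have hCeK : ∀ x ∈ C e, x ∉ K := by
    intro x hx hxK
    obtain ⟨q, hq, hql, hqlen⟩ := hK x hxK
    have := (hCeLayer x hx).2 q hq hql
    omega
  have hCe1K : ∀ x ∈ C (e+1), x ∉ K := by
    intro x hx hxK
    obtain ⟨q, hq, hql, hqlen⟩ := hK x hxK
    have := (hCe1Layer x hx).2 q hq hql
    omega
  -- the sets
  set G : Finset α := (S \ Ebi m C) ∪ Obi m C with hGdef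
  set R' : Finset α := Ebi e C ∪ (K ∩ S) with hR'def
  set R : Finset α := Ebi (e-1) C ∪ (K ∩ S) with hRdef
  set W' : Finset α := (S \ R') ∪ C (e+1) with hW'def
  have hCeEbi : ∀ x ∈ C e, x ∈ Ebi e C := by
    intro x hx; exact mem_Ebi.mpr ⟨e, by omega, le_refl e, heven, hx⟩
  have hCeR : ∀ x ∈ C e, x ∉ R := by
    intro x hx hxR
    rcases Finset.mem_union.mp hxR with h | h
    · obtain ⟨l, h1, h2, h3, h4⟩ := mem_Ebi.mp h
      have := layer_unique (hCL l h1 (by omega) x h4) (hCeLayer x hx)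
      omega
    · exact hCeK x hx (Finset.mem_inter.mp h).1
  have hCeSR : ∀ x ∈ C e, x ∈ S \ R := fun x hx =>
    Finset.mem_sdiff.mpr ⟨hCeS x hx, hCeR x hx⟩
  have hsplit : ∀ x, x ∈ S \ R' ↔ (x ∈ S \ R ∧ x ∉ C e) := by
    intro x
    simp only [Finset.mem_sdiff, hR'def, hRdef, Finset.mem_union, Finset.mem_inter]
    constructor
    · rintro ⟨hxS, hx⟩
      push_neg at hx
      refine ⟨⟨hxS, ?_⟩, fun hc => hx.1 (hCeEbi x hc)⟩
      push_neg
      refine ⟨fun hc => ?_, hx.2⟩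
      obtain ⟨l, h1, h2, h3, h4⟩ := mem_Ebi.mp hc
      exact hx.1 (mem_Ebi.mpr ⟨l, h1, by omega, h3, h4⟩)
    · rintro ⟨⟨hxS, hx⟩, hxCe⟩
      push_neg at hx
      refine ⟨hxS, ?_⟩
      push_neg
      refine ⟨fun hc => ?_, hx.2⟩
      obtain ⟨l, h1, h2, h3, h4⟩ := mem_Ebi.mp hc
      rcases Nat.lt_or_ge l e with hl | hl
      · exact hx.1 (mem_Ebi.mpr ⟨l, h1, by omega, h3, h4⟩)
      · have : l = e := by omega
        exact hxCe (this ▸ h4)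
  have hSR' : S \ R' = (S \ R) \ C e := by
    ext x; rw [hsplit x]; simp [Finset.mem_sdiff]
  -- W' is independent
  have hW'indep : M1.Indep W' := by
    apply M1.indep_mono (hCp e h2e hem heven)
    intro x hx
    rcases Finset.mem_union.mp hx with h | h
    · have := (hsplit x).mp h
      exact Finset.mem_union_left _ (Finset.mem_sdiff.mpr ⟨(Finset.mem_sdiff.mp this.1).1, this.2⟩)
    · exact Finset.mem_union_right _ h
  -- rank of W' ∪ C e
  have hWCe : W' ∪ C e = (S \ R) ∪ C (e+1) := by
    rw [hW'def, hSR']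
    ext x
    simp only [Finset.mem_union, Finset.mem_sdiff]
    constructor
    · rintro ((⟨⟨h1, h2⟩, h3⟩ | h) | h)
      · exact Or.inl ⟨h1, h2⟩
      · exact Or.inr h
      · exact Or.inl (Finset.mem_sdiff.mp (hCeSR x h))
    · rintro (⟨h1, h2⟩ | h)
      · by_cases hc : x ∈ C e
        · exact Or.inr hc
        · exact Or.inl (Or.inl ⟨⟨h1, h2⟩, hc⟩)
      · exact Or.inl (Or.inr h)
  have hSRindep : M1.Indep (S \ R) := M1.indep_mono hS1 Finset.sdiff_subset
  have hspanCe1 : ∀ y ∈ C (e+1), M1.InSpan (S \ R) y := by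
    intro y hy
    apply span1 hS1 (hCe1Layer y hy) (Even.add_one heven) (by omega)
    intro x hxR
    rcases Finset.mem_union.mp hxR with h | h
    · obtain ⟨l, h1, h2, h3, h4⟩ := mem_Ebi.mp h
      obtain ⟨⟨q, hq, hql, hqlen⟩, _⟩ := hCL l h1 (by omega) x h4
      exact ⟨q, hq, hql, by omega⟩
    · obtain ⟨q, hq, hql, hqlen⟩ := hK x (Finset.mem_inter.mp h).1
      exact ⟨q, hq, hql, by omega⟩
  have hrank1 : M1.rank (W' ∪ C e) = (S \ R).card := by
    rw [hWCe, M1.rank_union_eq_of_inSpan hspanCe1, M1.rank_of_indep hSRindep]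
  -- cardinality of W'
  have hdisjW' : Disjoint (S \ R') (C (e+1)) := by
    rw [Finset.disjoint_left]
    intro x hx hxC
    exact hCe1S x hxC (Finset.mem_sdiff.mp hx).1
  have hCeSub : C e ⊆ S \ R := fun x hx => hCeSR x hx
  have hW'card : W'.card = (S \ R).card := by
    rw [hW'def, Finset.card_union_of_disjoint hdisjW', hSR',
      Finset.card_sdiff_of_subset hCeSub, ← hCc e h2e hem heven]
    have := Finset.card_le_card hCeSub
    omega
  -- u is spanned by W'
  have hspanW'u : M1.InSpan W' u := by
    have h1 : M1.rank (insert u W') ≤ M1.rank (W' ∪ C e) := by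
      apply M1.rank_mono
      intro x hx
      rcases Finset.mem_insert.mp hx with rfl | hx
      · exact Finset.mem_union_right _ hu
      · exact Finset.mem_union_left _ hx
    have h2 : M1.rank W' = W'.card := M1.rank_of_indep hW'indep
    have h3 := M1.rank_le_rank_insert W' u
    unfold FinMatroid.InSpan
    omega
  -- every element of W' is spanned by G \ K
  have hW'span : ∀ x ∈ W', M1.InSpan (G \ K) x := by
    intro x hx
    rcases Finset.mem_union.mp hx with h | h
    · have hxS := (Finset.mem_sdiff.mp h).1
      have hxR' := (Finset.mem_sdiff.mp h).2
      have hxK : x ∉ K := by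
        intro hc
        exact hxR' (Finset.mem_union_right _ (Finset.mem_inter.mpr ⟨hc, hxS⟩))
      by_cases hxE : x ∈ Ebi m C
      · obtain ⟨l, h1, h2, h3, h4⟩ := mem_Ebi.mp hxE
        have hle : ¬ l ≤ e := by
          intro hc
          exact hxR' (Finset.mem_union_left _ (mem_Ebi.mpr ⟨l, h1, hc, h3, h4⟩))
        have hlm : l + 1 ≤ m := by
          rcases hm with ⟨a, ha⟩
          rcases h3 with ⟨b, hb⟩
          omega
        exact ih (m - l) (by omega) l (by omega) (by omega) (by omega) h3 (by omega) x h4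
      · apply M1.inSpan_of_mem
        exact Finset.mem_sdiff.mpr ⟨Finset.mem_union_left _ (Finset.mem_sdiff.mpr ⟨hxS, hxE⟩), hxK⟩
    · apply M1.inSpan_of_mem
      refine Finset.mem_sdiff.mpr ⟨Finset.mem_union_right _ ?_, hCe1K x h⟩
      exact mem_Obi.mpr ⟨e+1, by omega, by omega, Even.add_one heven, h⟩
  exact M1.inSpan_trans hW'span hspanW'u

end Master
section MasterB

variable {α : Type*} [DecidableEq α] {M1 M2 : FinMatroid α} {S : Finset α} {m : ℕ}
  {C : ℕ → Finset α}

lemma Od_eq_insert_image (hm : Odd m) :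
    (Finset.Icc 1 m).filter (fun l => Odd l) =
      insert 1 (((Finset.Icc 1 m).filter (fun l => Even l)).image (· + 1)) := by
  have hm2 : m % 2 = 1 := Nat.odd_iff.mp hm
  ext l
  simp only [Finset.mem_filter, Finset.mem_Icc, Finset.mem_insert, Finset.mem_image,
    Nat.odd_iff, Nat.even_iff]
  constructor
  · rintro ⟨⟨h1, h2⟩, h3⟩
    by_cases hl : l = 1
    · exact Or.inl hl
    · exact Or.inr ⟨l - 1, ⟨⟨by omega, by omega⟩, by omega⟩, by omega⟩
  · rintro (rfl | ⟨b, ⟨⟨hb1, hb2⟩, hb3⟩, rfl⟩) <;> omega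

lemma Ebi_card (hCL : ∀ l, 1 ≤ l → l ≤ m → ∀ u ∈ C l, InLayer M1 M2 S u l) :
    (Ebi m C).card = ∑ l ∈ (Finset.Icc 1 m).filter (fun l => Even l), (C l).card := by
  apply Finset.card_biUnion
  intro l hl l' hl' hne
  simp only [Finset.mem_coe, Finset.mem_filter, Finset.mem_Icc] at hl hl'
  rw [Function.onFun, Finset.disjoint_left]
  intro a ha ha'
  exact hne (layer_unique (hCL l hl.1.1 hl.1.2 a ha) (hCL l' hl'.1.1 hl'.1.2 a ha'))

lemma Obi_card_le (hm : Odd m)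
    (hCL : ∀ l, 1 ≤ l → l ≤ m → ∀ u ∈ C l, InLayer M1 M2 S u l)
    (hCc : ∀ l, 2 ≤ l → l + 1 ≤ m → Even l → (C l).card = (C (l + 1)).card) :
    (Obi m C).card ≤ (C 1).card + (Ebi m C).card := by
  have hm2 : m % 2 = 1 := Nat.odd_iff.mp hm
  have h1 : (Obi m C).card ≤ ∑ l ∈ (Finset.Icc 1 m).filter (fun l => Odd l), (C l).card :=
    Finset.card_biUnion_le
  rw [Od_eq_insert_image hm] at h1
  have hnotmem : 1 ∉ ((Finset.Icc 1 m).filter (fun l => Even l)).image (· + 1) := by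
    simp only [Finset.mem_image, Finset.mem_filter, Finset.mem_Icc, Nat.even_iff]
    rintro ⟨b, ⟨⟨hb1, hb2⟩, hb3⟩, hb4⟩
    omega
  rw [Finset.sum_insert hnotmem, Finset.sum_image (by intro x _ y _ h; simp only at h; omega)] at h1
  have h2 : ∑ l ∈ (Finset.Icc 1 m).filter (fun l => Even l), (C (l + 1)).card
      = ∑ l ∈ (Finset.Icc 1 m).filter (fun l => Even l), (C l).card := by
    apply Finset.sum_congr rfl
    intro l hl
    simp only [Finset.mem_filter, Finset.mem_Icc, Nat.even_iff] at hl
    rw [← hCc l (by omega) (by omega) (Nat.even_iff.mpr hl.2)]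
  rw [h2] at h1
  rw [Ebi_card hCL]
  omega

lemma Ebi_subset_S (hCL : ∀ l, 1 ≤ l → l ≤ m → ∀ u ∈ C l, InLayer M1 M2 S u l) :
    Ebi m C ⊆ S := by
  intro x hx
  obtain ⟨l, h1, h2, h3, h4⟩ := mem_Ebi.mp hx
  exact (layer_parity (hCL l h1 h2 x h4)).mpr h3

lemma Obi_disj_S (hCL : ∀ l, 1 ≤ l → l ≤ m → ∀ u ∈ C l, InLayer M1 M2 S u l) :
    ∀ x ∈ Obi m C, x ∉ S := by
  intro x hx hxS
  obtain ⟨l, h1, h2, h3, h4⟩ := mem_Obi.mp hx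
  have := (layer_parity (hCL l h1 h2 x h4)).mp hxS
  rw [Nat.even_iff] at this
  rw [Nat.odd_iff] at h3
  omega

lemma masterM1_indep (hS1 : M1.Indep S) (hm : Odd m)
    (hCL : ∀ l, 1 ≤ l → l ≤ m → ∀ u ∈ C l, InLayer M1 M2 S u l)
    (hCc : ∀ l, 2 ≤ l → l + 1 ≤ m → Even l → (C l).card = (C (l + 1)).card)
    (hCp : ∀ l, 2 ≤ l → l + 1 ≤ m → Even l → M1.Indep ((S \ C l) ∪ C (l + 1)))
    (hC1 : M1.Indep (S ∪ C 1)) :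
    M1.Indep ((S \ Ebi m C) ∪ Obi m C) := by
  classical
  have hm2 : m % 2 = 1 := Nat.odd_iff.mp hm
  set G : Finset α := (S \ Ebi m C) ∪ Obi m C with hGdef
  have hspan : ∀ x ∈ S ∪ C 1, M1.InSpan G x := by
    intro x hx
    rcases Finset.mem_union.mp hx with hxS | hxC1
    · by_cases hxE : x ∈ Ebi m C
      · obtain ⟨l, h1, h2, h3, h4⟩ := mem_Ebi.mp hxE
        have h32 : l % 2 = 0 := Nat.even_iff.mp h3
        have := masterM1_spanA hS1 hm hCL hCc hCp ∅ 0 (by simp) l (by omega) (by omega)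
          h3 (by omega) x h4
        rwa [Finset.sdiff_empty] at this
      · exact M1.inSpan_of_mem (Finset.mem_union_left _ (Finset.mem_sdiff.mpr ⟨hxS, hxE⟩))
    · exact M1.inSpan_of_mem (Finset.mem_union_right _
        (mem_Obi.mpr ⟨1, le_refl 1, by omega, odd_one, hxC1⟩))
  apply M1.indep_of_card_le_rank
  have h1 : M1.rank (G ∪ (S ∪ C 1)) = M1.rank G := M1.rank_union_eq_of_inSpan hspan
  have h2 : M1.rank (S ∪ C 1) ≤ M1.rank G := by
    rw [← h1]; exact M1.rank_mono Finset.subset_union_right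
  have hdisj1 : Disjoint S (C 1) := by
    rw [Finset.disjoint_right]
    intro a ha haS
    have := (layer_parity (hCL 1 (le_refl 1) (by omega) a ha)).mp haS
    simp [Nat.even_iff] at this
  have h3 : M1.rank (S ∪ C 1) = S.card + (C 1).card := by
    rw [M1.rank_of_indep hC1, Finset.card_union_of_disjoint hdisj1]
  have hGcard : G.card ≤ S.card + (C 1).card := by
    have hc1 : G.card ≤ (S \ Ebi m C).card + (Obi m C).card := Finset.card_union_le _ _
    have hc2 : (S \ Ebi m C).card = S.card - (Ebi m C).card :=
      Finset.card_sdiff_of_subset (Ebi_subset_S hCL)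
    have hc3 := Obi_card_le hm hCL hCc
    have hc4 : (Ebi m C).card ≤ S.card := Finset.card_le_card (Ebi_subset_S hCL)
    omega
  omega

end MasterB
section Master2

variable {α : Type*} [DecidableEq α]

/-- Union of the even-indexed layers `C l`, `a ≤ l ≤ b`. -/
noncomputable def EbiR (a b : ℕ) (C : ℕ → Finset α) : Finset α :=
  ((Finset.Icc a b).filter (fun l => Even l)).biUnion C

lemma mem_EbiR {u : α} {a b : ℕ} {C : ℕ → Finset α} :
    u ∈ EbiR a b C ↔ ∃ l, a ≤ l ∧ l ≤ b ∧ Even l ∧ u ∈ C l := by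
  simp only [EbiR, Finset.mem_biUnion, Finset.mem_filter, Finset.mem_Icc]
  constructor
  · rintro ⟨l, ⟨⟨h1, h2⟩, h3⟩, h4⟩; exact ⟨l, h1, h2, h3, h4⟩
  · rintro ⟨l, h1, h2, h3, h4⟩; exact ⟨l, ⟨⟨h1, h2⟩, h3⟩, h4⟩

variable {M1 M2 : FinMatroid α} {S : Finset α} {m dt : ℕ} {C : ℕ → Finset α}

lemma masterM2_spanA (hS2 : M2.Indep S) (hm : Odd m)
    (hdt : IsDistST M1 M2 S dt) (hmdt : m < dt)
    (hCL : ∀ l, 1 ≤ l → l ≤ m → ∀ u ∈ C l, InLayer M1 M2 S u l)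
    (hCc : ∀ l, 1 ≤ l → l + 2 ≤ m → Odd l → (C l).card = (C (l + 1)).card)
    (hCp : ∀ l, 1 ≤ l → l + 2 ≤ m → Odd l → M2.Indep ((S \ C (l + 1)) ∪ C l))
    (K : Finset α) (jK : ℕ)
    (hK : ∀ x ∈ K, ∀ q, PathTo M1 M2 S q → q.getLast? = some x → jK < q.length) :
    ∀ e, 2 ≤ e → e + 1 ≤ m → Even e → e ≤ jK → ∀ u ∈ C e,
      M2.InSpan (((S \ Ebi m C) ∪ Obi m C) \ K) u := by
  classical
  intro e
  induction e using Nat.strong_induction_on with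
  | _ e ih =>
  intro h2e hem heven hjK u hu
  have hmpos : 1 ≤ m := by omega
  have he1 : e - 1 + 1 = e := by omega
  -- basic layer facts
  have hCeLayer : ∀ x ∈ C e, InLayer M1 M2 S x e := hCL e (by omega) (by omega)
  have hCe1Layer : ∀ x ∈ C (e-1), InLayer M1 M2 S x (e-1) := hCL (e-1) (by omega) (by omega)
  have hodd : Odd (e - 1) := by
    rw [Nat.odd_iff]; rw [Nat.even_iff] at heven; omega
  have hCeS : ∀ x ∈ C e, x ∈ S := fun x hx => (layer_parity (hCeLayer x hx)).mpr heven
  have hCe1S : ∀ x ∈ C (e-1), x ∉ S := by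
    intro x hx hxS
    have := (layer_parity (hCe1Layer x hx)).mp hxS
    rw [Nat.even_iff] at this
    rw [Nat.odd_iff] at hodd
    omega
  have hCeK : ∀ x ∈ C e, x ∉ K := by
    intro x hx hxK
    obtain ⟨⟨q, hq, hql, hqlen⟩, _⟩ := hCeLayer x hx
    have := hK x hxK q hq hql
    omega
  have hCe1K : ∀ x ∈ C (e-1), x ∉ K := by
    intro x hx hxK
    obtain ⟨⟨q, hq, hql, hqlen⟩, _⟩ := hCe1Layer x hx
    have := hK x hxK q hq hql
    omega
  -- the sets
  set G : Finset α := (S \ Ebi m C) ∪ Obi m C with hGdef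
  set R' : Finset α := EbiR e m C ∪ (K ∩ S) with hR'def
  set R : Finset α := EbiR (e+1) m C ∪ (K ∩ S) with hRdef
  set W' : Finset α := (S \ R') ∪ C (e-1) with hW'def
  have hCeEbi : ∀ x ∈ C e, x ∈ EbiR e m C := by
    intro x hx; exact mem_EbiR.mpr ⟨e, le_refl e, by omega, heven, hx⟩
  have hCeR : ∀ x ∈ C e, x ∉ R := by
    intro x hx hxR
    rcases Finset.mem_union.mp hxR with h | h
    · obtain ⟨l, h1, h2, h3, h4⟩ := mem_EbiR.mp h
      have := layer_unique (hCL l (by omega) (by omega) x h4) (hCeLayer x hx)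
      omega
    · exact hCeK x hx (Finset.mem_inter.mp h).1
  have hCeSR : ∀ x ∈ C e, x ∈ S \ R := fun x hx =>
    Finset.mem_sdiff.mpr ⟨hCeS x hx, hCeR x hx⟩
  have hsplit : ∀ x, x ∈ S \ R' ↔ (x ∈ S \ R ∧ x ∉ C e) := by
    intro x
    simp only [Finset.mem_sdiff, hR'def, hRdef, Finset.mem_union, Finset.mem_inter]
    constructor
    · rintro ⟨hxS, hx⟩
      push_neg at hx
      refine ⟨⟨hxS, ?_⟩, fun hc => hx.1 (hCeEbi x hc)⟩
      push_neg
      refine ⟨fun hc => ?_, hx.2⟩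
      obtain ⟨l, h1, h2, h3, h4⟩ := mem_EbiR.mp hc
      exact hx.1 (mem_EbiR.mpr ⟨l, by omega, h2, h3, h4⟩)
    · rintro ⟨⟨hxS, hx⟩, hxCe⟩
      push_neg at hx
      refine ⟨hxS, ?_⟩
      push_neg
      refine ⟨fun hc => ?_, hx.2⟩
      obtain ⟨l, h1, h2, h3, h4⟩ := mem_EbiR.mp hc
      rcases Nat.lt_or_ge e l with hl | hl
      · exact hx.1 (mem_EbiR.mpr ⟨l, by omega, h2, h3, h4⟩)
      · have : l = e := by omega
        exact hxCe (this ▸ h4)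
  have hSR' : S \ R' = (S \ R) \ C e := by
    ext x; rw [hsplit x]; simp [Finset.mem_sdiff]
  -- W' is independent
  have hW'indep : M2.Indep W' := by
    have hCp' := hCp (e-1) (by omega) (by omega) hodd
    rw [he1] at hCp'
    apply M2.indep_mono hCp'
    intro x hx
    rcases Finset.mem_union.mp hx with h | h
    · have := (hsplit x).mp h
      exact Finset.mem_union_left _ (Finset.mem_sdiff.mpr ⟨(Finset.mem_sdiff.mp this.1).1, this.2⟩)
    · exact Finset.mem_union_right _ h
  -- rank of W' ∪ C e
  have hWCe : W' ∪ C e = (S \ R) ∪ C (e-1) := by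
    rw [hW'def, hSR']
    ext x
    simp only [Finset.mem_union, Finset.mem_sdiff]
    constructor
    · rintro ((⟨⟨h1, h2⟩, h3⟩ | h) | h)
      · exact Or.inl ⟨h1, h2⟩
      · exact Or.inr h
      · exact Or.inl (Finset.mem_sdiff.mp (hCeSR x h))
    · rintro (⟨h1, h2⟩ | h)
      · by_cases hc : x ∈ C e
        · exact Or.inr hc
        · exact Or.inl (Or.inl ⟨⟨h1, h2⟩, hc⟩)
      · exact Or.inl (Or.inr h)
  have hSRindep : M2.Indep (S \ R) := M2.indep_mono hS2 Finset.sdiff_subset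
  have hspanCe1 : ∀ y ∈ C (e-1), M2.InSpan (S \ R) y := by
    intro y hy
    have hlt2 : (e - 1) + 1 < dt := by rw [he1]; omega
    apply span2 hS2 hdt (hCe1Layer y hy) hodd hlt2
    intro x hxR q hq hql
    rcases Finset.mem_union.mp hxR with h | h
    · obtain ⟨l, h1, h2, h3, h4⟩ := mem_EbiR.mp h
      have := (hCL l (by omega) (by omega) x h4).2 q hq hql
      omega
    · have := hK x (Finset.mem_inter.mp h).1 q hq hql
      omega
  have hrank1 : M2.rank (W' ∪ C e) = (S \ R).card := by
    rw [hWCe, M2.rank_union_eq_of_inSpan hspanCe1, M2.rank_of_indep hSRindep]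
  -- cardinality of W'
  have hdisjW' : Disjoint (S \ R') (C (e-1)) := by
    rw [Finset.disjoint_left]
    intro x hx hxC
    exact hCe1S x hxC (Finset.mem_sdiff.mp hx).1
  have hCeSub : C e ⊆ S \ R := fun x hx => hCeSR x hx
  have hW'card : W'.card = (S \ R).card := by
    have hcc := hCc (e-1) (by omega) (by omega) hodd
    rw [he1] at hcc
    rw [hW'def, Finset.card_union_of_disjoint hdisjW', hSR',
      Finset.card_sdiff_of_subset hCeSub, ← hcc]
    have := Finset.card_le_card hCeSub
    omega
  -- u is spanned by W'
  have hspanW'u : M2.InSpan W' u := by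
    have h1 : M2.rank (insert u W') ≤ M2.rank (W' ∪ C e) := by
      apply M2.rank_mono
      intro x hx
      rcases Finset.mem_insert.mp hx with rfl | hx
      · exact Finset.mem_union_right _ hu
      · exact Finset.mem_union_left _ hx
    have h2 : M2.rank W' = W'.card := M2.rank_of_indep hW'indep
    have h3 := M2.rank_le_rank_insert W' u
    unfold FinMatroid.InSpan
    omega
  -- every element of W' is spanned by G \ K
  have hW'span : ∀ x ∈ W', M2.InSpan (G \ K) x := by
    intro x hx
    rcases Finset.mem_union.mp hx with h | h
    · have hxS := (Finset.mem_sdiff.mp h).1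
      have hxR' := (Finset.mem_sdiff.mp h).2
      have hxK : x ∉ K := by
        intro hc
        exact hxR' (Finset.mem_union_right _ (Finset.mem_inter.mpr ⟨hc, hxS⟩))
      by_cases hxE : x ∈ Ebi m C
      · obtain ⟨l, h1, h2, h3, h4⟩ := mem_Ebi.mp hxE
        have hge : ¬ e ≤ l := by
          intro hc
          exact hxR' (Finset.mem_union_left _ (mem_EbiR.mpr ⟨l, hc, h2, h3, h4⟩))
        have hlm : l + 1 ≤ m := by
          rcases hm with ⟨a, ha⟩
          rcases h3 with ⟨b, hb⟩
          omega
        have h32 : l % 2 = 0 := Nat.even_iff.mp h3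
        exact ih l (by omega) (by omega) (by omega) h3 (by omega) x h4
      · apply M2.inSpan_of_mem
        exact Finset.mem_sdiff.mpr ⟨Finset.mem_union_left _ (Finset.mem_sdiff.mpr ⟨hxS, hxE⟩), hxK⟩
    · apply M2.inSpan_of_mem
      refine Finset.mem_sdiff.mpr ⟨Finset.mem_union_right _ ?_, hCe1K x h⟩
      exact mem_Obi.mpr ⟨e-1, by omega, by omega, hodd, h⟩
  exact M2.inSpan_trans hW'span hspanW'u

lemma Obi_card_le' (hm : Odd m)
    (hCL : ∀ l, 1 ≤ l → l ≤ m → ∀ u ∈ C l, InLayer M1 M2 S u l)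
    (hCc : ∀ l, 1 ≤ l → l + 2 ≤ m → Odd l → (C l).card = (C (l + 1)).card) :
    (Obi m C).card ≤ (C m).card + (Ebi m C).card := by
  have hm2 : m % 2 = 1 := Nat.odd_iff.mp hm
  have h1 : (Obi m C).card ≤ ∑ l ∈ (Finset.Icc 1 m).filter (fun l => Odd l), (C l).card :=
    Finset.card_biUnion_le
  have hOd_eq : (Finset.Icc 1 m).filter (fun l => Odd l) =
      insert m (((Finset.Icc 1 m).filter (fun l => Even l)).image (· - 1)) := by
    ext l
    simp only [Finset.mem_filter, Finset.mem_Icc, Finset.mem_insert, Finset.mem_image,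
      Nat.odd_iff, Nat.even_iff]
    constructor
    · rintro ⟨⟨h1, h2⟩, h3⟩
      by_cases hl : l = m
      · exact Or.inl hl
      · exact Or.inr ⟨l + 1, ⟨⟨by omega, by omega⟩, by omega⟩, by omega⟩
    · rintro (rfl | ⟨b, ⟨⟨hb1, hb2⟩, hb3⟩, rfl⟩) <;> omega
  rw [hOd_eq] at h1
  have hnotmem : m ∉ ((Finset.Icc 1 m).filter (fun l => Even l)).image (· - 1) := by
    simp only [Finset.mem_image, Finset.mem_filter, Finset.mem_Icc, Nat.even_iff]
    rintro ⟨b, ⟨⟨hb1, hb2⟩, hb3⟩, hb4⟩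
    omega
  have hinj : ∀ x ∈ (Finset.Icc 1 m).filter (fun l => Even l),
      ∀ y ∈ (Finset.Icc 1 m).filter (fun l => Even l), x - 1 = y - 1 → x = y := by
    intro x hx y hy hxy
    simp only [Finset.mem_filter, Finset.mem_Icc] at hx hy
    omega
  rw [Finset.sum_insert hnotmem, Finset.sum_image hinj] at h1
  have h2 : ∑ l ∈ (Finset.Icc 1 m).filter (fun l => Even l), (C (l - 1)).card
      = ∑ l ∈ (Finset.Icc 1 m).filter (fun l => Even l), (C l).card := by
    apply Finset.sum_congr rfl
    intro l hl
    simp only [Finset.mem_filter, Finset.mem_Icc, Nat.even_iff] at hl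
    have hcc := hCc (l-1) (by omega) (by omega) (by rw [Nat.odd_iff]; omega)
    have hn : l - 1 + 1 = l := by omega
    rw [hn] at hcc
    rw [hcc]
  rw [h2] at h1
  rw [Ebi_card hCL]
  omega

lemma masterM2_indep (hS2 : M2.Indep S) (hm : Odd m)
    (hdt : IsDistST M1 M2 S dt) (hmdt : m < dt)
    (hCL : ∀ l, 1 ≤ l → l ≤ m → ∀ u ∈ C l, InLayer M1 M2 S u l)
    (hCc : ∀ l, 1 ≤ l → l + 2 ≤ m → Odd l → (C l).card = (C (l + 1)).card)
    (hCp : ∀ l, 1 ≤ l → l + 2 ≤ m → Odd l → M2.Indep ((S \ C (l + 1)) ∪ C l))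
    (hCm : M2.Indep (S ∪ C m)) :
    M2.Indep ((S \ Ebi m C) ∪ Obi m C) := by
  classical
  have hm2 : m % 2 = 1 := Nat.odd_iff.mp hm
  set G : Finset α := (S \ Ebi m C) ∪ Obi m C with hGdef
  have hspan : ∀ x ∈ S ∪ C m, M2.InSpan G x := by
    intro x hx
    rcases Finset.mem_union.mp hx with hxS | hxCm
    · by_cases hxE : x ∈ Ebi m C
      · obtain ⟨l, h1, h2, h3, h4⟩ := mem_Ebi.mp hxE
        have h32 : l % 2 = 0 := Nat.even_iff.mp h3
        have := masterM2_spanA hS2 hm hdt hmdt hCL hCc hCp ∅ m (by simp) l (by omega)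
          (by omega) h3 (by omega) x h4
        rwa [Finset.sdiff_empty] at this
      · exact M2.inSpan_of_mem (Finset.mem_union_left _ (Finset.mem_sdiff.mpr ⟨hxS, hxE⟩))
    · exact M2.inSpan_of_mem (Finset.mem_union_right _
        (mem_Obi.mpr ⟨m, by omega, le_refl m, hm, hxCm⟩))
  apply M2.indep_of_card_le_rank
  have h1 : M2.rank (G ∪ (S ∪ C m)) = M2.rank G := M2.rank_union_eq_of_inSpan hspan
  have h2 : M2.rank (S ∪ C m) ≤ M2.rank G := by
    rw [← h1]; exact M2.rank_mono Finset.subset_union_right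
  have hdisj1 : Disjoint S (C m) := by
    rw [Finset.disjoint_right]
    intro a ha haS
    have := (layer_parity (hCL m (by omega) (le_refl m) a ha)).mp haS
    rw [Nat.even_iff] at this
    omega
  have h3 : M2.rank (S ∪ C m) = S.card + (C m).card := by
    rw [M2.rank_of_indep hCm, Finset.card_union_of_disjoint hdisj1]
  have hGcard : G.card ≤ S.card + (C m).card := by
    have hc1 : G.card ≤ (S \ Ebi m C).card + (Obi m C).card := Finset.card_union_le _ _
    have hc2 : (S \ Ebi m C).card = S.card - (Ebi m C).card :=
      Finset.card_sdiff_of_subset (Ebi_subset_S hCL)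
    have hc3 := Obi_card_le' hm hCL hCc
    have hc4 : (Ebi m C).card ≤ S.card := Finset.card_le_card (Ebi_subset_S hCL)
    omega
  omega

end Master2


/-- For augmenting sets `Π ⊆ Π'` in `G(S)`, the componentwise difference
`Π' \ Π` is an augmenting set in `G(S ⊕ Π)` (CLSSW, Theorem 33). -/
theorem aug_set_difference (M1 M2 : FinMatroid α) (hE : M1.E = M2.E)
    (S : Finset α) (hS1 : M1.Indep S) (hS2 : M2.Indep S)
    (dt : ℕ) (hdt : IsDistST M1 M2 S dt)
    (D D' : ℕ → Finset α)
    (hD : IsAugmentingSet M1 M2 S dt D) (hD' : IsAugmentingSet M1 M2 S dt D')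
    (hsub : ∀ l, D l ⊆ D' l) :
    IsAugmentingSet M1 M2 (symmDiff S (AugUnion dt D)) dt
      (fun l => D' l \ D l) := by
  classical
  obtain ⟨hDlay, hDcard, hD1, hDm, hDe, hDo⟩ := hD
  obtain ⟨hD'lay, hD'card, hD'1, hD'm, hD'e, hD'o⟩ := hD'
  set m : ℕ := dt - 1 with hmdef
  -- basic facts about dt and m
  have hdt2 : 2 ≤ dt := by
    obtain ⟨p, ⟨hpPath, hne, _, _⟩, hplen⟩ := hdt.1
    have : 1 ≤ p.length := by
      cases p with
      | nil => exact absurd rfl hne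
      | cons a q => simp
    omega
  have hdtm : dt = m + 1 := by omega
  have hmpos : 1 ≤ m := by omega
  have hOddm : Odd m := by
    obtain ⟨p, ⟨hpPath, hne, hlastS, hlast2⟩, hplen⟩ := hdt.1
    have hpar := pathTo_parity hpPath (List.getLast?_eq_getLast hne)
    have hodd : Odd p.length := by
      rw [Nat.odd_iff]
      rw [← Nat.not_even_iff]
      intro hc
      exact hlastS (hpar.mpr hc)
    have : m = p.length := by omega
    rw [this]; exact hodd
  have hm2 : m % 2 = 1 := Nat.odd_iff.mp hOddm
  -- layer hypotheses in terms of m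
  have hDL : ∀ l, 1 ≤ l → l ≤ m → ∀ u ∈ D l, InLayer M1 M2 S u l :=
    fun l h1 h2 => hDlay l h1 (by omega)
  have hD'L : ∀ l, 1 ≤ l → l ≤ m → ∀ u ∈ D' l, InLayer M1 M2 S u l :=
    fun l h1 h2 => hD'lay l h1 (by omega)
  -- disjointness of layers
  have hadj : ∀ l l', 1 ≤ l → l ≤ m → 1 ≤ l' → l' ≤ m → ∀ x, x ∈ D' l → x ∈ D' l' → l = l' :=
    fun l l' a b c d x hx hx' => layer_unique (hD'L l a b x hx) (hD'L l' c d x hx')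
  have hDhat : ∀ l l', 1 ≤ l → l ≤ m → 1 ≤ l' → l' ≤ m →
      ∀ x, x ∈ D' l \ D l → x ∈ D l' → False := by
    intro l l' a b c d x hx hx'
    have h1 := Finset.mem_sdiff.mp hx
    have := hadj l l' a b c d x h1.1 (hsub l' hx')
    subst this
    exact h1.2 hx'
  have hDhatU : ∀ l, 1 ≤ l → l ≤ m → ∀ x, x ∈ D' l \ D l → x ∉ Ebi m D ∧ x ∉ Obi m D := by
    intro l a b x hx
    constructor
    · intro hc
      obtain ⟨l', c, d, _, h4⟩ := mem_Ebi.mp hc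
      exact hDhat l l' a b c d x hx h4
    · intro hc
      obtain ⟨l', c, d, _, h4⟩ := mem_Obi.mp hc
      exact hDhat l l' a b c d x hx h4
  -- rewrite the symmetric difference
  have hUeq : symmDiff S (AugUnion dt D) = (S \ Ebi m D) ∪ Obi m D := by
    ext x
    rw [Finset.mem_symmDiff]
    simp only [AugUnion, Finset.mem_biUnion, Finset.mem_Icc, Finset.mem_union, Finset.mem_sdiff,
      ← hmdef]
    constructor
    · rintro (⟨hxS, hxU⟩ | ⟨⟨l, ⟨h1, h2⟩, h3⟩, hxS⟩)
      · left
        refine ⟨hxS, fun hc => ?_⟩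
        obtain ⟨l, c, d, _, h4⟩ := mem_Ebi.mp hc
        exact hxU ⟨l, ⟨c, d⟩, h4⟩
      · right
        have hodd : Odd l := by
          rcases Nat.even_or_odd l with he | ho
          · exact absurd ((layer_parity (hDL l h1 h2 x h3)).mpr he) hxS
          · exact ho
        exact mem_Obi.mpr ⟨l, h1, h2, hodd, h3⟩
    · rintro (⟨hxS, hxE⟩ | hxO)
      · left
        refine ⟨hxS, ?_⟩
        rintro ⟨l, ⟨h1, h2⟩, h3⟩
        have heven : Even l := (layer_parity (hDL l h1 h2 x h3)).mp hxS
        exact hxE (mem_Ebi.mpr ⟨l, h1, h2, heven, h3⟩)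
      · obtain ⟨l, h1, h2, h3, h4⟩ := mem_Obi.mp hxO
        have hxS : x ∉ S := by
          intro hc
          have := (layer_parity (hDL l h1 h2 x h4)).mp hc
          rw [Nat.even_iff] at this; rw [Nat.odd_iff] at h3; omega
        exact Or.inr ⟨⟨l, ⟨h1, h2⟩, h4⟩, hxS⟩
  rw [hUeq]
  set Sh : Finset α := (S \ Ebi m D) ∪ Obi m D with hShdef
  -- membership of D-hat elements in Sh
  have hmemShE : ∀ l, 1 ≤ l → l ≤ m → Even l → ∀ u ∈ D' l \ D l, u ∈ Sh := by
    intro l a b hev u hu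
    have huS : u ∈ S := (layer_parity (hD'L l a b u (Finset.mem_sdiff.mp hu).1)).mpr hev
    exact Finset.mem_union_left _ (Finset.mem_sdiff.mpr ⟨huS, (hDhatU l a b u hu).1⟩)
  have hmemShO : ∀ l, 1 ≤ l → l ≤ m → Odd l → ∀ u ∈ D' l \ D l, u ∉ Sh := by
    intro l a b hod u hu hc
    have huS : u ∉ S := by
      intro hS
      have := (layer_parity (hD'L l a b u (Finset.mem_sdiff.mp hu).1)).mp hS
      rw [Nat.even_iff] at this; rw [Nat.odd_iff] at hod; omega
    rcases Finset.mem_union.mp hc with h | h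
    · exact huS (Finset.mem_sdiff.mp h).1
    · exact (hDhatU l a b u hu).2 h
  -- cards of D and D' layers
  have hDc : ∀ l l', 1 ≤ l → l ≤ m → 1 ≤ l' → l' ≤ m → (D l).card = (D l').card :=
    fun l l' a b c d => hDcard l l' a (by omega) c (by omega)
  have hD'c : ∀ l l', 1 ≤ l → l ≤ m → 1 ≤ l' → l' ≤ m → (D' l).card = (D' l').card :=
    fun l l' a b c d => hD'card l l' a (by omega) c (by omega)
  -- ====== the six independence statements ======
  -- (pure D) Sh is independent in both matroids
  have hSh1 : M1.Indep Sh := by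
    apply masterM1_indep hS1 hOddm hDL
    · intro l a b c; exact hDc l (l+1) (by omega) (by omega) (by omega) b
    · intro l a b c; exact hDe l (by omega) (by omega) c
    · exact hD1
  have hSh2 : M2.Indep Sh := by
    apply masterM2_indep hS2 hOddm hdt (by omega) hDL
    · intro l a b c; exact hDc l (l+1) a (by omega) (by omega) (by omega)
    · intro l a b c; exact hDo l a (by omega) c
    · exact hDm
  -- helper for congruence of Ebi/Obi
  have hEbiCongr : ∀ (C C' : ℕ → Finset α),
      (∀ l, 1 ≤ l → l ≤ m → Even l → C l = C' l) → Ebi m C = Ebi m C' := by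
    intro C C' h
    ext x
    rw [mem_Ebi, mem_Ebi]
    constructor
    · rintro ⟨l, a, b, c, d⟩; exact ⟨l, a, b, c, (h l a b c) ▸ d⟩
    · rintro ⟨l, a, b, c, d⟩; exact ⟨l, a, b, c, (h l a b c) ▸ d⟩
  have hObiCongr : ∀ (C C' : ℕ → Finset α),
      (∀ l, 1 ≤ l → l ≤ m → Odd l → C l = C' l) → Obi m C = Obi m C' := by
    intro C C' h
    ext x
    rw [mem_Obi, mem_Obi]
    constructor
    · rintro ⟨l, a, b, c, d⟩; exact ⟨l, a, b, c, (h l a b c) ▸ d⟩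
    · rintro ⟨l, a, b, c, d⟩; exact ⟨l, a, b, c, (h l a b c) ▸ d⟩
  have hEbiUpd : ∀ (C : ℕ → Finset α) l0, 1 ≤ l0 → l0 ≤ m → Even l0 → C l0 = D' l0 →
      (∀ l, 1 ≤ l → l ≤ m → Even l → l ≠ l0 → C l = D l) →
      Ebi m C = Ebi m D ∪ (D' l0 \ D l0) := by
    intro C l0 a0 b0 c0 hCl0 hother
    ext x
    rw [Finset.mem_union, mem_Ebi, mem_Ebi]
    constructor
    · rintro ⟨l, a, b, c, d⟩
      by_cases hl : l = l0
      · subst hl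
        rw [hCl0] at d
        by_cases hx : x ∈ D l
        · exact Or.inl ⟨l, a, b, c, hx⟩
        · exact Or.inr (Finset.mem_sdiff.mpr ⟨d, hx⟩)
      · exact Or.inl ⟨l, a, b, c, (hother l a b c hl) ▸ d⟩
    · rintro (⟨l, a, b, c, d⟩ | hx)
      · by_cases hl : l = l0
        · subst hl
          refine ⟨l, a, b, c, ?_⟩
          rw [hCl0]; exact hsub l d
        · exact ⟨l, a, b, c, by rw [hother l a b c hl]; exact d⟩
      · refine ⟨l0, a0, b0, c0, ?_⟩
        rw [hCl0]; exact (Finset.mem_sdiff.mp hx).1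
  have hObiUpd : ∀ (C : ℕ → Finset α) l0, 1 ≤ l0 → l0 ≤ m → Odd l0 → C l0 = D' l0 →
      (∀ l, 1 ≤ l → l ≤ m → Odd l → l ≠ l0 → C l = D l) →
      Obi m C = Obi m D ∪ (D' l0 \ D l0) := by
    intro C l0 a0 b0 c0 hCl0 hother
    ext x
    rw [Finset.mem_union, mem_Obi, mem_Obi]
    constructor
    · rintro ⟨l, a, b, c, d⟩
      by_cases hl : l = l0
      · subst hl
        rw [hCl0] at d
        by_cases hx : x ∈ D l
        · exact Or.inl ⟨l, a, b, c, hx⟩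
        · exact Or.inr (Finset.mem_sdiff.mpr ⟨d, hx⟩)
      · exact Or.inl ⟨l, a, b, c, (hother l a b c hl) ▸ d⟩
    · rintro (⟨l, a, b, c, d⟩ | hx)
      · by_cases hl : l = l0
        · subst hl
          refine ⟨l, a, b, c, ?_⟩
          rw [hCl0]; exact hsub l d
        · exact ⟨l, a, b, c, by rw [hother l a b c hl]; exact d⟩
      · refine ⟨l0, a0, b0, c0, ?_⟩
        rw [hCl0]; exact (Finset.mem_sdiff.mp hx).1
  -- generic identity for the "pair" targets
  have hid : ∀ (X Y : Finset α), (∀ x ∈ X, x ∉ Obi m D) →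
      (S \ (Ebi m D ∪ X)) ∪ (Obi m D ∪ Y) = (Sh \ X) ∪ Y := by
    intro X Y hXO
    rw [hShdef]
    ext x
    simp only [Finset.mem_union, Finset.mem_sdiff, not_or]
    constructor
    · rintro (⟨h1, h2, h3⟩ | (h | h))
      · exact Or.inl ⟨Or.inl ⟨h1, h2⟩, h3⟩
      · exact Or.inl ⟨Or.inr h, fun hc => hXO x hc h⟩
      · exact Or.inr h
    · rintro (⟨(⟨h1, h2⟩ | h), h3⟩ | h)
      · exact Or.inl ⟨h1, h2, h3⟩
      · exact Or.inr (Or.inl h)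
      · exact Or.inr (Or.inr h)
  -- (C1-primed) : M1.Indep (Sh ∪ (D' 1 \ D 1))
  have hG1 : M1.Indep (Sh ∪ (D' 1 \ D 1)) := by
    set C : ℕ → Finset α := fun l => if l = 1 then D' l else D l with hCdef
    have hCat : ∀ l, l = 1 → C l = D' l := fun l h => if_pos h
    have hCne : ∀ l, l ≠ 1 → C l = D l := fun l h => if_neg h
    have hCL : ∀ l, 1 ≤ l → l ≤ m → ∀ u ∈ C l, InLayer M1 M2 S u l := by
      intro l a b u hu
      by_cases hl : l = 1
      · rw [hCat l hl] at hu; exact hD'L l a b u hu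
      · rw [hCne l hl] at hu; exact hDL l a b u hu
    have hind := masterM1_indep hS1 hOddm hCL ?_ ?_ ?_
    · have he : Ebi m C = Ebi m D := by
        apply hEbiCongr
        intro l a b c
        exact hCne l (by rw [Nat.even_iff] at c; omega)
      have ho : Obi m C = Obi m D ∪ (D' 1 \ D 1) := by
        apply hObiUpd C 1 (le_refl 1) hmpos odd_one (hCat 1 rfl)
        intro l a b c hl
        exact hCne l hl
      rw [he, ho] at hind
      rwa [← Finset.union_assoc] at hind
    · intro l a b c
      have h1 : l ≠ 1 := by rw [Nat.even_iff] at c; omega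
      rw [hCne l h1, hCne (l+1) (by omega)]
      exact hDc l (l+1) (by omega) (by omega) (by omega) b
    · intro l a b c
      have h1 : l ≠ 1 := by rw [Nat.even_iff] at c; omega
      rw [hCne l h1, hCne (l+1) (by omega)]
      exact hDe l (by omega) (by omega) c
    · rw [hCat 1 rfl]
      exact hD'1
  -- (Cm-primed) : M2.Indep (Sh ∪ (D' m \ D m))
  have hGm : M2.Indep (Sh ∪ (D' m \ D m)) := by
    set C : ℕ → Finset α := fun l => if l = m then D' l else D l with hCdef
    have hCat : ∀ l, l = m → C l = D' l := fun l h => if_pos h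
    have hCne : ∀ l, l ≠ m → C l = D l := fun l h => if_neg h
    have hCL : ∀ l, 1 ≤ l → l ≤ m → ∀ u ∈ C l, InLayer M1 M2 S u l := by
      intro l a b u hu
      by_cases hl : l = m
      · rw [hCat l hl] at hu; exact hD'L l a b u hu
      · rw [hCne l hl] at hu; exact hDL l a b u hu
    have hind := masterM2_indep hS2 hOddm hdt (by omega) hCL ?_ ?_ ?_
    · have he : Ebi m C = Ebi m D := by
        apply hEbiCongr
        intro l a b c
        exact hCne l (by rw [Nat.even_iff] at c; omega)
      have ho : Obi m C = Obi m D ∪ (D' m \ D m) := by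
        apply hObiUpd C m hmpos (le_refl m) hOddm (hCat m rfl)
        intro l a b c hl
        exact hCne l hl
      rw [he, ho] at hind
      rwa [← Finset.union_assoc] at hind
    · intro l a b c
      have hc2 : l % 2 = 1 := Nat.odd_iff.mp c
      rw [hCne l (by omega), hCne (l+1) (by omega)]
      exact hDc l (l+1) a (by omega) (by omega) (by omega)
    · intro l a b c
      have hc2 : l % 2 = 1 := Nat.odd_iff.mp c
      rw [hCne l (by omega), hCne (l+1) (by omega)]
      exact hDo l a (by omega) c
    · rw [hCat m rfl]
      exact hD'm
  -- (even pair primed)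
  have hGe : ∀ e, 1 ≤ e → e + 1 ≤ m → Even e →
      M1.Indep ((Sh \ (D' e \ D e)) ∪ (D' (e+1) \ D (e+1))) := by
    intro e he1 hem heven
    have he2 : e % 2 = 0 := Nat.even_iff.mp heven
    set C : ℕ → Finset α := fun l => if l = e ∨ l = e + 1 then D' l else D l with hCdef
    have hCat : ∀ l, (l = e ∨ l = e + 1) → C l = D' l := fun l h => if_pos h
    have hCne : ∀ l, ¬(l = e ∨ l = e + 1) → C l = D l := fun l h => if_neg h
    have hCL : ∀ l, 1 ≤ l → l ≤ m → ∀ u ∈ C l, InLayer M1 M2 S u l := by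
      intro l a b u hu
      by_cases hl : l = e ∨ l = e + 1
      · rw [hCat l hl] at hu; exact hD'L l a b u hu
      · rw [hCne l hl] at hu; exact hDL l a b u hu
    have hind := masterM1_indep hS1 hOddm hCL ?_ ?_ ?_
    · have hee : Ebi m C = Ebi m D ∪ (D' e \ D e) := by
        apply hEbiUpd C e he1 (by omega) heven (hCat e (Or.inl rfl))
        intro l a b c hl
        have hc2 : l % 2 = 0 := Nat.even_iff.mp c
        exact hCne l (by omega)
      have hoo : Obi m C = Obi m D ∪ (D' (e+1) \ D (e+1)) := by
        apply hObiUpd C (e+1) (by omega) (by omega) (by rw [Nat.odd_iff]; omega)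
          (hCat (e+1) (Or.inr rfl))
        intro l a b c hl
        have hc2 : l % 2 = 1 := Nat.odd_iff.mp c
        exact hCne l (by omega)
      rw [hee, hoo] at hind
      rwa [hid (D' e \ D e) (D' (e+1) \ D (e+1))
        (fun x hx => (hDhatU e he1 (by omega) x hx).2)] at hind
    · intro l a b c
      have hc2 : l % 2 = 0 := Nat.even_iff.mp c
      by_cases hl : l = e
      · rw [hCat l (Or.inl hl), hCat (l+1) (Or.inr (by omega))]
        exact hD'c l (l+1) (by omega) (by omega) (by omega) b
      · rw [hCne l (by omega), hCne (l+1) (by omega)]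
        exact hDc l (l+1) (by omega) (by omega) (by omega) b
    · intro l a b c
      have hc2 : l % 2 = 0 := Nat.even_iff.mp c
      by_cases hl : l = e
      · subst hl
        rw [hCat l (Or.inl rfl), hCat (l+1) (Or.inr rfl)]
        exact hD'e l (by omega) (by omega) c
      · rw [hCne l (by omega), hCne (l+1) (by omega)]
        exact hDe l (by omega) (by omega) c
    · rw [hCne 1 (by omega)]
      exact hD1
  -- (odd pair primed)
  have hGo : ∀ o, 1 ≤ o → o + 1 ≤ m → Odd o →
      M2.Indep ((Sh \ (D' (o+1) \ D (o+1))) ∪ (D' o \ D o)) := by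
    intro o ho1 hom hodd
    have ho2 : o % 2 = 1 := Nat.odd_iff.mp hodd
    set C : ℕ → Finset α := fun l => if l = o ∨ l = o + 1 then D' l else D l with hCdef
    have hCat : ∀ l, (l = o ∨ l = o + 1) → C l = D' l := fun l h => if_pos h
    have hCne : ∀ l, ¬(l = o ∨ l = o + 1) → C l = D l := fun l h => if_neg h
    have hCL : ∀ l, 1 ≤ l → l ≤ m → ∀ u ∈ C l, InLayer M1 M2 S u l := by
      intro l a b u hu
      by_cases hl : l = o ∨ l = o + 1
      · rw [hCat l hl] at hu; exact hD'L l a b u hu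
      · rw [hCne l hl] at hu; exact hDL l a b u hu
    have hind := masterM2_indep hS2 hOddm hdt (by omega) hCL ?_ ?_ ?_
    · have hee : Ebi m C = Ebi m D ∪ (D' (o+1) \ D (o+1)) := by
        apply hEbiUpd C (o+1) (by omega) (by omega) (by rw [Nat.even_iff]; omega)
          (hCat (o+1) (Or.inr rfl))
        intro l a b c hl
        have hc2 : l % 2 = 0 := Nat.even_iff.mp c
        exact hCne l (by omega)
      have hoo : Obi m C = Obi m D ∪ (D' o \ D o) := by
        apply hObiUpd C o ho1 (by omega) hodd (hCat o (Or.inl rfl))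
        intro l a b c hl
        have hc2 : l % 2 = 1 := Nat.odd_iff.mp c
        exact hCne l (by omega)
      rw [hee, hoo] at hind
      rwa [hid (D' (o+1) \ D (o+1)) (D' o \ D o)
        (fun x hx => (hDhatU (o+1) (by omega) (by omega) x hx).2)] at hind
    · intro l a b c
      have hc2 : l % 2 = 1 := Nat.odd_iff.mp c
      by_cases hl : l = o
      · rw [hCat l (Or.inl hl), hCat (l+1) (Or.inr (by omega))]
        exact hD'c l (l+1) a (by omega) (by omega) (by omega)
      · rw [hCne l (by omega), hCne (l+1) (by omega)]
        exact hDc l (l+1) a (by omega) (by omega) (by omega)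
    · intro l a b c
      have hc2 : l % 2 = 1 := Nat.odd_iff.mp c
      by_cases hl : l = o
      · subst hl
        rw [hCat l (Or.inl rfl), hCat (l+1) (Or.inr rfl)]
        exact hD'o l a (by omega) c
      · rw [hCne l (by omega), hCne (l+1) (by omega)]
        exact hDo l a (by omega) c
    · rw [hCne m (by omega)]
      exact hDm
  -- ====== span wrappers for the pure family D ======
  have hSpanE1 : ∀ (K : Finset α) (jK : ℕ),
      (∀ x ∈ K, ∃ q, PathTo M1 M2 S q ∧ q.getLast? = some x ∧ q.length ≤ jK) →
      ∀ e u, 1 ≤ e → e ≤ m → Even e → jK < e → u ∈ D e → M1.InSpan (Sh \ K) u := by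
    intro K jK hK e u a b c d hu
    have hc2 : e % 2 = 0 := Nat.even_iff.mp c
    exact masterM1_spanA hS1 hOddm hDL
      (fun l a' b' c' => hDc l (l+1) (by omega) (by omega) (by omega) b')
      (fun l a' b' c' => hDe l (by omega) (by omega) c') K jK hK e (by omega) (by omega) c d u hu
  have hSpanE2 : ∀ (K : Finset α) (jK : ℕ),
      (∀ x ∈ K, ∀ q, PathTo M1 M2 S q → q.getLast? = some x → jK < q.length) →
      ∀ e u, 1 ≤ e → e ≤ m → Even e → e ≤ jK → u ∈ D e → M2.InSpan (Sh \ K) u := by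
    intro K jK hK e u a b c d hu
    have hc2 : e % 2 = 0 := Nat.even_iff.mp c
    exact masterM2_spanA hS2 hOddm hdt (by omega) hDL
      (fun l a' b' c' => hDc l (l+1) a' (by omega) (by omega) (by omega))
      (fun l a' b' c' => hDo l a' (by omega) c') K jK hK e (by omega) (by omega) c d u hu
  -- S is spanned by Sh in both matroids
  have hSspan1 : ∀ s ∈ S, M1.InSpan Sh s := by
    intro s hs
    by_cases hsE : s ∈ Ebi m D
    · obtain ⟨e, a, b, c, d⟩ := mem_Ebi.mp hsE
      have := hSpanE1 ∅ 0 (by simp) e s a b c (by omega) d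
      rwa [Finset.sdiff_empty] at this
    · exact M1.inSpan_of_mem (Finset.mem_union_left _ (Finset.mem_sdiff.mpr ⟨hs, hsE⟩))
  -- head lemma : insertable into Sh means at distance 1 in the old graph
  have hHead : ∀ x, x ∉ Sh → M1.Indep (insert x Sh) → (x ∉ S ∧ M1.Indep (insert x S)) := by
    intro x hxSh hxind
    have hxS : x ∉ S := by
      intro hxS
      exact M1.not_indep_insert_of_inSpan hSh1 hxSh (hSspan1 x hxS) hxind
    refine ⟨hxS, ?_⟩
    by_contra hdep
    have hsp : M1.InSpan S x := M1.inSpan_of_dep hS1 hdep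
    have : M1.InSpan Sh x := M1.inSpan_trans hSspan1 hsp
    exact M1.not_indep_insert_of_inSpan hSh1 hxSh this hxind
  -- step lemma for M1-type edges of the new exchange graph
  have hStep1 : ∀ v w (j : ℕ), v ∈ Sh → w ∉ Sh → M1.Indep (insert w (Sh.erase v)) →
      (∃ q, PathTo M1 M2 S q ∧ q.getLast? = some v ∧ q.length ≤ j) →
      ∃ r, PathTo M1 M2 S r ∧ r.getLast? = some w ∧ r.length ≤ j + 1 := by
    intro v w j hv hw hind hvj
    by_contra hcon
    push_neg at hcon
    have hKv : ∀ x ∈ ({v} : Finset α),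
        ∃ q, PathTo M1 M2 S q ∧ q.getLast? = some x ∧ q.length ≤ j := by
      intro x hx
      rw [Finset.mem_singleton] at hx; subst hx; exact hvj
    have herase : Sh \ {v} = Sh.erase v := (Finset.erase_eq _ _).symm
    have hShv : M1.Indep (Sh.erase v) := M1.indep_mono hSh1 (Finset.erase_subset v Sh)
    have hwSh : w ∉ Sh.erase v := fun hc => hw (Finset.mem_of_mem_erase hc)
    by_cases hwS : w ∈ S
    · have hwE : w ∈ Ebi m D := by
        by_contra hc
        exact hw (Finset.mem_union_left _ (Finset.mem_sdiff.mpr ⟨hwS, hc⟩))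
      obtain ⟨e, a, b, c, d⟩ := mem_Ebi.mp hwE
      obtain ⟨⟨q0, hq0, hq0l, hq0len⟩, _⟩ := hDL e a b w d
      by_cases hej : e ≤ j + 1
      · have := hcon q0 hq0 hq0l
        omega
      · have hsp := hSpanE1 {v} j hKv e w a b c (by omega) d
        rw [herase] at hsp
        exact M1.not_indep_insert_of_inSpan hShv hwSh hsp hind
    · by_cases hwins : M1.Indep (insert w S)
      · have := hcon [w] (pathTo_single hwS hwins) (by simp)
        simp at this
      · set V : Finset α := S.filter
          (fun x => ∃ q, PathTo M1 M2 S q ∧ q.getLast? = some x ∧ q.length ≤ j) with hVdef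
        have hXind : ¬ M1.Indep (insert w (S \ V)) := by
          intro hindX
          rcases FinMatroid.insert_indep_cases hS1 hwS Finset.sdiff_subset hindX with
            h | ⟨x', hx'S, hx'X, hx'ind⟩
          · exact hwins h
          · have hx'V : x' ∈ V := by
              by_contra hc
              exact hx'X (Finset.mem_sdiff.mpr ⟨hx'S, hc⟩)
            obtain ⟨q, hq, hql, hqlen⟩ := (Finset.mem_filter.mp hx'V).2
            have hedge : ExchangeEdge M1 M2 S x' w := edgeM1 hx'S hwS hx'ind
            have := hcon (q ++ [w]) (pathTo_snoc hq hql hedge) (by simp)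
            simp at this
            omega
        have hspw : M1.InSpan (S \ V) w :=
          M1.inSpan_of_dep (M1.indep_mono hS1 Finset.sdiff_subset) hXind
        have hSVspan : ∀ x ∈ S \ V, M1.InSpan (Sh.erase v) x := by
          intro x hx
          obtain ⟨hxS, hxV⟩ := Finset.mem_sdiff.mp hx
          by_cases hxE : x ∈ Ebi m D
          · obtain ⟨e, a, b, c, d⟩ := mem_Ebi.mp hxE
            obtain ⟨⟨q0, hq0, hq0l, hq0len⟩, _⟩ := hDL e a b x d
            have hej : j < e := by
              by_contra hc
              exact hxV (Finset.mem_filter.mpr ⟨hxS, ⟨q0, hq0, hq0l, by omega⟩⟩)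
            have := hSpanE1 {v} j hKv e x a b c hej d
            rwa [herase] at this
          · have hxSh : x ∈ Sh := Finset.mem_union_left _ (Finset.mem_sdiff.mpr ⟨hxS, hxE⟩)
            have hxv : x ≠ v := by
              intro h; subst h
              exact hxV (Finset.mem_filter.mpr ⟨hxS, hvj⟩)
            exact M1.inSpan_of_mem (Finset.mem_erase.mpr ⟨hxv, hxSh⟩)
        have := M1.inSpan_trans hSVspan hspw
        exact M1.not_indep_insert_of_inSpan hShv hwSh this hind
  -- step lemma for M2-type edges of the new exchange graph
  have hStep2 : ∀ a b (j : ℕ), a ∉ Sh → b ∈ Sh → M2.Indep (insert a (Sh.erase b)) →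
      (∃ q, PathTo M1 M2 S q ∧ q.getLast? = some a ∧ q.length ≤ j) →
      (∃ r, PathTo M1 M2 S r ∧ r.getLast? = some b ∧ r.length ≤ j + 1) ∨ m ≤ j := by
    intro a b j ha hb hind haj
    by_cases hesc : m ≤ j
    · exact Or.inr hesc
    left
    by_contra hcon
    push_neg at hcon
    have hKb : ∀ x ∈ ({b} : Finset α), ∀ q, PathTo M1 M2 S q → q.getLast? = some x →
        (j + 1) < q.length := by
      intro x hx q hq hql
      rw [Finset.mem_singleton] at hx; subst hx
      exact hcon q hq hql
    have herase : Sh \ {b} = Sh.erase b := (Finset.erase_eq _ _).symm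
    have hShb : M2.Indep (Sh.erase b) := M2.indep_mono hSh2 (Finset.erase_subset b Sh)
    have haShb : a ∉ Sh.erase b := fun hc => ha (Finset.mem_of_mem_erase hc)
    obtain ⟨qa, hqa, hqal, hqalen⟩ := haj
    by_cases haS : a ∈ S
    · have haE : a ∈ Ebi m D := by
        by_contra hc
        exact ha (Finset.mem_union_left _ (Finset.mem_sdiff.mpr ⟨haS, hc⟩))
      obtain ⟨e, a1, b1, c1, d1⟩ := mem_Ebi.mp haE
      have he_le : e ≤ j := by
        have := (hDL e a1 b1 a d1).2 qa hqa hqal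
        omega
      have hsp := hSpanE2 {b} (j+1) hKb e a a1 b1 c1 (by omega) d1
      rw [herase] at hsp
      exact M2.not_indep_insert_of_inSpan hShb haShb hsp hind
    · by_cases hains : M2.Indep (insert a S)
      · exfalso
        obtain ⟨hne, p1, p2, p3⟩ := hqa
        have hlasta : qa.getLast hne = a := by
          have := List.getLast?_eq_getLast hne
          rw [this] at hqal; injection hqal
        have haug : IsAugSeq M1 M2 S qa :=
          ⟨⟨hne, p1, p2, p3⟩, hne, by rw [hlasta]; exact haS, by rw [hlasta]; exact hains⟩
        have := hdt.2 qa haug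
        omega
      · set V2 : Finset α := S.filter
          (fun x => ∃ q, PathTo M1 M2 S q ∧ q.getLast? = some x ∧ q.length ≤ j + 1) with hV2def
        have hV2ind : ¬ M2.Indep (insert a V2) := by
          intro hindX
          rcases FinMatroid.insert_indep_cases hS2 haS (Finset.filter_subset _ _) hindX with
            h | ⟨x', hx'S, hx'X, hx'ind⟩
          · exact hains h
          · have hedge : ExchangeEdge M1 M2 S a x' := edgeM2 haS hx'S hx'ind
            have hpath := pathTo_snoc hqa hqal hedge
            refine hx'X (Finset.mem_filter.mpr ⟨hx'S, ⟨qa ++ [x'], hpath, by simp, ?_⟩⟩)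
            simp
            omega
        have hspa : M2.InSpan V2 a :=
          M2.inSpan_of_dep (M2.indep_mono hS2 (Finset.filter_subset _ _)) hV2ind
        have hV2span : ∀ x ∈ V2, M2.InSpan (Sh.erase b) x := by
          intro x hx
          have hxmem := Finset.mem_filter.mp hx
          obtain ⟨q, hq, hql, hqlen⟩ := hxmem.2
          have hxS := hxmem.1
          by_cases hxE : x ∈ Ebi m D
          · obtain ⟨e, a1, b1, c1, d1⟩ := mem_Ebi.mp hxE
            have he_le : e ≤ j + 1 := by
              have := (hDL e a1 b1 x d1).2 q hq hql
              omega
            have := hSpanE2 {b} (j+1) hKb e x a1 b1 c1 he_le d1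
            rwa [herase] at this
          · have hxSh : x ∈ Sh := Finset.mem_union_left _ (Finset.mem_sdiff.mpr ⟨hxS, hxE⟩)
            have hxb : x ≠ b := by
              intro h; subst h
              have := hcon q hq hql
              omega
            exact M2.inSpan_of_mem (Finset.mem_erase.mpr ⟨hxb, hxSh⟩)
        have := M2.inSpan_trans hV2span hspa
        exact M2.not_indep_insert_of_inSpan hShb haShb this hind
  -- distance monotonicity
  have hMono : ∀ p, PathTo M1 M2 Sh p → ∀ u, p.getLast? = some u →
      (∃ r, PathTo M1 M2 S r ∧ r.getLast? = some u ∧ r.length ≤ p.length) ∨ m < p.length := by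
    intro p
    induction p using List.reverseRecOn with
    | nil => intro hp u hu; simp at hu
    | append_singleton q b ihq =>
      intro hp u hu
      rw [List.getLast?_concat] at hu
      have hub : b = u := by injection hu
      subst hub
      cases q with
      | nil =>
        obtain ⟨hne, h1, h2, h3⟩ := hp
        simp only [List.nil_append, List.head_cons] at h1 h2
        have hh := hHead b h1 h2
        exact Or.inl ⟨[b], pathTo_single hh.1 hh.2, by simp, by simp⟩
      | cons c q' =>
        have hqne : (c :: q') ≠ [] := by simp
        obtain ⟨hne, h1, h2, h3⟩ := hp
        unfold List.Chain' at h3; rw [List.isChain_append] at h3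
        obtain ⟨h3q, _, h3e⟩ := h3
        have hhead : ((c :: q') ++ [b]).head hne = (c :: q').head hqne :=
          List.head_append_of_ne_nil hqne
        have hq : PathTo M1 M2 Sh (c :: q') :=
          ⟨hqne, by rwa [hhead] at h1, by rwa [hhead] at h2, h3q⟩
        have hql : (c :: q').getLast? = some ((c :: q').getLast hqne) :=
          List.getLast?_eq_getLast hqne
        have hedge : ExchangeEdge M1 M2 Sh ((c :: q').getLast hqne) b :=
          h3e _ hql b rfl
        rcases ihq hq _ hql with ⟨r, hr, hrl, hrlen⟩ | hlong
        · rcases hedge with ⟨hv, hw, hind⟩ | ⟨hv, hw, hind⟩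
          · obtain ⟨r', hr', hr'l, hr'len⟩ :=
              hStep1 _ b r.length hv hw hind ⟨r, hr, hrl, le_refl _⟩
            refine Or.inl ⟨r', hr', hr'l, ?_⟩
            simp only [List.length_append, List.length_cons, List.length_nil] at hrlen ⊢
            omega
          · rcases hStep2 _ b r.length hv hw hind ⟨r, hr, hrl, le_refl _⟩ with
              ⟨r', hr', hr'l, hr'len⟩ | hesc
            · refine Or.inl ⟨r', hr', hr'l, ?_⟩
              simp only [List.length_append, List.length_cons, List.length_nil] at hrlen ⊢
              omega
            · refine Or.inr ?_
              simp only [List.length_append, List.length_cons, List.length_nil] at hrlen ⊢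
              omega
        · refine Or.inr ?_
          simp only [List.length_append, List.length_cons, List.length_nil] at hlong ⊢
          omega
  -- existence of new paths to the elements of the difference augmenting set
  have hEx : ∀ l, 1 ≤ l → l ≤ m → ∀ u ∈ D' l \ D l,
      ∃ p, PathTo M1 M2 Sh p ∧ p.getLast? = some u ∧ p.length = l := by
    intro l
    induction l using Nat.strong_induction_on with
    | _ l ihl =>
    intro hl1 hlm u hu
    rcases Nat.even_or_odd l with hev | hod
    · -- even layer : find an M2-edge from the previous layer
      have hev2 : l % 2 = 0 := Nat.even_iff.mp hev
      have hl2 : 2 ≤ l := by omega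
      have hodd1 : Odd (l - 1) := by rw [Nat.odd_iff]; omega
      have hll : l - 1 + 1 = l := by omega
      have hY := hGo (l-1) (by omega) (by omega) hodd1
      rw [hll] at hY
      have huSh : u ∈ Sh := hmemShE l hl1 hlm hev u hu
      have hcard1 : (D' l \ D l).card = (D' (l-1) \ D (l-1)).card := by
        rw [Finset.card_sdiff_of_subset (hsub l), Finset.card_sdiff_of_subset (hsub (l-1))]
        rw [hDc l (l-1) (by omega) hlm (by omega) (by omega),
          hD'c l (l-1) (by omega) hlm (by omega) (by omega)]
      have hXsub : (D' l \ D l) ⊆ Sh := fun x hx => hmemShE l hl1 hlm hev x hx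
      have hdisj : ∀ x ∈ D' (l-1) \ D (l-1), x ∉ Sh :=
        hmemShO (l-1) (by omega) (by omega) hodd1
      have hdisjY : Disjoint (Sh \ (D' l \ D l)) (D' (l-1) \ D (l-1)) := by
        rw [Finset.disjoint_left]
        intro x hx hc
        exact hdisj x hc (Finset.mem_sdiff.mp hx).1
      have hYc : ((Sh \ (D' l \ D l)) ∪ (D' (l-1) \ D (l-1))).card = Sh.card := by
        rw [Finset.card_union_of_disjoint hdisjY, Finset.card_sdiff_of_subset hXsub, ← hcard1]
        have := Finset.card_le_card hXsub
        omega
      have hZc : (Sh.erase u).card < ((Sh \ (D' l \ D l)) ∪ (D' (l-1) \ D (l-1))).card := by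
        rw [hYc, Finset.card_erase_of_mem huSh]
        have : 1 ≤ Sh.card := Finset.card_pos.mpr ⟨u, huSh⟩
        omega
      obtain ⟨x, hxY, hxZ, hxind⟩ :=
        M2.indep_exchange (M2.indep_mono hSh2 (Finset.erase_subset u Sh)) hY hZc
      have hxD : x ∈ D' (l-1) \ D (l-1) := by
        rcases Finset.mem_union.mp hxY with h | h
        · exfalso
          obtain ⟨hxSh, hxX⟩ := Finset.mem_sdiff.mp h
          have hxu : x ≠ u := fun he => hxX (he ▸ hu)
          exact hxZ (Finset.mem_erase.mpr ⟨hxu, hxSh⟩)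
        · exact h
      obtain ⟨p', hp', hp'l, hp'len⟩ := ihl (l-1) (by omega) (by omega) (by omega) x hxD
      have hedge : ExchangeEdge M1 M2 Sh x u := edgeM2 (hdisj x hxD) huSh hxind
      refine ⟨p' ++ [u], pathTo_snoc hp' hp'l hedge, by simp, ?_⟩
      simp only [List.length_append, List.length_cons, List.length_nil]
      omega
    · -- odd layer
      have hod2 : l % 2 = 1 := Nat.odd_iff.mp hod
      by_cases hl1' : l = 1
      · subst hl1'
        have huSh : u ∉ Sh := hmemShO 1 (le_refl 1) hlm odd_one u hu
        have hins : M1.Indep (insert u Sh) := by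
          apply M1.indep_mono hG1
          intro y hy
          rcases Finset.mem_insert.mp hy with rfl | hy
          · exact Finset.mem_union_right _ hu
          · exact Finset.mem_union_left _ hy
        exact ⟨[u], pathTo_single huSh hins, by simp, by simp⟩
      · have hl3 : 3 ≤ l := by omega
        have hev1 : Even (l-1) := by rw [Nat.even_iff]; omega
        have hll : l - 1 + 1 = l := by omega
        have hY := hGe (l-1) (by omega) (by omega) hev1
        rw [hll] at hY
        have huSh : u ∉ Sh := hmemShO l hl1 hlm hod u hu
        have hI : M1.Indep (insert u (Sh \ (D' (l-1) \ D (l-1)))) := by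
          apply M1.indep_mono hY
          intro y hy
          rcases Finset.mem_insert.mp hy with rfl | hy
          · exact Finset.mem_union_right _ hu
          · exact Finset.mem_union_left _ hy
        rcases FinMatroid.insert_indep_cases hSh1 huSh Finset.sdiff_subset hI with
          h | ⟨u', hu'Sh, hu'X, hu'ind⟩
        · exfalso
          have hh := hHead u huSh h
          have := layer_le_one_of_insertable (hD'L l hl1 hlm u (Finset.mem_sdiff.mp hu).1)
            hh.1 hh.2
          omega
        · have hu'D : u' ∈ D' (l-1) \ D (l-1) := by
            by_contra hc
            exact hu'X (Finset.mem_sdiff.mpr ⟨hu'Sh, hc⟩)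
          obtain ⟨p', hp', hp'l, hp'len⟩ := ihl (l-1) (by omega) (by omega) (by omega) u' hu'D
          have hedge : ExchangeEdge M1 M2 Sh u' u := edgeM1 hu'Sh huSh hu'ind
          refine ⟨p' ++ [u], pathTo_snoc hp' hp'l hedge, by simp, ?_⟩
          simp only [List.length_append, List.length_cons, List.length_nil]
          omega
  -- ====== final assembly ======
  refine ⟨?_, ?_, ?_, ?_, ?_, ?_⟩
  · intro l hl1 hld u hu
    constructor
    · exact hEx l hl1 (by omega) u hu
    · intro p hp hpl
      rcases hMono p hp u hpl with ⟨r, hr, hrl, hrlen⟩ | hlong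
      · have := (hD'L l hl1 (by omega) u (Finset.mem_sdiff.mp hu).1).2 r hr hrl
        omega
      · omega
  · intro l l' a b c d
    simp only []
    rw [Finset.card_sdiff_of_subset (hsub l), Finset.card_sdiff_of_subset (hsub l')]
    rw [hDc l l' a (by omega) c (by omega), hD'c l l' a (by omega) c (by omega)]
  · exact hG1
  · exact hGm
  · intro l a b c
    exact hGe l a (by omega) c
  · intro l a b c
    exact hGo l a (by omega) c
end

section
/- If we repeatedly augment a common independent set along shortest augmenting paths in the exchange graph, then after augmenting along a shortest (s,t)-path in G(S) to obtain S', for every element u with d_{G(S)}(s,u) < d_{G(S)}(s,t) it holds that d_{G(S')}(s,u) ≥ d_{G(S)}(s,u). -/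
open Finset

variable {α : Type*} [DecidableEq α]

open scoped Classical

namespace DistMono

variable {α : Type*} [DecidableEq α]

/-- reachability from the source within `n` interior vertices -/
def Reach (M1 M2 : FinMatroid α) (S : Finset α) (n : ℕ) (w : α) : Prop :=
  ∃ r : List α, PathTo M1 M2 S r ∧ r.getLast? = some w ∧ r.length ≤ n

lemma pathTo_of {M1 M2 : FinMatroid α} {S : Finset α} {q : List α} {a : α}
    (h : q.head? = some a) (ha : a ∉ S) (haI : M1.Indep (insert a S))
    (hc : q.Chain' (ExchangeEdge M1 M2 S)) : PathTo M1 M2 S q := by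
  have hne : q ≠ [] := by rintro rfl; simp at h
  have h2 : q.head hne = a := by
    have := List.head?_eq_head hne (l := q)
    rw [this] at h; exact Option.some_injective _ h
  exact ⟨hne, by rw [h2]; exact ha, by rw [h2]; exact haI, hc⟩

lemma pathTo_head? {M1 M2 : FinMatroid α} {S : Finset α} {q : List α}
    (h : PathTo M1 M2 S q) :
    ∃ a, q.head? = some a ∧ a ∉ S ∧ M1.Indep (insert a S) := by
  obtain ⟨hne, h1, h2, h3⟩ := h
  exact ⟨q.head hne, List.head?_eq_head hne, h1, h2⟩

lemma pathTo_chain {M1 M2 : FinMatroid α} {S : Finset α} {q : List α}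
    (h : PathTo M1 M2 S q) : q.Chain' (ExchangeEdge M1 M2 S) := h.2.2.2

lemma augSeq_of {M1 M2 : FinMatroid α} {S : Finset α} {q : List α} {b : α}
    (hq : PathTo M1 M2 S q) (h : q.getLast? = some b) (hb : b ∉ S)
    (hbI : M2.Indep (insert b S)) : IsAugSeq M1 M2 S q := by
  have hne : q ≠ [] := hq.1
  have h2 : q.getLast hne = b := by
    have := List.getLast?_eq_getLast hne
    rw [this] at h; exact Option.some_injective _ h
  exact ⟨hq, hne, by rw [h2]; exact hb, by rw [h2]; exact hbI⟩

lemma reach_mono {M1 M2 : FinMatroid α} {S : Finset α} {n n' : ℕ} (h : n ≤ n') {w : α}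
    (hw : Reach M1 M2 S n w) : Reach M1 M2 S n' w := by
  obtain ⟨r, h1, h2, h3⟩ := hw; exact ⟨r, h1, h2, h3.trans h⟩

lemma not_reach_zero {M1 M2 : FinMatroid α} {S : Finset α} {w : α} :
    ¬ Reach M1 M2 S 0 w := by
  rintro ⟨r, h1, h2, h3⟩
  have := h1.1
  have : 0 < r.length := List.length_pos_iff.2 this
  omega

lemma reach_one {M1 M2 : FinMatroid α} {S : Finset α} {w : α} (hw : w ∉ S)
    (hI : M1.Indep (insert w S)) : Reach M1 M2 S 1 w :=
  ⟨[w], pathTo_of rfl hw hI (List.isChain_singleton _), rfl, le_refl _⟩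

lemma reach_succ {M1 M2 : FinMatroid α} {S : Finset α} {n : ℕ} {z w : α}
    (h : Reach M1 M2 S n z) (he : ExchangeEdge M1 M2 S z w) :
    Reach M1 M2 S (n + 1) w := by
  obtain ⟨r, h1, h2, h3⟩ := h
  obtain ⟨a, ha, ha2, ha3⟩ := pathTo_head? h1
  refine ⟨r ++ [w], pathTo_of ?_ ha2 ha3 ?_, List.getLast?_concat, by simp; omega⟩
  · rw [List.head?_append_of_ne_nil r h1.1]; exact ha
  · refine List.isChain_append.2 ⟨pathTo_chain h1, List.isChain_singleton _, ?_⟩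
    intro x hx y hy
    rw [h2] at hx
    simp at hx hy
    rw [← hx, ← hy]; exact he

/-- grow an independent set `A ⊆ insert e C` to size `C.card`, leaving a hole in `C`. -/
lemma grow (M : FinMatroid α) {C : Finset α} (hC : M.Indep C) :
    ∀ (n : ℕ) {A : Finset α}, C.card - A.card = n → M.Indep A → ∀ {e}, e ∈ A → e ∉ C →
    A ⊆ insert e C → A.card ≤ C.card →
    ∃ z ∈ C, z ∉ A ∧ M.Indep (insert e (C.erase z)) := by
  intro n
  induction n with
  | zero =>
    intro A h0 hA e heA heC hsub hcard
    have hAC : A.card = C.card := by omega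
    have hsub' : A.erase e ⊆ C := by
      intro a ha
      have h1 := Finset.mem_of_mem_erase ha
      have h2 := Finset.ne_of_mem_erase ha
      rcases Finset.mem_insert.1 (hsub h1) with h | h
      · exact absurd h h2
      · exact h
    have hce : (A.erase e).card = C.card - 1 := by
      rw [Finset.card_erase_of_mem heA]; omega
    have hne : (C \ A).Nonempty := by
      rw [← Finset.card_pos]
      have h1 : (C ∩ A).card ≤ (A.erase e).card := by
        apply Finset.card_le_card
        intro a ha
        have h2 := Finset.mem_inter.1 ha
        refine Finset.mem_erase.2 ⟨?_, h2.2⟩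
        rintro rfl; exact heC h2.1
      have h2 := Finset.card_sdiff_add_card_inter C A
      have hc0 : 0 < C.card := by
        have : 0 < A.card := Finset.card_pos.2 ⟨e, heA⟩
        omega
      omega
    obtain ⟨z, hz⟩ := hne
    have hzC := (Finset.mem_sdiff.1 hz).1
    have hzA := (Finset.mem_sdiff.1 hz).2
    refine ⟨z, hzC, hzA, ?_⟩
    have hsub2 : A ⊆ insert e (C.erase z) := by
      intro a ha
      rcases Finset.mem_insert.1 (hsub ha) with h | h
      · exact h ▸ Finset.mem_insert_self _ _
      · refine Finset.mem_insert_of_mem (Finset.mem_erase.2 ⟨?_, h⟩)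
        rintro rfl; exact hzA ha
    have hcards : (insert e (C.erase z)).card ≤ A.card := by
      rw [Finset.card_insert_of_notMem (fun hh => heC (Finset.mem_of_mem_erase hh)),
        Finset.card_erase_of_mem hzC]
      have : 0 < C.card := Finset.card_pos.2 ⟨z, hzC⟩
      omega
    rw [← Finset.eq_of_subset_of_card_le hsub2 hcards]
    exact hA
  | succ n ih =>
    intro A h0 hA e heA heC hsub hcard
    have hlt : A.card < C.card := by omega
    obtain ⟨x, hxC, hxA, hAx⟩ := M.indep_exchange hA hC hlt
    have hcard' : (insert x A).card = A.card + 1 := Finset.card_insert_of_notMem hxA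
    obtain ⟨z, hzC, hzA, hI⟩ := ih (A := insert x A) (by omega) hAx
      (Finset.mem_insert_of_mem heA) heC
      (by
        intro a ha
        rcases Finset.mem_insert.1 ha with h | h
        · exact h ▸ Finset.mem_insert_of_mem hxC
        · exact hsub h)
      (by omega)
    exact ⟨z, hzC, fun hz => hzA (Finset.mem_insert_of_mem hz), hI⟩

/-- key rank bound: if every element of `I` outside `F` is spanned by `F` relative to
the independent set `C`, then `I.card ≤ F.card`. -/
lemma rank_gen (M : FinMatroid α) {C F I : Finset α} (hC : M.Indep C) (hF : F ⊆ C)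
    (hI : M.Indep I)
    (hsub : ∀ e ∈ I, e ∉ F → e ∉ C ∧ ¬ M.Indep (insert e C) ∧
      ∀ z ∈ C, z ∉ F → ¬ M.Indep (insert e (C.erase z))) :
    I.card ≤ F.card := by
  by_contra hcon
  push_neg at hcon
  have hFI : M.Indep F := M.indep_mono hC hF
  obtain ⟨e, heI, heF, heIndep⟩ := M.indep_exchange hFI hI hcon
  obtain ⟨heC, hnotins, hhole⟩ := hsub e heI heF
  rcases eq_or_lt_of_le (Finset.card_le_card hF) with heq | hlt
  · have : F = C := Finset.eq_of_subset_of_card_le hF (le_of_eq heq.symm)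
    rw [this] at heIndep
    exact hnotins heIndep
  · obtain ⟨z, hzC, hzA, hIz⟩ := grow M hC (C.card - (insert e F).card) rfl heIndep
      (Finset.mem_insert_self _ _) heC
      (by
        intro a ha
        rcases Finset.mem_insert.1 ha with h | h
        · exact h ▸ Finset.mem_insert_self _ _
        · exact Finset.mem_insert_of_mem (hF h))
      (by rw [Finset.card_insert_of_notMem (fun h => heF h)]; omega)
    exact hhole z hzC (fun h => hzA (Finset.mem_insert_of_mem h)) hIz

end DistMono
namespace DistMono

variable {α : Type*} [DecidableEq α]

/-- from any chain one can extract a nodup chain with the same endpoints -/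
lemma chain_dedup {R : α → α → Prop} :
    ∀ (n : ℕ) (l : List α), l.length ≤ n → l ≠ [] → l.Chain' R →
    ∃ l' : List α, l' ≠ [] ∧ l'.Nodup ∧ l'.Chain' R ∧ l'.head? = l.head? ∧
      l'.getLast? = l.getLast? ∧ l'.length ≤ l.length ∧ ∀ a ∈ l', a ∈ l := by
  intro n
  induction n with
  | zero =>
    intro l h0 hne _
    exfalso
    have := List.eq_nil_of_length_eq_zero (by omega : l.length = 0)
    exact hne this
  | succ n ih =>
    intro l hlen hne hc
    match l, hne with
    | a :: t, _ =>
      by_cases hat : a ∈ t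
      · obtain ⟨t₁, t₂, rfl⟩ := List.append_of_mem hat
        have hsplit : a :: (t₁ ++ a :: t₂) = (a :: t₁) ++ (a :: t₂) := by simp
        have hc2 : (a :: t₂).Chain' R := by
          rw [hsplit] at hc
          exact (List.isChain_append.1 hc).2.1
        have hlen2 : (a :: t₂).length ≤ n := by
          simp at hlen ⊢; omega
        obtain ⟨l', h1, h2, h3, h4, h5, h6, h7⟩ := ih (a :: t₂) hlen2 (by simp) hc2
        refine ⟨l', h1, h2, h3, by rw [h4]; simp, ?_, ?_, ?_⟩
        · rw [h5, hsplit, List.getLast?_append_of_ne_nil _ (by simp)]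
        · simp at h6 ⊢; omega
        · intro b hb
          have := h7 b hb
          simp at this ⊢
          tauto
      · rcases eq_or_ne t [] with rfl | htne
        · exact ⟨[a], by simp, by simp, List.isChain_singleton _, rfl, rfl, le_refl _, by simp⟩
        · have hc2 : t.Chain' R := hc.tail
          have hlen2 : t.length ≤ n := by simp at hlen; omega
          obtain ⟨l', h1, h2, h3, h4, h5, h6, h7⟩ := ih t hlen2 htne hc2
          have hl'ne : l' ≠ [] := h1
          refine ⟨a :: l', by simp, ?_, ?_, by simp, ?_, by simp at h6 ⊢; omega, ?_⟩
          · exact List.nodup_cons.2 ⟨fun h => hat (h7 a h), h2⟩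
          · refine List.isChain_cons.2 ⟨?_, h3⟩
            intro y hy
            rw [h4] at hy
            have := List.isChain_cons.1 hc
            exact this.1 y hy
          · have e1 : (a :: l').getLast? = l'.getLast? := by
              rw [show a :: l' = [a] ++ l' from rfl, List.getLast?_append_of_ne_nil _ h1]
            have e2 : (a :: t).getLast? = t.getLast? := by
              rw [show a :: t = [a] ++ t from rfl, List.getLast?_append_of_ne_nil _ htne]
            rw [e1, e2, h5]
          · intro b hb
            rcases List.mem_cons.1 hb with rfl | h
            · simp
            · simp [h7 b h]
end DistMono
namespace DistMono

variable {α : Type*} [DecidableEq α]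
variable {M1 M2 : FinMatroid α} {S : Finset α} {p : List α} {dt : ℕ}

lemma augPath_pathTo (hp : IsAugPath M1 M2 S p) : PathTo M1 M2 S p := by
  obtain ⟨hne, _, _, h1, h2, _, _, hc⟩ := hp; exact ⟨hne, h1, h2, hc⟩

lemma augPath_augSeq (hp : IsAugPath M1 M2 S p) : IsAugSeq M1 M2 S p := by
  obtain ⟨hne, _, _, h1, h2, h3, h4, hc⟩ := hp; exact ⟨⟨hne, h1, h2, hc⟩, hne, h3, h4⟩

lemma pathTo_mem_ground {q : List α} (hS1 : M1.Indep S) (hq : PathTo M1 M2 S q) :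
    ∀ a ∈ q, a ∈ M1.E := by
  intro a ha
  obtain ⟨⟨j, hj⟩, rfl⟩ := List.mem_iff_get.1 ha
  match j, hj with
  | 0, hj =>
    rw [List.get_mk_zero]
    exact M1.indep_subset_ground hq.2.2.1 (Finset.mem_insert_self _ _)
  | (j+1), hj =>
    have hedge := List.isChain_iff_getElem.1 (pathTo_chain hq) j (by omega)
    rcases hedge with ⟨_, _, hInd⟩ | ⟨_, hvS, _⟩
    · exact M1.indep_subset_ground hInd (Finset.mem_insert_self _ _)
    · exact M1.indep_subset_ground hS1 hvS

lemma dt_eq (hS1 : M1.Indep S) (hp : IsAugPath M1 M2 S p)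
    (hshort : ∀ q : List α, IsAugPath M1 M2 S q → p.length ≤ q.length)
    (hdt : IsDistST M1 M2 S dt) : dt = p.length + 1 := by
  have h1 : dt ≤ p.length + 1 := hdt.2 p (augPath_augSeq hp)
  obtain ⟨w, hw, hwlen⟩ := hdt.1
  obtain ⟨hq, hne2, hlast, hlastI⟩ := hw
  obtain ⟨l', k1, k2, k3, k4, k5, k6, k7⟩ :=
    chain_dedup w.length w (le_refl _) hq.1 (pathTo_chain hq)
  obtain ⟨a, ha, ha2, ha3⟩ := pathTo_head? hq
  have hq' : PathTo M1 M2 S l' := pathTo_of (by rw [k4]; exact ha) ha2 ha3 k3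
  obtain ⟨hne', A1, A2, A3⟩ := hq'
  have hlast' : l'.getLast k1 = w.getLast hne2 := by
    have e1 := List.getLast?_eq_getLast k1
    have e2 := List.getLast?_eq_getLast hne2
    rw [e1, e2] at k5
    exact Option.some_injective _ k5
  have haug : IsAugPath M1 M2 S l' := by
    refine ⟨k1, k2, ?_, A1, A2, ?_, ?_, k3⟩
    · intro b hb; exact pathTo_mem_ground hS1 hq b (k7 b hb)
    · rw [hlast']; exact hlast
    · rw [hlast']; exact hlastI
  have := hshort l' haug
  omega

lemma get_mem_iff (hp : IsAugPath M1 M2 S p) :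
    ∀ (j : ℕ) (hj : j < p.length), (p.get ⟨j, hj⟩ ∈ S ↔ Odd j) := by
  obtain ⟨hne, hnd, hg, hh1, hh2, hl1, hl2, hc⟩ := hp
  intro j
  induction j with
  | zero =>
    intro hj
    rw [List.get_mk_zero]
    constructor
    · intro h; exact absurd h hh1
    · intro h; exact absurd h (by simp [Nat.odd_iff])
  | succ j ih =>
    intro hj
    have hj' : j < p.length := by omega
    have hedge := List.isChain_iff_getElem.1 hc j (by omega)
    have ihj := ih hj'
    rcases hedge with ⟨h1, h2, _⟩ | ⟨h1, h2, _⟩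
    · have hoj : Odd j := ihj.1 h1
      constructor
      · intro h; exact absurd h h2
      · intro h
        exfalso
        obtain ⟨c, hc1⟩ := hoj; obtain ⟨c', hc2⟩ := h
        omega
    · have hoj : ¬ Odd j := fun h => h1 (ihj.2 h)
      constructor
      · intro _
        rcases Nat.even_or_odd j with he | ho
        · exact he.add_one
        · exact absurd ho hoj
      · intro _; exact h2

lemma reach_get (hp : IsAugPath M1 M2 S p) :
    ∀ (j : ℕ) (hj : j < p.length), Reach M1 M2 S (j + 1) (p.get ⟨j, hj⟩) := by
  obtain ⟨hne, hnd, hg, hh1, hh2, hl1, hl2, hc⟩ := hp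
  intro j
  induction j with
  | zero =>
    intro hj
    rw [List.get_mk_zero]
    exact reach_one hh1 hh2
  | succ j ih =>
    intro hj
    exact reach_succ (ih (by omega)) (List.isChain_iff_getElem.1 hc j (by omega))

lemma not_reach_get (hp : IsAugPath M1 M2 S p) (hdt : IsDistST M1 M2 S dt)
    (hdtm : dt = p.length + 1) :
    ∀ (j : ℕ) (hj : j < p.length), ¬ Reach M1 M2 S j (p.get ⟨j, hj⟩) := by
  intro j hj hreach
  obtain ⟨hne, hnd, hg, hh1, hh2, hl1, hl2, hc⟩ := hp
  obtain ⟨r, hr, hrl, hrlen⟩ := hreach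
  have hchain : (r ++ p.drop (j+1)).Chain' (ExchangeEdge M1 M2 S) := by
    refine List.isChain_append.2 ⟨pathTo_chain hr, hc.drop _, ?_⟩
    intro b hb c hc2
    rw [hrl] at hb
    simp only [Option.mem_def, Option.some_inj] at hb
    rw [List.head?_drop] at hc2
    have hjj : j + 1 < p.length := by
      by_contra hcon
      rw [List.getElem?_eq_none (by omega)] at hc2
      simp at hc2
    have hcc : c = p.get ⟨j+1, hjj⟩ := by
      rw [List.getElem?_eq_getElem hjj] at hc2
      simp only [Option.mem_def, Option.some_inj] at hc2
      rw [← hc2]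
      simp [List.get_eq_getElem]
    rw [← hb, hcc]
    exact List.isChain_iff_getElem.1 hc j (by omega)
  obtain ⟨a, ha, ha2, ha3⟩ := pathTo_head? hr
  have hpath : PathTo M1 M2 S (r ++ p.drop (j+1)) :=
    pathTo_of (by rw [List.head?_append_of_ne_nil r hr.1]; exact ha) ha2 ha3 hchain
  have hlastq : (r ++ p.drop (j+1)).getLast? = some (p.getLast hne) := by
    by_cases hjj : j + 1 < p.length
    · have hdropne : p.drop (j+1) ≠ [] := by
        have : (p.drop (j+1)).length = p.length - (j+1) := List.length_drop
        intro hcon; rw [hcon] at this; simp at this; omega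
      rw [List.getLast?_append_of_ne_nil _ hdropne]
      have e1 : p.getLast? = (p.drop (j+1)).getLast? := by
        conv_lhs => rw [← List.take_append_drop (j+1) p]
        rw [List.getLast?_append_of_ne_nil _ hdropne]
      rw [← e1]
      exact (List.getLast?_eq_getLast hne).symm ▸ rfl
    · have hdrop : p.drop (j+1) = [] := by
        apply List.eq_nil_of_length_eq_zero
        rw [List.length_drop]; omega
      rw [hdrop, List.append_nil, hrl]
      congr 1
      rw [List.getLast_eq_getElem]
      simp only [List.get_eq_getElem]
      congr 1
      omega
  have haug : IsAugSeq M1 M2 S (r ++ p.drop (j+1)) :=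
    augSeq_of hpath hlastq hl1 hl2
  have hle := hdt.2 _ haug
  have hlq : (r ++ p.drop (j+1)).length = r.length + (p.length - (j+1)) := by
    simp [List.length_drop]
  omega

lemma noSink (hdt : IsDistST M1 M2 S dt) {w : α} {n : ℕ} (hw : w ∉ S)
    (hr : Reach M1 M2 S n w) (hn : n + 1 < dt) : ¬ M2.Indep (insert w S) := by
  intro hind
  obtain ⟨r, h1, h2, h3⟩ := hr
  have := hdt.2 r (augSeq_of h1 h2 hw hind)
  omega

end DistMono
namespace DistMono

variable {α : Type*} [DecidableEq α]
variable {M1 M2 : FinMatroid α} {S : Finset α} {p : List α} {dt : ℕ}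

lemma last_idx_even (hp : IsAugPath M1 M2 S p) : ¬ Odd (p.length - 1) := by
  intro ho
  obtain ⟨hne, hnd, hg, hh1, hh2, hl1, hl2, hc⟩ := hp
  have hlen : 0 < p.length := List.length_pos_iff.2 hne
  have := (get_mem_iff ⟨hne, hnd, hg, hh1, hh2, hl1, hl2, hc⟩ (p.length - 1) (by omega)).2 ho
  rw [List.get_eq_getElem, ← List.getLast_eq_getElem hne] at this
  exact hl1 this

lemma count_le_high (hp : IsAugPath M1 M2 S p) (hdt : IsDistST M1 M2 S dt)
    (hdtm : dt = p.length + 1) (δ : ℕ) :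
    ((p.toFinset ∩ S).filter (fun v => ¬ Reach M1 M2 S δ v)).card ≤
    ((p.toFinset \ S).filter (fun v => ¬ Reach M1 M2 S (δ + 1) v)).card := by
  have hnd : p.Nodup := by obtain ⟨_, hnd, _⟩ := hp; exact hnd
  have key : ∀ v ∈ (p.toFinset ∩ S).filter (fun v => ¬ Reach M1 M2 S δ v),
      ∃ hj : p.idxOf v < p.length, p.idxOf v + 1 < p.length ∧
        p.get ⟨p.idxOf v, hj⟩ = v ∧ Odd (p.idxOf v) ∧ δ ≤ p.idxOf v := by
    intro v hv
    simp only [Finset.mem_filter, Finset.mem_inter] at hv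
    obtain ⟨⟨hvp, hvS⟩, hvr⟩ := hv
    have hvmem : v ∈ p := List.mem_toFinset.1 hvp
    have hj : p.idxOf v < p.length := List.idxOf_lt_length_iff.2 hvmem
    have hgv : p.get ⟨p.idxOf v, hj⟩ = v := List.idxOf_get hj
    have hodd : Odd (p.idxOf v) := (get_mem_iff hp _ hj).1 (by rw [hgv]; exact hvS)
    have hjlt : p.idxOf v + 1 < p.length := by
      rcases (by omega : p.idxOf v + 1 < p.length ∨ p.idxOf v = p.length - 1) with h | h
      · exact h
      · exact absurd (h ▸ hodd) (last_idx_even hp)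
    refine ⟨hj, hjlt, hgv, hodd, ?_⟩
    by_contra hcon
    have := reach_get hp _ hj
    rw [hgv] at this
    exact hvr (reach_mono (by omega) this)
  apply Finset.card_le_card_of_injOn
    (fun v => if h : p.idxOf v + 1 < p.length then p.get ⟨p.idxOf v + 1, h⟩ else v)
  · intro v hv
    obtain ⟨hj, hjlt, hgv, hodd, hδ⟩ := key v hv
    simp only [dif_pos hjlt]
    simp only [Finset.mem_coe, Finset.mem_filter, Finset.mem_sdiff]
    refine ⟨⟨List.mem_toFinset.2 (List.get_mem _ _), ?_⟩, ?_⟩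
    · intro hmem
      have := (get_mem_iff hp _ hjlt).1 hmem
      obtain ⟨c, hc1⟩ := hodd; obtain ⟨c', hc2⟩ := this
      omega
    · intro hre
      exact not_reach_get hp hdt hdtm _ hjlt (reach_mono (by omega) hre)
  · intro v1 hv1 v2 hv2 heq
    obtain ⟨hj1, hjlt1, hgv1, _, _⟩ := key v1 hv1
    obtain ⟨hj2, hjlt2, hgv2, _, _⟩ := key v2 hv2
    simp only [dif_pos hjlt1, dif_pos hjlt2] at heq
    have := hnd.get_inj_iff.1 heq
    have hidx : p.idxOf v1 = p.idxOf v2 := by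
      have := Fin.mk.injEq _ _ _ _ ▸ this
      omega
    rw [← hgv1, ← hgv2]
    congr 1
    exact Fin.ext hidx

lemma count_le_low (hp : IsAugPath M1 M2 S p) (hdt : IsDistST M1 M2 S dt)
    (hdtm : dt = p.length + 1) (δ : ℕ) :
    ((p.toFinset ∩ S).filter (fun v => Reach M1 M2 S (δ + 1) v)).card ≤
    ((p.toFinset \ S).filter (fun v => Reach M1 M2 S δ v)).card := by
  have hnd : p.Nodup := by obtain ⟨_, hnd, _⟩ := hp; exact hnd
  have key : ∀ v ∈ (p.toFinset ∩ S).filter (fun v => Reach M1 M2 S (δ + 1) v),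
      ∃ hj : p.idxOf v < p.length, p.get ⟨p.idxOf v, hj⟩ = v ∧
        Odd (p.idxOf v) ∧ p.idxOf v ≤ δ := by
    intro v hv
    simp only [Finset.mem_filter, Finset.mem_inter] at hv
    obtain ⟨⟨hvp, hvS⟩, hvr⟩ := hv
    have hvmem : v ∈ p := List.mem_toFinset.1 hvp
    have hj : p.idxOf v < p.length := List.idxOf_lt_length_iff.2 hvmem
    have hgv : p.get ⟨p.idxOf v, hj⟩ = v := List.idxOf_get hj
    have hodd : Odd (p.idxOf v) := (get_mem_iff hp _ hj).1 (by rw [hgv]; exact hvS)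
    refine ⟨hj, hgv, hodd, ?_⟩
    by_contra hcon
    have := not_reach_get hp hdt hdtm _ hj
    rw [hgv] at this
    exact this (reach_mono (by omega) hvr)
  apply Finset.card_le_card_of_injOn
    (fun v => if h : p.idxOf v - 1 < p.length then p.get ⟨p.idxOf v - 1, h⟩ else v)
  · intro v hv
    obtain ⟨hj, hgv, hodd, hδ⟩ := key v hv
    have hj1 : 1 ≤ p.idxOf v := by
      obtain ⟨c, hc⟩ := hodd; omega
    have hjlt : p.idxOf v - 1 < p.length := by omega
    simp only [dif_pos hjlt]
    simp only [Finset.mem_coe, Finset.mem_filter, Finset.mem_sdiff]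
    refine ⟨⟨List.mem_toFinset.2 (List.get_mem _ _), ?_⟩, ?_⟩
    · intro hmem
      have := (get_mem_iff hp _ hjlt).1 hmem
      obtain ⟨c, hc1⟩ := hodd; obtain ⟨c', hc2⟩ := this
      omega
    · have := reach_get hp _ hjlt
      exact reach_mono (by omega) this
  · intro v1 hv1 v2 hv2 heq
    obtain ⟨hj1, hgv1, hodd1, _⟩ := key v1 hv1
    obtain ⟨hj2, hgv2, hodd2, _⟩ := key v2 hv2
    have ho1 : 1 ≤ p.idxOf v1 := by obtain ⟨c, hc⟩ := hodd1; omega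
    have ho2 : 1 ≤ p.idxOf v2 := by obtain ⟨c, hc⟩ := hodd2; omega
    simp only [dif_pos (by omega : p.idxOf v1 - 1 < p.length),
      dif_pos (by omega : p.idxOf v2 - 1 < p.length)] at heq
    have := hnd.get_inj_iff.1 heq
    have hidx : p.idxOf v1 = p.idxOf v2 := by
      have := Fin.mk.injEq _ _ _ _ ▸ this
      omega
    rw [← hgv1, ← hgv2]
    congr 1
    exact Fin.ext hidx

end DistMono
namespace DistMono

variable {α : Type*} [DecidableEq α]
variable {M1 M2 : FinMatroid α} {S : Finset α} {p : List α} {dt : ℕ}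

lemma perarc1 (hS1 : M1.Indep S) (hp : IsAugPath M1 M2 S p) (hdt : IsDistST M1 M2 S dt)
    (hdtm : dt = p.length + 1) {x y : α} {δ : ℕ}
    (hxS' : x ∈ symmDiff S p.toFinset) (hyS' : y ∉ symmDiff S p.toFinset)
    (hI0 : M1.Indep (insert y ((symmDiff S p.toFinset).erase x)))
    (hx : Reach M1 M2 S δ x) :
    Reach M1 M2 S (δ + 1) y := by
  by_contra hy
  set P := p.toFinset with hP
  set F := S.filter (fun z => ¬ Reach M1 M2 S δ z) with hF
  set HO := (P \ S).filter (fun v => ¬ Reach M1 M2 S (δ + 1) v) with hHO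
  have hyP : y ∈ S → y ∈ P := by
    intro hyS
    by_contra hcon
    exact hyS' (Finset.mem_symmDiff.2 (Or.inl ⟨hyS, hcon⟩))
  have hyPn : y ∉ S → y ∉ P := by
    intro h1 h2
    exact hyS' (Finset.mem_symmDiff.2 (Or.inr ⟨h2, h1⟩))
  have hymem : y ∉ (F \ P) ∪ HO := by
    intro hcon
    rcases Finset.mem_union.1 hcon with h | h
    · obtain h' := Finset.mem_sdiff.1 h
      exact h'.2 (hyP (Finset.mem_filter.1 h'.1).1)
    · have := Finset.mem_sdiff.1 (Finset.mem_filter.1 h).1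
      exact hyPn this.2 this.1
  have hsubI0 : insert y ((F \ P) ∪ HO) ⊆ insert y ((symmDiff S P).erase x) := by
    intro v hv
    rcases Finset.mem_insert.1 hv with rfl | hv
    · exact Finset.mem_insert_self _ _
    rcases Finset.mem_union.1 hv with h | h
    · obtain ⟨h1, h2⟩ := Finset.mem_sdiff.1 h
      obtain ⟨h3, h4⟩ := Finset.mem_filter.1 h1
      apply Finset.mem_insert_of_mem
      refine Finset.mem_erase.2 ⟨?_, Finset.mem_symmDiff.2 (Or.inl ⟨h3, h2⟩)⟩
      rintro rfl
      exact h4 hx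
    · obtain ⟨h1, h2⟩ := Finset.mem_filter.1 h
      obtain ⟨h3, h4⟩ := Finset.mem_sdiff.1 h1
      apply Finset.mem_insert_of_mem
      refine Finset.mem_erase.2 ⟨?_, Finset.mem_symmDiff.2 (Or.inr ⟨h3, h4⟩)⟩
      rintro rfl
      exact h2 (reach_mono (by omega) hx)
  have hIind : M1.Indep (insert y ((F \ P) ∪ HO)) := M1.indep_mono hI0 hsubI0
  have hrank : (insert y ((F \ P) ∪ HO)).card ≤ F.card := by
    refine rank_gen M1 hS1 (Finset.filter_subset _ _) hIind ?_
    intro e heI heF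
    have heyHO : e = y ∨ e ∈ HO := by
      rcases Finset.mem_insert.1 heI with rfl | h
      · exact Or.inl rfl
      rcases Finset.mem_union.1 h with h | h
      · exact absurd (Finset.mem_sdiff.1 h).1 heF
      · exact Or.inr h
    have heS : e ∉ S ∧ ¬ Reach M1 M2 S (δ + 1) e := by
      rcases heyHO with rfl | h
      · refine ⟨?_, hy⟩
        intro heS
        exact heF (Finset.mem_filter.2 ⟨heS, fun hr => hy (reach_mono (by omega) hr)⟩)
      · have := Finset.mem_filter.1 h
        exact ⟨(Finset.mem_sdiff.1 this.1).2, this.2⟩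
    refine ⟨heS.1, ?_, ?_⟩
    · intro hind
      exact heS.2 (reach_mono (by omega) (reach_one heS.1 hind))
    · intro z hzS hzF hind
      have hzr : Reach M1 M2 S δ z := by
        by_contra hcon
        exact hzF (Finset.mem_filter.2 ⟨hzS, hcon⟩)
      exact heS.2 (reach_succ hzr (Or.inl ⟨hzS, heS.1, hind⟩))
  have hdisj : Disjoint (F \ P) HO := by
    rw [Finset.disjoint_left]
    intro a ha hb
    have h1 : a ∈ S := (Finset.mem_filter.1 (Finset.mem_sdiff.1 ha).1).1
    have h2 : a ∉ S := (Finset.mem_sdiff.1 (Finset.mem_filter.1 hb).1).2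
    exact h2 h1
  have hcard1 : (insert y ((F \ P) ∪ HO)).card = (F \ P).card + HO.card + 1 := by
    rw [Finset.card_insert_of_notMem hymem, Finset.card_union_of_disjoint hdisj]
  have hcard2 : (F \ P).card + (F ∩ P).card = F.card := Finset.card_sdiff_add_card_inter F P
  have hcard3 : (F ∩ P).card ≤ HO.card := by
    have heq : F ∩ P = (P ∩ S).filter (fun v => ¬ Reach M1 M2 S δ v) := by
      ext a
      simp only [hF, Finset.mem_inter, Finset.mem_filter]
      tauto
    rw [heq]
    exact count_le_high hp hdt hdtm δ
  omega

lemma perarc2 (hS2 : M2.Indep S) (hp : IsAugPath M1 M2 S p) (hdt : IsDistST M1 M2 S dt)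
    (hdtm : dt = p.length + 1) {x y : α} {δ : ℕ}
    (hxS' : x ∉ symmDiff S p.toFinset) (hyS' : y ∈ symmDiff S p.toFinset)
    (hI0 : M2.Indep (insert x ((symmDiff S p.toFinset).erase y)))
    (hx : Reach M1 M2 S δ x) (hδ : δ + 1 < dt) :
    Reach M1 M2 S (δ + 1) y := by
  by_contra hy
  set P := p.toFinset with hP
  set F := S.filter (fun z => Reach M1 M2 S (δ + 1) z) with hF
  set LO := (P \ S).filter (fun v => Reach M1 M2 S δ v) with hLO
  have hxP : x ∈ S → x ∈ P := by
    intro hxS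
    by_contra hcon
    exact hxS' (Finset.mem_symmDiff.2 (Or.inl ⟨hxS, hcon⟩))
  have hxPn : x ∉ S → x ∉ P := by
    intro h1 h2
    exact hxS' (Finset.mem_symmDiff.2 (Or.inr ⟨h2, h1⟩))
  have hxmem : x ∉ (F \ P) ∪ LO := by
    intro hcon
    rcases Finset.mem_union.1 hcon with h | h
    · obtain h' := Finset.mem_sdiff.1 h
      exact h'.2 (hxP (Finset.mem_filter.1 h'.1).1)
    · have := Finset.mem_sdiff.1 (Finset.mem_filter.1 h).1
      exact hxPn this.2 this.1
  have hsubI0 : insert x ((F \ P) ∪ LO) ⊆ insert x ((symmDiff S P).erase y) := by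
    intro v hv
    rcases Finset.mem_insert.1 hv with rfl | hv
    · exact Finset.mem_insert_self _ _
    rcases Finset.mem_union.1 hv with h | h
    · obtain ⟨h1, h2⟩ := Finset.mem_sdiff.1 h
      obtain ⟨h3, h4⟩ := Finset.mem_filter.1 h1
      apply Finset.mem_insert_of_mem
      refine Finset.mem_erase.2 ⟨?_, Finset.mem_symmDiff.2 (Or.inl ⟨h3, h2⟩)⟩
      rintro rfl
      exact hy h4
    · obtain ⟨h1, h2⟩ := Finset.mem_filter.1 h
      obtain ⟨h3, h4⟩ := Finset.mem_sdiff.1 h1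
      apply Finset.mem_insert_of_mem
      refine Finset.mem_erase.2 ⟨?_, Finset.mem_symmDiff.2 (Or.inr ⟨h3, h4⟩)⟩
      rintro rfl
      exact hy (reach_mono (by omega) h2)
  have hIind : M2.Indep (insert x ((F \ P) ∪ LO)) := M2.indep_mono hI0 hsubI0
  have hrank : (insert x ((F \ P) ∪ LO)).card ≤ F.card := by
    refine rank_gen M2 hS2 (Finset.filter_subset _ _) hIind ?_
    intro e heI heF
    have hex : (e = x ∧ e ∉ S) ∨ e ∈ LO := by
      rcases Finset.mem_insert.1 heI with rfl | h
      · refine Or.inl ⟨rfl, ?_⟩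
        intro heS
        exact heF (Finset.mem_filter.2 ⟨heS, reach_mono (by omega) hx⟩)
      rcases Finset.mem_union.1 h with h | h
      · exact absurd (Finset.mem_sdiff.1 h).1 heF
      · exact Or.inr h
    have heS : e ∉ S ∧ Reach M1 M2 S δ e := by
      rcases hex with ⟨rfl, h2⟩ | h
      · exact ⟨h2, hx⟩
      · have := Finset.mem_filter.1 h
        exact ⟨(Finset.mem_sdiff.1 this.1).2, this.2⟩
    refine ⟨heS.1, noSink hdt heS.1 heS.2 hδ, ?_⟩
    intro z hzS hzF hind
    exact hzF (Finset.mem_filter.2 ⟨hzS, reach_succ heS.2 (Or.inr ⟨heS.1, hzS, hind⟩)⟩)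
  have hdisj : Disjoint (F \ P) LO := by
    rw [Finset.disjoint_left]
    intro a ha hb
    have h1 : a ∈ S := (Finset.mem_filter.1 (Finset.mem_sdiff.1 ha).1).1
    have h2 : a ∉ S := (Finset.mem_sdiff.1 (Finset.mem_filter.1 hb).1).2
    exact h2 h1
  have hcard1 : (insert x ((F \ P) ∪ LO)).card = (F \ P).card + LO.card + 1 := by
    rw [Finset.card_insert_of_notMem hxmem, Finset.card_union_of_disjoint hdisj]
  have hcard2 : (F \ P).card + (F ∩ P).card = F.card := Finset.card_sdiff_add_card_inter F P
  have hcard3 : (F ∩ P).card ≤ LO.card := by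
    have heq : F ∩ P = (P ∩ S).filter (fun v => Reach M1 M2 S (δ + 1) v) := by
      ext a
      simp only [hF, Finset.mem_inter, Finset.mem_filter]
      tauto
    rw [heq]
    exact count_le_low hp hdt hdtm δ
  omega

lemma src_case (hS1 : M1.Indep S) (hp : IsAugPath M1 M2 S p) (hdt : IsDistST M1 M2 S dt)
    (hdtm : dt = p.length + 1) {a : α}
    (ha' : a ∉ symmDiff S p.toFinset) (hI0 : M1.Indep (insert a (symmDiff S p.toFinset))) :
    Reach M1 M2 S 1 a := by
  by_contra h1
  set P := p.toFinset with hP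
  set HO := (P \ S).filter (fun v => ¬ Reach M1 M2 S 1 v) with hHO
  have haP : a ∈ S → a ∈ P := by
    intro h
    by_contra hcon
    exact ha' (Finset.mem_symmDiff.2 (Or.inl ⟨h, hcon⟩))
  have haPn : a ∉ S → a ∉ P := by
    intro h hcon
    exact ha' (Finset.mem_symmDiff.2 (Or.inr ⟨hcon, h⟩))
  have hamem : a ∉ (S \ P) ∪ HO := by
    intro hcon
    rcases Finset.mem_union.1 hcon with h | h
    · obtain ⟨hh1, hh2⟩ := Finset.mem_sdiff.1 h
      exact hh2 (haP hh1)
    · have := Finset.mem_sdiff.1 (Finset.mem_filter.1 h).1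
      exact haPn this.2 this.1
  have hsubI0 : insert a ((S \ P) ∪ HO) ⊆ insert a (symmDiff S P) := by
    intro v hv
    rcases Finset.mem_insert.1 hv with rfl | hv
    · exact Finset.mem_insert_self _ _
    apply Finset.mem_insert_of_mem
    rcases Finset.mem_union.1 hv with h | h
    · obtain ⟨hh1, hh2⟩ := Finset.mem_sdiff.1 h
      exact Finset.mem_symmDiff.2 (Or.inl ⟨hh1, hh2⟩)
    · have := Finset.mem_sdiff.1 (Finset.mem_filter.1 h).1
      exact Finset.mem_symmDiff.2 (Or.inr ⟨this.1, this.2⟩)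
  have hIind : M1.Indep (insert a ((S \ P) ∪ HO)) := M1.indep_mono hI0 hsubI0
  have hrank : (insert a ((S \ P) ∪ HO)).card ≤ S.card := by
    refine rank_gen M1 hS1 (le_refl S) hIind ?_
    intro e heI heF
    have heHO : e = a ∨ e ∈ HO := by
      rcases Finset.mem_insert.1 heI with rfl | h
      · exact Or.inl rfl
      rcases Finset.mem_union.1 h with h | h
      · exact absurd (Finset.mem_sdiff.1 h).1 heF
      · exact Or.inr h
    have heR : ¬ Reach M1 M2 S 1 e := by
      rcases heHO with rfl | h
      · exact h1
      · exact (Finset.mem_filter.1 h).2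
    refine ⟨heF, fun hind => heR (reach_one heF hind), fun z hz hzF => absurd hz hzF⟩
  have hdisj : Disjoint (S \ P) HO := by
    rw [Finset.disjoint_left]
    intro b hb hb2
    exact (Finset.mem_sdiff.1 (Finset.mem_filter.1 hb2).1).2 (Finset.mem_sdiff.1 hb).1
  have hcard1 : (insert a ((S \ P) ∪ HO)).card = (S \ P).card + HO.card + 1 := by
    rw [Finset.card_insert_of_notMem hamem, Finset.card_union_of_disjoint hdisj]
  have hcard2 : (S \ P).card + (S ∩ P).card = S.card := Finset.card_sdiff_add_card_inter S P
  have hcard3 : (S ∩ P).card ≤ HO.card := by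
    have heq : S ∩ P = (P ∩ S).filter (fun v => ¬ Reach M1 M2 S 0 v) := by
      ext b
      simp only [Finset.mem_inter, Finset.mem_filter]
      constructor
      · intro hb; exact ⟨⟨hb.2, hb.1⟩, not_reach_zero⟩
      · intro hb; exact ⟨hb.1.2, hb.1.1⟩
    rw [heq]
    exact count_le_high hp hdt hdtm 0
  omega

lemma main_ind (hS1 : M1.Indep S) (hS2 : M2.Indep S) (hp : IsAugPath M1 M2 S p)
    (hdt : IsDistST M1 M2 S dt) (hdtm : dt = p.length + 1) :
    ∀ (q : List α), PathTo M1 M2 (symmDiff S p.toFinset) q → q.length < dt →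
      ∀ w, q.getLast? = some w → Reach M1 M2 S q.length w := by
  intro q
  induction q using List.reverseRecOn with
  | nil => intro hq; exact absurd rfl hq.1
  | append_singleton r a ih =>
    intro hq hlen w hw
    rw [List.getLast?_concat] at hw
    have hwa : w = a := (Option.some_injective _ hw).symm
    subst hwa
    rcases eq_or_ne r [] with rfl | hrne
    · obtain ⟨hne, hh1, hh2, _⟩ := hq
      have := src_case hS1 hp hdt hdtm (a := w) hh1 hh2
      simpa using this
    · obtain ⟨hne, hh1, hh2, hc⟩ := hq
      have hchains := List.isChain_append.1 hc
      have hheads : (r ++ [w]).head hne = r.head hrne := by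
        have e1 := List.head?_eq_head hne (l := r ++ [w])
        rw [List.head?_append_of_ne_nil r hrne, List.head?_eq_head hrne] at e1
        exact (Option.some_injective _ e1).symm
      have hqr : PathTo M1 M2 (symmDiff S p.toFinset) r := by
        rw [hheads] at hh1 hh2
        exact ⟨hrne, hh1, hh2, hchains.1⟩
      have hrlen : r.length + 1 < dt := by
        simpa using hlen
      have hx := ih hqr (by omega) (r.getLast hrne) (List.getLast?_eq_getLast hrne)
      have hedge : ExchangeEdge M1 M2 (symmDiff S p.toFinset) (r.getLast hrne) w := by
        refine hchains.2.2 _ ?_ _ rfl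
        rw [List.getLast?_eq_getLast hrne]; rfl
      have hres : Reach M1 M2 S (r.length + 1) w := by
        rcases hedge with ⟨e1, e2, e3⟩ | ⟨e1, e2, e3⟩
        · exact perarc1 hS1 hp hdt hdtm e1 e2 e3 hx
        · exact perarc2 hS2 hp hdt hdtm e1 e2 e3 hx hrlen
      simpa using hres

end DistMono
/-- Monotonicity of distances: after augmenting along a shortest `(s,t)`-path,
for every `u` with `d(s,u) < d(s,t)` the distance from `s` to `u` does not
decrease. -/
theorem dist_monotone (M1 M2 : FinMatroid α) (hE : M1.E = M2.E)
    (S : Finset α) (hS1 : M1.Indep S) (hS2 : M2.Indep S)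
    (p : List α) (hp : IsAugPath M1 M2 S p)
    (hshort : ∀ q : List α, IsAugPath M1 M2 S q → p.length ≤ q.length)
    (dt : ℕ) (hdt : IsDistST M1 M2 S dt)
    (u : α) (l : ℕ) (hu : InLayer M1 M2 S u l) (hl : l < dt) :
    ∀ q : List α, PathTo M1 M2 (symmDiff S p.toFinset) q →
      q.getLast? = some u → l ≤ q.length := by
  intro q hq hlast
  have hdtm := DistMono.dt_eq hS1 hp hshort hdt
  by_cases hql : q.length < dt
  · obtain ⟨r, h1, h2, h3⟩ := DistMono.main_ind hS1 hS2 hp hdt hdtm q hq hql u hlast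
    exact le_trans (hu.2 r h1 h2) h3
  · omega
end

section
/- In a matroid, if S is independent, u, y ∈ U \ S, R ⊆ U \ S with R ∪ {u} dependent over S in the sense that rank(S' ∪ R ∪ {u}) = rank(S' ∪ R) where S' = S \ {x} for some x ∈ S, and there exists an exchange edge from u to x (i.e., S − x + u ∈ I), then there exists v ∈ R with S − x + v ∈ I. -/
open Finset

variable {α : Type*} [DecidableEq α]

/-- If `u` is spanned by `(S \ {x}) ∪ R` and `(S \ {x}) ∪ {u}` is independent,
then some `v ∈ R` also satisfies that `(S \ {x}) ∪ {v}` is independent. -/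
theorem span_exchange (M : FinMatroid α) (S : Finset α) (hS : M.Indep S)
    (x : α) (hx : x ∈ S) (u : α) (huE : u ∈ M.E) (huS : u ∉ S)
    (hedge : M.Indep (insert u (S.erase x)))
    (R : Finset α) (hR : R ⊆ M.E \ S)
    (hspan : M.rank (S.erase x ∪ R ∪ {u}) = M.rank (S.erase x ∪ R)) :
    ∃ v ∈ R, M.Indep (insert v (S.erase x)) := by

  by_contra hcon
  push_neg at hcon
  set S' := S.erase x with hS'
  have hS'indep : M.Indep S' := M.indep_mono hS (erase_subset x S)
  have hbdd : ∀ X : Finset α, BddAbove {n : ℕ | ∃ T : Finset α, M.Indep T ∧ T ⊆ X ∧ T.card = n} := by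
    intro X
    refine ⟨X.card, ?_⟩
    rintro n ⟨T, _, hTX, rfl⟩
    exact card_le_card hTX
  -- rank (S' ∪ R) = S'.card
  have h1 : M.rank (S' ∪ R) = S'.card := by
    apply le_antisymm
    · refine csSup_le ⟨0, ∅, M.indep_empty, empty_subset _, card_empty⟩ ?_
      rintro n ⟨T, hT, hTX, rfl⟩
      by_contra hlt
      push_neg at hlt
      obtain ⟨v, hvT, hvS', hvind⟩ := M.indep_exchange hS'indep hT hlt
      have hvR : v ∈ R := by
        rcases mem_union.mp (hTX hvT) with h | h
        · exact absurd h hvS'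
        · exact h
      exact hcon v hvR hvind
    · exact le_csSup (hbdd _) ⟨S', hS'indep, subset_union_left, rfl⟩
  have huS' : u ∉ S' := fun h => huS (mem_of_mem_erase h)
  have h2 : S'.card + 1 ≤ M.rank (S' ∪ R ∪ {u}) := by
    apply le_csSup (hbdd _)
    refine ⟨insert u S', hedge, ?_, by rw [card_insert_of_notMem huS']⟩
    intro w hw
    rcases mem_insert.mp hw with rfl | h
    · exact mem_union_right _ (mem_singleton_self w)
    · exact mem_union_left _ (mem_union_left _ h)
  rw [hspan, h1] at h2
  omega
end

section
/- Let H = (V, E) be a directed graph and X ⊆ V. Define I ⊆ 2^V by: Y ∈ I iff there exists a collection of vertex-disjoint directed paths in H whose starting points lie in X and whose set of ending points is exactly Y. Then (V, I) is a matroid (the strict gammoid). -/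
open Finset

variable {α : Type*} [DecidableEq α]

/-- Independence in the strict gammoid of the digraph `E` with source set `X`:
`Y` is independent iff there are vertex-disjoint directed paths in `E` starting
in `X` and ending exactly at `Y`. -/
def GammoidIndep {V : Type*} (E : V → V → Prop) (X Y : Finset V) : Prop :=
  ∃ P : V → List V,
    (∀ y ∈ Y, ∃ h : (P y) ≠ [],
      (P y).head h ∈ X ∧ (P y).getLast h = y ∧ (P y).Chain' E) ∧
    (∀ y ∈ Y, ∀ z ∈ Y, y ≠ z → ∀ v ∈ P y, v ∉ P z)



section ListAux

variable {V : Type*} [DecidableEq V] {E : V → V → Prop}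

private lemma exists_dup_split {l : List V} (h : ¬ l.Nodup) :
    ∃ (a b c : List V) (v : V), l = a ++ v :: (b ++ v :: c) := by
  induction l with
  | nil => simp at h
  | cons x xs ih =>
    rw [List.nodup_cons] at h
    push_neg at h
    by_cases hx : x ∈ xs
    · obtain ⟨b, c, hbc⟩ := List.append_of_mem hx
      exact ⟨[], b, c, x, by simp [hbc]⟩
    · obtain ⟨a, b, c, v, hv⟩ := ih (h hx)
      exact ⟨x :: a, b, c, v, by simp [hv]⟩

private lemma nodup_reduce : ∀ (n : ℕ) (l : List V), l.length ≤ n → l.Chain' E →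
    ∃ l' : List V, l'.Nodup ∧ l'.Chain' E ∧ l'.head? = l.head? ∧
      l'.getLast? = l.getLast? ∧ ∀ v ∈ l', v ∈ l := by
  intro n
  induction n with
  | zero =>
    intro l hl _
    rw [Nat.le_zero, List.length_eq_zero_iff] at hl
    subst hl
    exact ⟨[], by simp [List.Chain']⟩
  | succ n ih =>
    intro l hl hch
    by_cases hnd : l.Nodup
    · exact ⟨l, hnd, hch, rfl, rfl, fun v hv => hv⟩
    · obtain ⟨a, b, c, v, rfl⟩ := exists_dup_split hnd
      have hch2 : (a ++ v :: c).Chain' E := by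
        rw [List.Chain', List.isChain_split] at hch ⊢
        refine ⟨hch.1, ?_⟩
        have h2 := hch.2
        rw [show v :: (b ++ v :: c) = (v :: b) ++ v :: c from by simp,
          List.isChain_split] at h2
        exact h2.2
      have hlen : (a ++ v :: c).length ≤ n := by
        simp only [List.length_append, List.length_cons] at hl ⊢
        omega
      obtain ⟨l', h1, h2, h3, h4, h5⟩ := ih (a ++ v :: c) hlen hch2
      refine ⟨l', h1, h2, ?_, ?_, fun w hw => ?_⟩
      · rw [h3]; cases a <;> simp
      · obtain ⟨w, hw⟩ : ∃ w, (v :: c).getLast? = some w :=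
          ⟨_, List.getLast?_eq_getLast (by simp)⟩
        rw [h4, show a ++ v :: (b ++ v :: c) = (a ++ (v :: b)) ++ (v :: c) from by simp,
          List.getLast?_append, List.getLast?_append, hw]
        simp
      · have := h5 w hw
        simp only [List.mem_append, List.mem_cons] at this ⊢
        tauto

private lemma suffix_reduce (X : Finset V) :
    ∀ (n : ℕ) (x : V) (l : List V), (x :: l).length ≤ n → (x :: l).Nodup →
    (x :: l).Chain' E → x ∈ X →
    ∃ (x' : V) (l' : List V), x' ∈ X ∧ (∀ v ∈ l', v ∉ X) ∧ (x' :: l').Nodup ∧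
      (x' :: l').Chain' E ∧ (x' :: l').getLast? = (x :: l).getLast? ∧
      ∀ v ∈ x' :: l', v ∈ x :: l := by
  intro n
  induction n with
  | zero => intro x l hl; simp at hl
  | succ n ih =>
    intro x l hl hnd hch hxX
    by_cases hX : ∃ u ∈ l, u ∈ X
    · obtain ⟨u, hu, huX⟩ := hX
      obtain ⟨t₁, t₂, rfl⟩ := List.append_of_mem hu
      have hsuf : (u :: t₂) <:+ x :: (t₁ ++ u :: t₂) := ⟨x :: t₁, by simp⟩
      have hlen : (u :: t₂).length ≤ n := by
        simp only [List.length_cons, List.length_append] at hl ⊢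
        omega
      have hnd2 : (u :: t₂).Nodup := (hsuf.sublist).nodup hnd
      have hch2 : (u :: t₂).Chain' E := by
        rw [show x :: (t₁ ++ u :: t₂) = (x :: t₁) ++ u :: t₂ from by simp,
          List.Chain', List.isChain_split] at hch
        exact hch.2
      obtain ⟨x', l', h1, h2, h3, h4, h5, h6⟩ := ih u t₂ hlen hnd2 hch2 huX
      refine ⟨x', l', h1, h2, h3, h4, ?_, fun v hv => hsuf.sublist.subset (h6 v hv)⟩
      rw [h5]
      obtain ⟨w, hw⟩ : ∃ w, (u :: t₂).getLast? = some w :=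
        ⟨_, List.getLast?_eq_getLast (by simp)⟩
      rw [show x :: (t₁ ++ u :: t₂) = (x :: t₁) ++ (u :: t₂) from by simp,
        List.getLast?_append, hw]
      simp
    · push_neg at hX
      exact ⟨x, l, hxX, hX, hnd, hch, rfl, fun v hv => hv⟩

private lemma getD_mem {l : List V} {i : ℕ} (h : i < l.length) (d : V) : l.getD i d ∈ l := by
  rw [List.getD_eq_getElem _ _ h]
  exact List.getElem_mem _

private lemma getD_indexOf {l : List V} {u : V} (h : u ∈ l) (d : V) :
    l.getD (l.idxOf u) d = u := by
  rw [List.getD_eq_getElem _ _ (List.idxOf_lt_length_iff.mpr h)]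
  exact List.getElem_idxOf _

private lemma indexOf_getD {l : List V} (hnd : l.Nodup) {i : ℕ} (h : i < l.length) (d : V) :
    l.idxOf (l.getD i d) = i := by
  have hmem : l.getD i d ∈ l := getD_mem h d
  have h1 : l.get ⟨l.idxOf (l.getD i d), List.idxOf_lt_length_iff.mpr hmem⟩ = l.getD i d :=
    List.idxOf_get _
  have h2 : l.get ⟨_, _⟩ = l.get ⟨i, h⟩ := h1.trans (List.getD_eq_getElem _ _ h)
  simpa using congrArg Fin.val (List.nodup_iff_injective_get.mp hnd h2)

private lemma chain'_getD {l : List V} (hch : l.Chain' E) {i : ℕ}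
    (h1 : i + 1 < l.length) (d d' : V) : E (l.getD i d) (l.getD (i + 1) d') := by
  rw [List.getD_eq_getElem _ _ (show i < l.length by omega), List.getD_eq_getElem _ _ h1]
  exact List.isChain_iff_getElem.mp hch i (by omega)

private lemma getLast_getD {l : List V} (h : l ≠ []) (d : V) :
    l.getD (l.length - 1) d = l.getLast h := by
  rw [List.getD_eq_getElem _ _ (show l.length - 1 < l.length by
    have := List.length_pos_iff.mpr h; omega), List.getLast_eq_getElem]

end ListAux
section GammoidAux

variable {V : Type*} [DecidableEq V] [Fintype V]

/-- Auxiliary characterization of gammoid independence (cf. Ingleton–Piff):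
`Y` is independent iff there is a map `g` on `V ∖ X`, injective there, avoiding `Y`,
sending each vertex either to itself or to an in-neighbor. -/
private def MatchIndep (E : V → V → Prop) (X Y : Finset V) : Prop :=
  ∃ g : V → V, (∀ u, u ∉ X → (g u = u ∨ E (g u) u) ∧ g u ∉ Y) ∧
    Set.InjOn g {u : V | u ∉ X}

private lemma match_to_gammoid {E : V → V → Prop} {X Y : Finset V}
    (h : MatchIndep E X Y) : GammoidIndep E X Y := by
  classical
  obtain ⟨g, hg, hginj⟩ := h
  set f : V → V := fun v => if v ∈ X then v else g v with hfdef
  have hfnX : ∀ v, v ∉ X → f v = g v := fun v hv => by simp [hfdef, hv]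
  have hstep : ∀ a b, a ∉ X → b ∉ X → f a = f b → a = b := by
    intro a b ha hb hab
    rw [hfnX a ha, hfnX b hb] at hab
    exact hginj ha hb hab
  have hgY : ∀ v, v ∉ X → g v ∉ Y := fun v hv => (hg v hv).2
  have hit : ∀ y ∈ Y, ∃ k, f^[k] y ∈ X := by
    intro y hy
    by_contra hno
    push_neg at hno
    have hpeel : ∀ i j, i ≤ j → f^[i] y = f^[j] y → y = f^[j - i] y := by
      intro i
      induction i with
      | zero => intro j _ hj; simpa using hj
      | succ i ih =>
        intro j hij hj
        obtain ⟨j', rfl⟩ : ∃ j', j = j' + 1 := ⟨j - 1, by omega⟩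
        rw [Function.iterate_succ_apply', Function.iterate_succ_apply'] at hj
        have h1 := hstep _ _ (hno i) (hno j') hj
        have h2 := ih j' (by omega) h1
        simpa [Nat.succ_sub_succ] using h2
    have hfin : ∀ i j, i < j → f^[i] y = f^[j] y → False := by
      intro i j hij heq
      have h0 := hpeel i j (le_of_lt hij) heq
      obtain ⟨d, hd'⟩ : ∃ d, j - i = d + 1 := ⟨j - i - 1, by omega⟩
      rw [hd', Function.iterate_succ_apply', hfnX _ (hno d)] at h0
      exact hgY _ (hno d) (h0 ▸ hy)
    obtain ⟨i, hi, j, hj, hne, heq⟩ :=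
      Finset.exists_ne_map_eq_of_card_lt_of_maps_to
        (s := Finset.range (Fintype.card V + 1)) (t := Finset.univ)
        (by simp) (fun a _ => Finset.mem_univ (f^[a] y))
    rcases lt_or_gt_of_ne hne with hlt | hlt
    · exact hfin i j hlt heq
    · exact hfin j i hlt heq.symm
  set Knat : V → ℕ := fun v => if hv : v ∈ Y then Nat.find (hit v hv) else 0 with hK
  have hKX : ∀ y (hy : y ∈ Y), f^[Knat y] y ∈ X := by
    intro y hy
    simp only [hK, dif_pos hy]
    exact Nat.find_spec (hit y hy)
  have hKmin : ∀ y (hy : y ∈ Y), ∀ k < Knat y, f^[k] y ∉ X := by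
    intro y hy k hk
    simp only [hK, dif_pos hy] at hk
    exact Nat.find_min (hit y hy) hk
  set P : V → List V := fun v => ((List.range (Knat v + 1)).map (fun k => f^[k] v)).reverse
    with hP
  have hmem : ∀ v w, w ∈ P v ↔ ∃ k ≤ Knat v, f^[k] v = w := by
    intro v w
    show w ∈ (((List.range (Knat v + 1)).map (fun k => f^[k] v)).reverse) ↔ _
    rw [List.mem_reverse, List.mem_map]
    constructor
    · rintro ⟨k, hk, hkw⟩
      exact ⟨k, by simpa [Nat.lt_succ_iff] using List.mem_range.mp hk, hkw⟩
    · rintro ⟨k, hk, hkw⟩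
      exact ⟨k, List.mem_range.mpr (by omega), hkw⟩
  have hPne : ∀ v, P v ≠ [] := by intro v; simp [hP]
  have hhead : ∀ v, (P v).head? = some (f^[Knat v] v) := by
    intro v
    show (((List.range (Knat v + 1)).map (fun k => f^[k] v)).reverse).head? = _
    rw [List.head?_reverse, List.range_succ, List.map_append, List.getLast?_append]
    simp
  have hlast : ∀ v, (P v).getLast? = some v := by
    intro v
    show (((List.range (Knat v + 1)).map (fun k => f^[k] v)).reverse).getLast? = _
    rw [List.getLast?_reverse, List.range_succ_eq_map]
    simp
  have hchain : ∀ y, y ∈ Y → (P y).Chain' E := by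
    intro y hy
    show (((List.range (Knat y + 1)).map (fun k => f^[k] y)).reverse).Chain' E
    rw [List.Chain', List.isChain_reverse, List.isChain_map, List.isChain_range_succ]
    intro m hm
    have hmX : f^[m] y ∉ X := hKmin y hy m hm
    show E (f^[m + 1] y) (f^[m] y)
    rw [Function.iterate_succ_apply', hfnX _ hmX]
    rcases (hg _ hmX).1 with he | he
    · exfalso
      have hconst : ∀ d, f^[m + d] y = f^[m] y := by
        intro d
        induction d with
        | zero => simp
        | succ d ihd =>
          rw [← Nat.add_assoc, Function.iterate_succ_apply', ihd, hfnX _ hmX, he]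
      have h2 := hKX y hy
      rw [show Knat y = m + (Knat y - m) from by omega, hconst] at h2
      exact hmX h2
    · exact he
  have hcross : ∀ y, y ∈ Y → ∀ z, z ∈ Y → ∀ i, i ≤ Knat y → ∀ j, j ≤ Knat z → i ≤ j →
      f^[i] y = f^[j] z → y = f^[j - i] z := by
    intro y hy z hz i
    induction i with
    | zero =>
      intro _ j _ _ hj
      simpa using hj
    | succ i ih =>
      intro hiy j hjz hij heq
      obtain ⟨j', rfl⟩ : ∃ j', j = j' + 1 := ⟨j - 1, by omega⟩
      rw [Function.iterate_succ_apply', Function.iterate_succ_apply'] at heq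
      have h1 := hstep _ _ (hKmin y hy i (by omega)) (hKmin z hz j' (by omega)) heq
      have h2 := ih (by omega) j' (by omega) (by omega) h1
      simpa [Nat.succ_sub_succ] using h2
  have hnotY : ∀ z, z ∈ Y → ∀ d, 1 ≤ d → d ≤ Knat z → f^[d] z ∉ Y := by
    intro z hz d hd1 hd2
    obtain ⟨d', rfl⟩ : ∃ d', d = d' + 1 := ⟨d - 1, by omega⟩
    rw [Function.iterate_succ_apply', hfnX _ (hKmin z hz d' (by omega))]
    exact hgY _ (hKmin z hz d' (by omega))
  refine ⟨P, ?_, ?_⟩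
  · intro y hy
    refine ⟨hPne y, ?_, ?_, hchain y hy⟩
    · have h1 := List.head?_eq_head (hPne y)
      have h2 : (P y).head (hPne y) = f^[Knat y] y :=
        Option.some.inj ((h1.symm).trans (hhead y))
      rw [h2]
      exact hKX y hy
    · have h1 := List.getLast?_eq_getLast (hPne y)
      exact Option.some.inj ((h1.symm).trans (hlast y))
  · intro y hy z hz hyz v hvy hvz
    rw [hmem] at hvy hvz
    obtain ⟨i, hi, hiv⟩ := hvy
    obtain ⟨j, hj, hjv⟩ := hvz
    rcases le_total i j with hle | hle
    · have h0 := hcross y hy z hz i hi j hj hle (hiv.trans hjv.symm)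
      rcases Nat.eq_zero_or_pos (j - i) with hz0 | hz0
      · rw [hz0] at h0; simp at h0; exact hyz h0
      · exact hnotY z hz (j - i) hz0 (by omega) (h0 ▸ hy)
    · have h0 := hcross z hz y hy j hj i hi hle (hjv.trans hiv.symm)
      rcases Nat.eq_zero_or_pos (i - j) with hz0 | hz0
      · rw [hz0] at h0; simp at h0; exact hyz h0.symm
      · exact hnotY y hy (i - j) hz0 (by omega) (h0 ▸ hz)

end GammoidAux
section GammoidAux2

variable {V : Type*} [DecidableEq V] [Fintype V]

private lemma gammoid_to_match {E : V → V → Prop} {X Y : Finset V}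
    (h : GammoidIndep E X Y) : MatchIndep E X Y := by
  classical
  obtain ⟨P, hP, hdisj⟩ := h
  have hQex : ∀ y : V, ∃ q : List V, y ∈ Y →
      (∃ x' l', q = x' :: l' ∧ x' ∈ X ∧ (∀ v ∈ l', v ∉ X)) ∧
      q.Nodup ∧ q.Chain' E ∧ q.getLast? = some y ∧ ∀ v ∈ q, v ∈ P y := by
    intro y
    by_cases hy : y ∈ Y
    · obtain ⟨hne, hhead, hlast, hchain⟩ := hP y hy
      obtain ⟨l₁, h1nd, h1ch, h1h, h1l, h1sub⟩ := nodup_reduce (P y).length (P y) le_rfl hchain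
      have h1ne : l₁ ≠ [] := by
        intro h0
        rw [h0, List.head?_eq_head hne] at h1h
        simp at h1h
      obtain ⟨x, t, rfl⟩ := List.exists_cons_of_ne_nil h1ne
      have hxX : x ∈ X := by
        rw [List.head?_eq_head hne] at h1h
        have : x = (P y).head hne := Option.some.inj h1h
        rw [this]
        exact hhead
      obtain ⟨x', l', hx1, hx2, hx3, hx4, hx5, hx6⟩ :=
        suffix_reduce X (x :: t).length x t le_rfl h1nd h1ch hxX
      refine ⟨x' :: l', fun _ => ⟨⟨x', l', rfl, hx1, hx2⟩, hx3, hx4, ?_,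
        fun v hv => h1sub v (hx6 v hv)⟩⟩
      rw [hx5, h1l, List.getLast?_eq_getLast hne, hlast]
    · exact ⟨[], fun hc => absurd hc hy⟩
  choose Q hQ using hQex
  have hQy : ∀ y, y ∈ Y → y ∈ Q y := by
    intro y hy
    have h4 : (Q y).getLast? = some y := (hQ y hy).2.2.2.1
    have hmm : y ∈ (Q y).getLast? := by rw [h4]; rfl
    obtain ⟨hne', hy'⟩ := List.mem_getLast?_eq_getLast hmm
    have := List.getLast_mem hne'
    rwa [← hy'] at this
  have hQsub : ∀ y, y ∈ Y → ∀ v ∈ Q y, v ∈ P y := fun y hy => (hQ y hy).2.2.2.2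
  have huniq : ∀ u y z, y ∈ Y → z ∈ Y → u ∈ Q y → u ∈ Q z → y = z := by
    intro u y z hy hz huy huz
    by_contra hne
    exact hdisj y hy z hz hne u (hQsub y hy u huy) (hQsub z hz u huz)
  set g : V → V := fun u => if hu : ∃ y ∈ Y, u ∈ Q y then
      (Q hu.choose).getD ((Q hu.choose).idxOf u - 1) u
    else u with hgdef
  have hgspec : ∀ u, u ∉ X → (hu : ∃ y ∈ Y, u ∈ Q y) →
      ∃ y, y ∈ Y ∧ u ∈ Q y ∧ g u ∈ Q y ∧ E (g u) u ∧
        (Q y).idxOf (g u) + 1 = (Q y).idxOf u ∧ g u ∉ Y := by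
    intro u huX hu
    have hspec := hu.choose_spec
    set y := hu.choose with hydef
    obtain ⟨hy, huQ⟩ := hspec
    have hgu : g u = (Q y).getD ((Q y).idxOf u - 1) u := by
      simp only [hgdef, dif_pos hu, hydef]
    obtain ⟨hcons, hnd, hch, hlast, _⟩ := hQ y hy
    obtain ⟨x', l', hxl, hx'X, hl'X⟩ := hcons
    have hlt : (Q y).idxOf u < (Q y).length := List.idxOf_lt_length_iff.mpr huQ
    have hpos : 1 ≤ (Q y).idxOf u := by
      rcases Nat.eq_zero_or_pos ((Q y).idxOf u) with h0 | h0
      · exfalso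
        have hune : x' ≠ u := fun he => huX (he ▸ hx'X)
        rw [hxl, List.idxOf_cons_ne _ hune] at h0
        simp at h0
      · exact h0
    have hlt1 : (Q y).idxOf u - 1 < (Q y).length := by omega
    have hmemg : g u ∈ Q y := by
      rw [hgu]
      exact getD_mem hlt1 u
    have hedge : E (g u) u := by
      have hc := chain'_getD hch (show (Q y).idxOf u - 1 + 1 < (Q y).length by omega) u u
      rw [show (Q y).idxOf u - 1 + 1 = (Q y).idxOf u from by omega,
        getD_indexOf huQ u] at hc
      rw [hgu]
      exact hc
    have hidxg : (Q y).idxOf (g u) = (Q y).idxOf u - 1 := by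
      rw [hgu]
      exact indexOf_getD hnd hlt1 u
    have hgnY : g u ∉ Y := by
      intro hgYmem
      have hmm : g u ∈ Q (g u) := hQy _ hgYmem
      have hyeq : y = g u := huniq (g u) y (g u) hy hgYmem hmemg hmm
      have hne2 : Q y ≠ [] := by rw [hxl]; simp
      have hyget : (Q y).getLast hne2 = y := by
        rw [List.getLast?_eq_getLast hne2] at hlast
        exact Option.some.inj hlast
      have hkey : (Q y).getD ((Q y).length - 1) u = g u :=
        ((getLast_getD hne2 u).trans hyget).trans hyeq
      have h3 : (Q y).idxOf (g u) = (Q y).length - 1 := by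
        rw [← hkey]
        exact indexOf_getD hnd (by have := List.length_pos_iff.mpr hne2; omega) u
      omega
    exact ⟨y, hy, huQ, hmemg, hedge, by omega, hgnY⟩
  refine ⟨g, ?_, ?_⟩
  · intro u huX
    by_cases hu : ∃ y ∈ Y, u ∈ Q y
    · obtain ⟨y, hy, huQ, hmg, hedge, hidx, hgY⟩ := hgspec u huX hu
      exact ⟨Or.inr hedge, hgY⟩
    · have hgu : g u = u := by simp only [hgdef, dif_neg hu]
      refine ⟨Or.inl hgu, ?_⟩
      rw [hgu]
      intro huY
      exact hu ⟨u, huY, hQy u huY⟩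
  · intro u huS v hvS hguv
    simp only [Set.mem_setOf_eq] at huS hvS
    by_cases hu : ∃ y ∈ Y, u ∈ Q y <;> by_cases hv : ∃ y ∈ Y, v ∈ Q y
    · obtain ⟨y, hy, huQ, hmgu, _, hidxu, _⟩ := hgspec u huS hu
      obtain ⟨z, hz, hvQ, hmgv, _, hidxv, _⟩ := hgspec v hvS hv
      have hyz : y = z := huniq (g u) y z hy hz hmgu (hguv ▸ hmgv)
      subst hyz
      have hieq : (Q y).idxOf u = (Q y).idxOf v := by
        rw [← hidxu, ← hidxv, hguv]
      have h1 : (Q y).getD ((Q y).idxOf u) u = u := getD_indexOf huQ u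
      have h2 : (Q y).getD ((Q y).idxOf v) u = v := getD_indexOf hvQ u
      rw [← h1, ← h2, hieq]
    · obtain ⟨y, hy, huQ, hmgu, _, _, _⟩ := hgspec u huS hu
      have hgv : g v = v := by simp only [hgdef, dif_neg hv]
      exact absurd ⟨y, hy, by rw [← hgv, ← hguv]; exact hmgu⟩ hv
    · obtain ⟨y, hy, hvQ, hmgv, _, _, _⟩ := hgspec v hvS hv
      have hgu : g u = u := by simp only [hgdef, dif_neg hu]
      exact absurd ⟨y, hy, by rw [← hgu, hguv]; exact hmgv⟩ hu
    · have hgu : g u = u := by simp only [hgdef, dif_neg hu]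
      have hgv : g v = v := by simp only [hgdef, dif_neg hv]
      rw [← hgu, ← hgv, hguv]

end GammoidAux2
section GammoidExchange

variable {V : Type*} [DecidableEq V] [Fintype V]

private lemma match_exchange {E : V → V → Prop} {X : Finset V} {S T : Finset V}
    (hS : MatchIndep E X S) (hT : MatchIndep E X T) (hcard : S.card < T.card) :
    ∃ t ∈ T, t ∉ S ∧ MatchIndep E X (insert t S) := by
  classical
  by_contra hc
  push_neg at hc
  obtain ⟨g, hg, hginj⟩ := hS
  obtain ⟨h, hh, hhinj⟩ := hT
  haveI : Nonempty V := by
    obtain ⟨t, ht⟩ := Finset.card_pos.mp (show 0 < T.card by omega)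
    exact ⟨t⟩
  set A : Set V := g '' {u : V | u ∉ X} with hA
  have hAnS : ∀ a ∈ A, a ∉ S := by rintro a ⟨u, hu, rfl⟩; exact (hg u hu).2
  have hhnT : ∀ u, u ∉ X → h u ∉ T := fun u hu => (hh u hu).2
  have hTA : ∀ t ∈ T, t ∉ S → t ∈ A := by
    intro t ht hts
    by_contra htA
    refine hc t ht hts ⟨g, fun u hu => ⟨(hg u hu).1, ?_⟩, hginj⟩
    rw [Finset.mem_insert]
    push_neg
    exact ⟨fun he => htA ⟨u, hu, he⟩, (hg u hu).2⟩
  set inv : V → V := fun b => Function.invFunOn g {u : V | u ∉ X} b with hinv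
  have hinvX : ∀ b ∈ A, inv b ∉ X := by
    rintro b ⟨u, hu, rfl⟩
    exact Function.invFunOn_mem ⟨u, hu, rfl⟩
  have hinvg : ∀ b ∈ A, g (inv b) = b := by
    rintro b ⟨u, hu, rfl⟩
    exact Function.invFunOn_eq ⟨u, hu, rfl⟩
  set σ : V → V := fun u => if h u ∈ A then inv (h u) else u with hσ
  set seq : V → ℕ → V := fun t k => σ^[k] (inv t) with hseqdef
  have hseq0 : ∀ t, seq t 0 = inv t := fun t => rfl
  have hseqS : ∀ t k, seq t (k + 1) = σ (seq t k) := by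
    intro t k
    simp only [hseqdef, Function.iterate_succ_apply']
  have hnX : ∀ t ∈ A, ∀ k, seq t k ∉ X := by
    intro t ht k
    induction k with
    | zero => rw [hseq0]; exact hinvX t ht
    | succ k ih =>
      rw [hseqS]
      by_cases hA' : h (seq t k) ∈ A
      · rw [hσ]; simp only [if_pos hA']; exact hinvX _ hA'
      · rw [hσ]; simp only [if_neg hA']; exact ih
  have hg0 : ∀ t ∈ A, g (seq t 0) = t := fun t ht => hinvg t ht
  have hgs : ∀ t k, h (seq t k) ∈ A → g (seq t (k + 1)) = h (seq t k) := by
    intro t k hk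
    rw [hseqS, hσ]
    simp only [if_pos hk]
    exact hinvg _ hk
  have hstep2 : ∀ t k, h (seq t k) ∈ A → ∀ t' k', h (seq t' k') ∈ A →
      t ∈ A → t' ∈ A → seq t (k + 1) = seq t' (k' + 1) → seq t k = seq t' k' := by
    intro t k hk t' k' hk' htA ht'A he
    have h1 := hgs t k hk
    have h2 := hgs t' k' hk'
    rw [he, h2] at h1
    exact hhinj (hnX t htA k) (hnX t' ht'A k') h1.symm
  have hpeel2 : ∀ (t t' : V), t ∈ A → t' ∈ A → ∀ i, (∀ k < i, h (seq t k) ∈ A) →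
      ∀ j, (∀ k < j, h (seq t' k) ∈ A) → i ≤ j → seq t i = seq t' j →
      seq t 0 = seq t' (j - i) := by
    intro t t' htA ht'A i
    induction i with
    | zero => intro _ j _ _ he; simpa using he
    | succ i ih =>
      intro hAi j hAj hij he
      obtain ⟨j', rfl⟩ : ∃ j', j = j' + 1 := ⟨j - 1, by omega⟩
      have h1 := hstep2 t i (hAi i (by omega)) t' j' (hAj j' (by omega)) htA ht'A he
      have h2 := ih (fun k hk => hAi k (by omega)) j' (fun k hk => hAj k (by omega))
        (by omega) h1
      simpa [Nat.succ_sub_succ] using h2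
  have hterm : ∀ t, t ∈ T → t ∉ S → ∃ k, h (seq t k) ∉ A := by
    intro t ht hts
    have htA := hTA t ht hts
    by_contra hall
    push_neg at hall
    have hfin : ∀ i j, i < j → seq t i = seq t j → False := by
      intro i j hij heq'
      have h0 := hpeel2 t t htA htA i (fun k _ => hall k) j (fun k _ => hall k)
        (le_of_lt hij) heq'
      obtain ⟨d, hd⟩ : ∃ d, j - i = d + 1 := ⟨j - i - 1, by omega⟩
      rw [hd] at h0
      have h1 := hgs t d (hall d)
      rw [← h0, hg0 t htA] at h1
      exact hhnT _ (hnX t htA d) (h1 ▸ ht)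
    obtain ⟨i, hi, j, hj, hne, heq⟩ :=
      Finset.exists_ne_map_eq_of_card_lt_of_maps_to
        (s := Finset.range (Fintype.card V + 1)) (t := Finset.univ)
        (by simp) (fun a _ => Finset.mem_univ (seq t a))
    rcases lt_or_gt_of_ne hne with hlt | hlt
    · exact hfin i j hlt heq
    · exact hfin j i hlt heq.symm
  set ρ : V → V := fun t => if htf : t ∈ T ∧ t ∉ S then
      h (seq t (Nat.find (hterm t htf.1 htf.2))) else t with hρdef
  have hρ : ∀ t (ht : t ∈ T) (hts : t ∉ S),
      ρ t = h (seq t (Nat.find (hterm t ht hts))) := by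
    intro t ht hts
    simp only [hρdef, dif_pos (show t ∈ T ∧ t ∉ S from ⟨ht, hts⟩)]
  have hρnT : ∀ t (ht : t ∈ T) (hts : t ∉ S), ρ t ∉ T := by
    intro t ht hts
    rw [hρ t ht hts]
    exact hhnT _ (hnX t (hTA t ht hts) _)
  have hρS : ∀ t (ht : t ∈ T) (hts : t ∉ S), ρ t ∈ S := by
    intro t ht hts
    by_contra hrS
    have htA := hTA t ht hts
    have hKA : h (seq t (Nat.find (hterm t ht hts))) ∉ A := Nat.find_spec (hterm t ht hts)
    have hKmin : ∀ k, k < Nat.find (hterm t ht hts) → h (seq t k) ∈ A :=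
      fun k hk => not_not.mp (Nat.find_min (hterm t ht hts) hk)
    refine hc t ht hts
      ⟨fun u => if ∃ k, k ≤ Nat.find (hterm t ht hts) ∧ seq t k = u then h u else g u,
        ?_, ?_⟩
    · intro u hu
      by_cases hC : ∃ k, k ≤ Nat.find (hterm t ht hts) ∧ seq t k = u
      · simp only [if_pos hC]
        refine ⟨(hh u hu).1, ?_⟩
        rw [Finset.mem_insert]
        push_neg
        constructor
        · intro he
          exact hhnT u hu (he ▸ ht)
        · obtain ⟨k, hk, rfl⟩ := hC
          rcases eq_or_lt_of_le hk with rfl | hlt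
          · intro hmem
            exact hrS (by rwa [hρ t ht hts])
          · exact hAnS _ (hKmin k hlt)
      · simp only [if_neg hC]
        refine ⟨(hg u hu).1, ?_⟩
        rw [Finset.mem_insert]
        push_neg
        refine ⟨?_, (hg u hu).2⟩
        intro he
        have h0 : g (seq t 0) = t := hg0 t htA
        have hus : u = seq t 0 := hginj hu (hnX t htA 0) (by rw [he, h0])
        exact hC ⟨0, by omega, hus.symm⟩
    · intro u hu v hv he
      simp only [Set.mem_setOf_eq] at hu hv
      by_cases hCu : ∃ k, k ≤ Nat.find (hterm t ht hts) ∧ seq t k = u <;>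
        by_cases hCv : ∃ k, k ≤ Nat.find (hterm t ht hts) ∧ seq t k = v
      · simp only [if_pos hCu, if_pos hCv] at he
        exact hhinj hu hv he
      · simp only [if_pos hCu, if_neg hCv] at he
        obtain ⟨k, hk, rfl⟩ := hCu
        exfalso
        rcases eq_or_lt_of_le hk with rfl | hlt
        · exact hKA ⟨v, hv, he.symm⟩
        · have h1 := hgs t k (hKmin k hlt)
          have hvs : v = seq t (k + 1) := hginj hv (hnX t htA (k + 1)) (he.symm.trans h1.symm)
          exact hCv ⟨k + 1, by omega, hvs.symm⟩
      · simp only [if_neg hCu, if_pos hCv] at he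
        obtain ⟨k, hk, rfl⟩ := hCv
        exfalso
        rcases eq_or_lt_of_le hk with rfl | hlt
        · exact hKA ⟨u, hu, he⟩
        · have h1 := hgs t k (hKmin k hlt)
          have hus : u = seq t (k + 1) := hginj hu (hnX t htA (k + 1)) (he.trans h1.symm)
          exact hCu ⟨k + 1, by omega, hus.symm⟩
      · simp only [if_neg hCu, if_neg hCv] at he
        exact hginj hu hv he
  have hend : ∀ a b (haT : a ∈ T) (has : a ∉ S) (hbT : b ∈ T) (hbs : b ∉ S),
      seq a 0 = seq b (Nat.find (hterm b hbT hbs) - Nat.find (hterm a haT has)) →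
      Nat.find (hterm a haT has) ≤ Nat.find (hterm b hbT hbs) → a = b := by
    intro a b haT has hbT hbs h0 hle
    rcases Nat.eq_zero_or_pos (Nat.find (hterm b hbT hbs) - Nat.find (hterm a haT has))
      with hz | hz
    · rw [hz] at h0
      have h1 := congrArg g h0
      rwa [hg0 a (hTA a haT has), hg0 b (hTA b hbT hbs)] at h1
    · exfalso
      obtain ⟨d, hd⟩ : ∃ d, Nat.find (hterm b hbT hbs) - Nat.find (hterm a haT has) = d + 1 :=
        ⟨Nat.find (hterm b hbT hbs) - Nat.find (hterm a haT has) - 1, by omega⟩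
      rw [hd] at h0
      have hdA : h (seq b d) ∈ A :=
        not_not.mp (Nat.find_min (hterm b hbT hbs) (by omega))
      have h1 := hgs b d hdA
      rw [← h0, hg0 a (hTA a haT has)] at h1
      exact hhnT _ (hnX b (hTA b hbT hbs) d) (h1 ▸ haT)
  have hinj : ∀ t (ht : t ∈ T) (hts : t ∉ S) t' (ht' : t' ∈ T) (hts' : t' ∉ S),
      ρ t = ρ t' → t = t' := by
    intro t ht hts t' ht' hts' he
    have htA := hTA t ht hts
    have ht'A := hTA t' ht' hts'
    rw [hρ t ht hts, hρ t' ht' hts'] at he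
    have hseqe : seq t (Nat.find (hterm t ht hts)) = seq t' (Nat.find (hterm t' ht' hts')) :=
      hhinj (hnX t htA _) (hnX t' ht'A _) he
    have hAmin : ∀ (a : V) (haT : a ∈ T) (has : a ∉ S), ∀ k < Nat.find (hterm a haT has),
        h (seq a k) ∈ A := fun a haT has k hk => not_not.mp (Nat.find_min (hterm a haT has) hk)
    rcases le_total (Nat.find (hterm t ht hts)) (Nat.find (hterm t' ht' hts')) with hle | hle
    · have h0 := hpeel2 t t' htA ht'A _ (hAmin t ht hts) _ (hAmin t' ht' hts') hle hseqe
      exact hend t t' ht hts ht' hts' h0 hle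
    · have h0 := hpeel2 t' t ht'A htA _ (hAmin t' ht' hts') _ (hAmin t ht hts) hle hseqe.symm
      exact (hend t' t ht' hts' ht hts h0 hle).symm
  have hmaps : ∀ a ∈ T \ S, ρ a ∈ S \ T := by
    intro a ha
    rw [Finset.mem_sdiff] at ha ⊢
    exact ⟨hρS a ha.1 ha.2, hρnT a ha.1 ha.2⟩
  have hcardle : (T \ S).card ≤ (S \ T).card := by
    refine Finset.card_le_card_of_injOn ρ hmaps ?_
    intro a ha b hb he
    rw [Finset.mem_coe, Finset.mem_sdiff] at ha hb
    exact hinj a ha.1 ha.2 b hb.1 hb.2 he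
  have h1 := Finset.card_sdiff_add_card_inter S T
  have h2 := Finset.card_sdiff_add_card_inter T S
  rw [Finset.inter_comm] at h2
  omega

end GammoidExchange

/-- The strict gammoid of a digraph with a set of sources is a matroid. -/
theorem gammoid_is_matroid {V : Type*} [DecidableEq V] [Fintype V]
    (E : V → V → Prop) (X : Finset V) :
    ∃ M : FinMatroid V, M.E = Finset.univ ∧
      ∀ Y : Finset V, M.Indep Y ↔ GammoidIndep E X Y := by
  refine ⟨⟨Finset.univ, fun Y => GammoidIndep E X Y, fun S _ => Finset.subset_univ S,
    ⟨fun _ => [], fun y hy => absurd hy (Finset.notMem_empty y),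
      fun y hy => absurd hy (Finset.notMem_empty y)⟩,
    ?_, ?_⟩, rfl, fun Y => Iff.rfl⟩
  · rintro S T ⟨P, hP, hdisj⟩ hTS
    exact ⟨P, fun y hy => hP y (hTS hy),
      fun y hy z hz hyz => hdisj y (hTS hy) z (hTS hz) hyz⟩
  · intro S T hS hT hcard
    obtain ⟨t, ht, hts, hind⟩ :=
      match_exchange (gammoid_to_match hS) (gammoid_to_match hT) hcard
    exact ⟨t, ht, hts, match_to_gammoid hind⟩
end

section
/- Let S be a common independent set of matroids M₁ and M₂ on ground set U with d_{G(S)}(s,t) ≥ d. Then |S| ≥ (1 − O(1/d))·r, where r is the maximum size of a common independent set. Concretely: if every augmenting path in G(S) has length at least d, then r − |S| ≤ O(r/d). -/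
open Finset

variable {α : Type*} [DecidableEq α]

/-- iterated exchange: extend `insert v I` within `S` up to a full basis. -/
lemma exch_to_full (M : FinMatroid α) :
    ∀ (n : ℕ) (S I : Finset α), S.card ≤ I.card + n → M.Indep S → I ⊆ S →
    ∀ v ∉ S, M.Indep (insert v I) →
      M.Indep (insert v S) ∨ ∃ u ∈ S, u ∉ I ∧ M.Indep (insert v (S.erase u)) := by
  intro n
  induction n with
  | zero =>
    intro S I hcard hS hIS v hv hvI
    have : I = S := Finset.eq_of_subset_of_card_le hIS (by omega)
    subst this
    exact Or.inl hvI
  | succ n ih =>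
    intro S I hcard hS hIS v hv hvI
    by_cases h0 : S.card ≤ I.card
    · have : I = S := Finset.eq_of_subset_of_card_le hIS h0
      subst this
      exact Or.inl hvI
    push_neg at h0
    have hvnI : v ∉ I := fun h => hv (hIS h)
    by_cases h1 : S.card = I.card + 1
    · obtain ⟨u, hu⟩ : (S \ I).Nonempty := by
        rw [← Finset.card_pos, Finset.card_sdiff_of_subset hIS]; omega
      have huS : u ∈ S := (Finset.mem_sdiff.mp hu).1
      have huI : u ∉ I := (Finset.mem_sdiff.mp hu).2
      have hIe : I = S.erase u := by
        apply Finset.eq_of_subset_of_card_le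
        · intro x hx
          exact Finset.mem_erase.mpr ⟨fun he => huI (he ▸ hx), hIS hx⟩
        · rw [Finset.card_erase_of_mem huS]; omega
      exact Or.inr ⟨u, huS, huI, by rwa [← hIe]⟩
    · have hlt : (insert v I).card < S.card := by
        rw [Finset.card_insert_of_notMem hvnI]; omega
      obtain ⟨x, hxS, hxvI, hxind⟩ := M.indep_exchange hvI hS hlt
      have hxI : x ∉ I := fun h => hxvI (Finset.mem_insert_of_mem h)
      have hxv : x ≠ v := fun h => hxvI (h ▸ Finset.mem_insert_self _ _)
      have hind' : M.Indep (insert v (insert x I)) := by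
        rwa [Finset.insert_comm]
      have hsub : insert x I ⊆ S := Finset.insert_subset hxS hIS
      have hcard' : S.card ≤ (insert x I).card + n := by
        rw [Finset.card_insert_of_notMem hxI]; omega
      rcases ih S (insert x I) hcard' hS hsub v hv hind' with h | ⟨u, huS, huI, hu⟩
      · exact Or.inl h
      · exact Or.inr ⟨u, huS, fun h => huI (Finset.mem_insert_of_mem h), hu⟩

lemma exch_full (M : FinMatroid α) {S I : Finset α} {v : α}
    (hS : M.Indep S) (hIS : I ⊆ S) (hv : v ∉ S) (hvI : M.Indep (insert v I)) :
    M.Indep (insert v S) ∨ ∃ u ∈ S, u ∉ I ∧ M.Indep (insert v (S.erase u)) :=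
  exch_to_full M S.card S I (Nat.le_add_left _ _) hS hIS v hv hvI

lemma rank_bound (M : FinMatroid α) {J I : Finset α}
    (hJ : M.Indep J) (hI : M.Indep I)
    (h : ∀ x ∈ J, x ∉ I → ¬ M.Indep (insert x I)) : J.card ≤ I.card := by
  by_contra hlt
  push_neg at hlt
  obtain ⟨x, hxJ, hxI, hx⟩ := M.indep_exchange hI hJ hlt
  exact h x hxJ hxI hx

/-- A nodup walk in the exchange graph starting at the "source side", with
vertices confined to `V`. -/
def NP (M1 M2 : FinMatroid α) (S V : Finset α) (p : List α) : Prop :=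
  p ≠ [] ∧ p.Nodup ∧ (∀ a ∈ p, a ∈ V) ∧
  (∀ a ∈ p.head?, a ∉ S ∧ M1.Indep (insert a S)) ∧
  p.Chain' (ExchangeEdge M1 M2 S)

/-- `v` is reachable by such a walk with at most `n` vertices. -/
def Rch (M1 M2 : FinMatroid α) (S V : Finset α) (n : ℕ) (v : α) : Prop :=
  ∃ p : List α, NP M1 M2 S V p ∧ v ∈ p.getLast? ∧ p.length ≤ n

variable {M1 M2 : FinMatroid α} {S V : Finset α}

lemma rch_mono {n m : ℕ} {v : α} (h : Rch M1 M2 S V n v) (hnm : n ≤ m) :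
    Rch M1 M2 S V m v := by
  obtain ⟨p, hp, hl, hlen⟩ := h
  exact ⟨p, hp, hl, hlen.trans hnm⟩

lemma rch_base {v : α} (hv : v ∈ V) (h1 : v ∉ S) (h2 : M1.Indep (insert v S)) :
    Rch M1 M2 S V 1 v := by
  refine ⟨[v], ⟨by simp, by simp, by simpa using hv, ?_, List.isChain_singleton v⟩, by simp, by simp⟩
  intro a ha
  simp only [List.head?_cons, Option.mem_some_iff] at ha
  subst ha
  exact ⟨h1, h2⟩

lemma rch_step {n : ℕ} {u v : α} (h : Rch M1 M2 S V n u)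
    (he : ExchangeEdge M1 M2 S u v) (hv : v ∈ V) : Rch M1 M2 S V (n+1) v := by
  obtain ⟨p, ⟨hne, hnd, hmem, hhead, hch⟩, hlast, hlen⟩ := h
  by_cases hvp : v ∈ p
  · obtain ⟨l₁, l₂, rfl⟩ := List.append_of_mem hvp
    have hre : l₁ ++ v :: l₂ = (l₁ ++ [v]) ++ l₂ := by simp
    refine ⟨l₁ ++ [v], ⟨by simp, ?_, ?_, ?_, ?_⟩, ?_, ?_⟩
    · exact hnd.sublist ((List.prefix_append (l₁ ++ [v]) l₂).sublist.trans (by rw [hre]))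
    · intro a ha
      exact hmem a (by rw [hre]; exact (List.mem_append.mpr (Or.inl ha)))
    · intro a ha
      apply hhead
      cases l₁ with
      | nil => simpa using ha
      | cons b t => simpa using ha
    · rw [hre] at hch
      exact (List.isChain_append.mp hch).1
    · simp
    · have : (l₁ ++ [v]).length ≤ (l₁ ++ v :: l₂).length := by simp
      omega
  · refine ⟨p ++ [v], ⟨by simp, ?_, ?_, ?_, ?_⟩, ?_, ?_⟩
    · rw [List.nodup_append]
      exact ⟨hnd, by simp, by intro a ha b hb; simp at hb; subst hb; exact fun h => hvp (h ▸ ha)⟩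
    · intro a ha
      rcases List.mem_append.mp ha with h | h
      · exact hmem a h
      · simp at h; subst h; exact hv
    · intro a ha
      apply hhead
      cases p with
      | nil => exact absurd rfl hne
      | cons b t => simpa using ha
    · refine List.isChain_append.mpr ⟨hch, by simp, ?_⟩
      intro x hx y hy
      simp only [List.head?_cons, Option.mem_some_iff] at hy
      have : u = x := Option.mem_unique hlast hx
      subst this; subst hy
      exact he
    · simp
    · simp; omega

lemma rch_aug {n : ℕ} {v : α} (h : Rch M1 M2 S V n v)
    (hVE : ∀ a ∈ V, a ∈ M1.E) (h1 : v ∉ S) (h2 : M2.Indep (insert v S)) :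
    ∃ p, IsAugPath M1 M2 S p ∧ p.length ≤ n := by
  obtain ⟨p, ⟨hne, hnd, hmem, hhead, hch⟩, hlast, hlen⟩ := h
  have hgl : p.getLast hne = v := by
    have := List.getLast?_eq_getLast hne
    rw [this] at hlast
    exact Option.mem_some_iff.mp hlast
  have hhd := hhead (p.head hne) (by rw [List.head?_eq_head hne]; rfl)
  exact ⟨p, ⟨hne, hnd, fun a ha => hVE a (hmem a ha), hhd.1, hhd.2,
    hgl ▸ h1, hgl ▸ h2, hch⟩, hlen⟩

/-- Cunningham's approximation lemma: if every augmenting path in `G(S)` has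
length at least `d`, then `r - |S| = O(r / d)` (with constant `2`). -/
theorem cunningham_approximation (M1 M2 : FinMatroid α) (hE : M1.E = M2.E)
    (S : Finset α) (hS1 : M1.Indep S) (hS2 : M2.Indep S)
    (d : ℕ) (hd : ∀ p : List α, IsAugPath M1 M2 S p → d ≤ p.length + 1)
    (T : Finset α) (hT1 : M1.Indep T) (hT2 : M2.Indep T)
    (hTmax : ∀ T' : Finset α, M1.Indep T' → M2.Indep T' → T'.card ≤ T.card) :
    d * (T.card - S.card) ≤ 2 * T.card := by
  classical
  by_cases hTS : T.card ≤ S.card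
  · simp [Nat.sub_eq_zero_of_le hTS]
  push_neg at hTS
  rcases Nat.eq_zero_or_pos d with rfl | hd0
  · simp
  set V : Finset α := S ∪ T with hV
  have hVE : ∀ a ∈ V, a ∈ M1.E := by
    intro a ha
    rcases Finset.mem_union.mp ha with h | h
    exacts [M1.indep_subset_ground hS1 h, M1.indep_subset_ground hT1 h]
  set R : ℕ → α → Prop := Rch M1 M2 S V with hR
  have hRmono : ∀ {a b : ℕ} {x : α}, R a x → a ≤ b → R b x := fun h hab => rch_mono h hab
  set Del : Finset α → ℕ → Finset α :=
    fun U m => U.filter (fun x => R (m+1) x ∧ ¬ R m x) with hDel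
  -- the per-layer cut bound
  have percut : ∀ m : ℕ, m + 1 < d →
      T.card ≤ S.card + (Del S m).card + (Del T m).card := by
    intro m hm
    have bound1 : (T.filter (fun x => R m x)).card ≤
        (S.filter (fun x => R (m+1) x)).card := by
      apply rank_bound M2 (M2.indep_mono hT2 (Finset.filter_subset _ _))
        (M2.indep_mono hS2 (Finset.filter_subset _ _))
      intro x hx hxI hind
      obtain ⟨hxT, hxR⟩ := Finset.mem_filter.mp hx
      have hxS : x ∉ S := by
        intro hxS
        exact hxI (Finset.mem_filter.mpr ⟨hxS, hRmono hxR (Nat.le_succ m)⟩)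
      rcases exch_full M2 hS2 (Finset.filter_subset _ _) hxS hind with ha | ⟨u, huS, huI, hu⟩
      · obtain ⟨p, hp, hlen⟩ := rch_aug hxR hVE hxS ha
        have := hd p hp
        omega
      · have he : ExchangeEdge M1 M2 S x u := Or.inr ⟨hxS, huS, hu⟩
        have hru : R (m+1) u := rch_step hxR he (Finset.mem_union_left _ huS)
        exact huI (Finset.mem_filter.mpr ⟨huS, hru⟩)
    have bound2 : (T.filter (fun x => ¬ R (m+1) x)).card ≤
        (S.filter (fun x => ¬ R m x)).card := by
      apply rank_bound M1 (M1.indep_mono hT1 (Finset.filter_subset _ _))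
        (M1.indep_mono hS1 (Finset.filter_subset _ _))
      intro x hx hxI hind
      obtain ⟨hxT, hxR⟩ := Finset.mem_filter.mp hx
      have hxS : x ∉ S := by
        intro hxS
        by_cases hrm : R m x
        · exact hxR (hRmono hrm (Nat.le_succ m))
        · exact hxI (Finset.mem_filter.mpr ⟨hxS, hrm⟩)
      rcases exch_full M1 hS1 (Finset.filter_subset _ _) hxS hind with ha | ⟨u, huS, huI, hu⟩
      · exact hxR (hRmono (rch_base (Finset.mem_union_right _ hxT) hxS ha) (by omega))
      · have hru : R m u := by
          by_contra hrm
          exact huI (Finset.mem_filter.mpr ⟨huS, hrm⟩)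
        have he : ExchangeEdge M1 M2 S u x := Or.inl ⟨huS, hxS, hu⟩
        exact hxR (rch_step hru he (Finset.mem_union_right _ hxT))
    have split1 : ∀ U : Finset α,
        (U.filter (fun x => R (m+1) x)).card ≤
          (U.filter (fun x => R m x)).card + (Del U m).card := by
      intro U
      have hsub : U.filter (fun x => R (m+1) x) ⊆
          U.filter (fun x => R m x) ∪ Del U m := by
        intro x hx
        obtain ⟨hxU, hxR⟩ := Finset.mem_filter.mp hx
        by_cases hrm : R m x
        · exact Finset.mem_union_left _ (Finset.mem_filter.mpr ⟨hxU, hrm⟩)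
        · exact Finset.mem_union_right _ (Finset.mem_filter.mpr ⟨hxU, hxR, hrm⟩)
      exact (Finset.card_le_card hsub).trans (Finset.card_union_le _ _)
    have tsplit : (T.filter (fun x => R (m+1) x)).card +
        (T.filter (fun x => ¬ R (m+1) x)).card = T.card :=
      Finset.card_filter_add_card_filter_not _
    have ssplit : (S.filter (fun x => R m x)).card +
        (S.filter (fun x => ¬ R m x)).card = S.card :=
      Finset.card_filter_add_card_filter_not _
    have t1 := split1 T
    have s1 := split1 S
    omega
  -- layers are pairwise disjoint, so their sizes sum to at most |U|
  have layers : ∀ U : Finset α,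
      ∑ m ∈ Finset.range (d-1), (Del U m).card ≤ U.card := by
    intro U
    have hdisj : ∀ a b : ℕ, a < b → Disjoint (Del U a) (Del U b) := by
      intro a b hab
      rw [Finset.disjoint_left]
      intro x hx hx'
      exact (Finset.mem_filter.mp hx').2.2
        (hRmono (Finset.mem_filter.mp hx).2.1 hab)
    rw [← Finset.card_biUnion]
    · exact Finset.card_le_card (Finset.biUnion_subset.mpr
        (fun m _ => Finset.filter_subset _ _))
    · intro a _ b _ hne
      rcases Nat.lt_or_ge a b with h | h
      · exact hdisj a b h
      · exact (hdisj b a (by omega)).symm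
  have key : (d-1) * T.card ≤ (d-1) * S.card + S.card + T.card := by
    have hsum : ∑ m ∈ Finset.range (d-1), T.card ≤
        ∑ m ∈ Finset.range (d-1), (S.card + (Del S m).card + (Del T m).card) :=
      Finset.sum_le_sum (fun m hm => percut m (by
        have := Finset.mem_range.mp hm; omega))
    rw [Finset.sum_const, Finset.card_range, smul_eq_mul] at hsum
    have hexp : ∑ m ∈ Finset.range (d-1), (S.card + (Del S m).card + (Del T m).card)
        = (d-1) * S.card + (∑ m ∈ Finset.range (d-1), (Del S m).card)
          + (∑ m ∈ Finset.range (d-1), (Del T m).card) := by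
      rw [Finset.sum_add_distrib, Finset.sum_add_distrib, Finset.sum_const,
        Finset.card_range, smul_eq_mul]
    have hS' := layers S
    have hT' := layers T
    omega
  -- final arithmetic
  obtain ⟨Δ, hΔ⟩ : ∃ Δ : ℕ, T.card = S.card + Δ := ⟨T.card - S.card, by omega⟩
  have hsub : T.card - S.card = Δ := by omega
  have hk : d = (d-1) + 1 := by omega
  rw [hsub, hΔ]
  rw [hΔ, Nat.mul_add] at key
  calc d * Δ = (d-1) * Δ + Δ := by nth_rewrite 1 [hk]; ring
    _ ≤ 2 * (S.card + Δ) := by omega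
end
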